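/- arXiv:1010.0743 — 7 statements merged into one kernel-verified Lean document; each statement's English description precedes it below -/
import Mathlib

section
/- Let L be a random variable on a finite set 𝓛, let Z be a random variable on a finite set 𝓩 jointly distributed with L, let (𝓕, F) be a family of two-universal hash functions from 𝓛 to a finite set 𝓜 with F statistically independent of (L, Z). Then for every ρ with 0 < ρ ≤ 1, the conditional mutual information satisfies I(F(L); Z | F) ≤ (1/ρ) · |𝓜|^ρ · E[ P_{L|Z}(L|Z)^ρ ], where the expectation is over the joint distribution of (L, Z). -/
open scoped BigOperators

noncomputable section

/-- A probability mass function on a finite type. -/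
def IsPMF {α : Type} [Fintype α] (p : α → ℝ) : Prop :=
  (∀ a, 0 ≤ p a) ∧ ∑ a, p a = 1

/-- A channel, i.e. a conditional probability mass function. -/
def IsChannel {α β : Type} [Fintype α] [Fintype β] (W : α → β → ℝ) : Prop :=
  ∀ a, IsPMF (W a)

/-- Mutual information (natural base) of a joint pmf on a product of finite types,
with the usual convention that terms with zero probability vanish
(recall `Real.log 0 = 0` in Mathlib). -/
def mutualInfo {α β : Type} [Fintype α] [Fintype β] (p : α × β → ℝ) : ℝ :=
  ∑ a, ∑ b, p (a, b) *
    Real.log (p (a, b) / ((∑ b', p (a, b')) * (∑ a', p (a', b))))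

/-- Shannon entropy (natural base). -/
def entropy {α : Type} [Fintype α] (p : α → ℝ) : ℝ :=
  -∑ a, p a * Real.log (p a)

/-- Conditional entropy H(A|B) (natural base) of a joint pmf on `α × β`. -/
def condEntropy {α β : Type} [Fintype α] [Fintype β] (p : α × β → ℝ) : ℝ :=
  -∑ a, ∑ b, p (a, b) * Real.log (p (a, b) / ∑ a', p (a', b))

/-- Conditional mutual information I(B;C|A) (natural base) of a joint pmf on `α × β × γ`. -/
def condMutualInfo {α β γ : Type} [Fintype α] [Fintype β] [Fintype γ]
    (p : α × β × γ → ℝ) : ℝ :=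
  ∑ a, ∑ b, ∑ c, p (a, b, c) *
    Real.log (p (a, b, c) * (∑ b', ∑ c', p (a, b', c')) /
      ((∑ c', p (a, b, c')) * (∑ b', p (a, b', c))))

/-- `(μ, hash)` is a family of two-universal hash functions from `L` to `M`:
the random choice of the function is given by the pmf `μ` on the index set `ι`,
and for any two distinct inputs the collision probability is at most `1 / |M|`. -/
def TwoUniversal {ι L M : Type} [Fintype ι] [Fintype L] [Fintype M] [DecidableEq M]
    (μ : ι → ℝ) (hash : ι → L → M) : Prop :=
  IsPMF μ ∧ ∀ x₁ x₂ : L, x₁ ≠ x₂ →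
    ∑ i, μ i * (if hash i x₁ = hash i x₂ then (1 : ℝ) else 0) ≤ 1 / Fintype.card M

/- Auxiliary lemmas -/

lemma aux_log_le_rpow {ρ x : ℝ} (hρ : 0 < ρ) (hx : 0 < x) :
    Real.log x ≤ (x ^ ρ - 1) / ρ := by
  rw [le_div_iff₀ hρ]
  have h1 : Real.log x * ρ = Real.log (x ^ ρ) := by
    rw [Real.log_rpow hx]; ring
  rw [h1]
  exact Real.log_le_sub_one_of_pos (Real.rpow_pos_of_pos hx ρ)

lemma aux_one_sub_inv_le_log {x : ℝ} (hx : 0 < x) : 1 - 1 / x ≤ Real.log x := by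
  have h := Real.log_le_sub_one_of_pos (show (0:ℝ) < x⁻¹ by positivity)
  rw [Real.log_inv] at h
  have : (1:ℝ)/x = x⁻¹ := one_div x
  linarith

lemma aux_neg_log_card_le {M : Type} [Fintype M] [Nonempty M] (q : M → ℝ)
    (h0 : ∀ m, 0 ≤ q m) (h1 : ∑ m, q m = 1) :
    -Real.log (Fintype.card M) ≤ ∑ m, q m * Real.log (q m) := by
  have hc : (0:ℝ) < Fintype.card M := by
    exact_mod_cast Fintype.card_pos
  have key : ∀ m, q m - 1 / (Fintype.card M : ℝ)
      ≤ q m * Real.log (q m) + q m * Real.log (Fintype.card M) := by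
    intro m
    rcases (h0 m).eq_or_lt with h | h
    · rw [← h]; simp
    · have hx : (0:ℝ) < q m * Fintype.card M := by positivity
      have := aux_one_sub_inv_le_log hx
      have hlog : Real.log (q m * Fintype.card M)
          = Real.log (q m) + Real.log (Fintype.card M) :=
        Real.log_mul (ne_of_gt h) (ne_of_gt hc)
      rw [hlog] at this
      have h2 : q m * (1 - 1 / (q m * Fintype.card M))
          ≤ q m * (Real.log (q m) + Real.log (Fintype.card M)) :=
        mul_le_mul_of_nonneg_left this (le_of_lt h)
      have h3 : q m * (1 - 1 / (q m * Fintype.card M))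
          = q m - 1 / (Fintype.card M : ℝ) := by
        field_simp
      rw [h3] at h2; linarith [h2]
  have hsum := Finset.sum_le_sum (fun m (_ : m ∈ Finset.univ) => key m)
  have hA : ∑ m, (q m - 1 / (Fintype.card M : ℝ)) = 0 := by
    rw [Finset.sum_sub_distrib, h1, Finset.sum_const, Finset.card_univ, nsmul_eq_mul]
    have : (Fintype.card M : ℝ) ≠ 0 := by
      have : (0:ℝ) < Fintype.card M := by exact_mod_cast Fintype.card_pos
      linarith
    field_simp
    norm_num
  have hB : ∑ m, (q m * Real.log (q m) + q m * Real.log (Fintype.card M))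
      = (∑ m, q m * Real.log (q m)) + Real.log (Fintype.card M) := by
    rw [Finset.sum_add_distrib, ← Finset.sum_mul, h1, one_mul]
  rw [hA, hB] at hsum
  linarith

lemma aux_rpow_add_le {a b ρ : ℝ} (ha : 0 ≤ a) (hb : 0 ≤ b) (h0 : 0 ≤ ρ) (h1 : ρ ≤ 1) :
    (a + b) ^ ρ ≤ a ^ ρ + b ^ ρ := by
  lift a to NNReal using ha
  lift b to NNReal using hb
  have := NNReal.rpow_add_le_add_rpow a b h0 h1
  exact_mod_cast this

lemma aux_jensen_rpow {ι : Type} [Fintype ι] (μ x : ι → ℝ) (hμ0 : ∀ i, 0 ≤ μ i)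
    (hμ1 : ∑ i, μ i = 1) (hx : ∀ i, 0 ≤ x i) {ρ : ℝ} (hρ0 : 0 < ρ) (hρ1 : ρ ≤ 1) :
    ∑ i, μ i * x i ^ ρ ≤ (∑ i, μ i * x i) ^ ρ := by
  have hp : 1 ≤ 1 / ρ := by
    rw [le_div_iff₀ hρ0]; linarith
  have h := Real.arith_mean_le_rpow_mean Finset.univ μ (fun i => x i ^ ρ)
    (fun i _ => hμ0 i) hμ1 (fun i _ => Real.rpow_nonneg (hx i) ρ) hp
  have heq : ∀ i, (x i ^ ρ) ^ (1/ρ) = x i := by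
    intro i
    rw [← Real.rpow_mul (hx i), mul_one_div_cancel (ne_of_gt hρ0), Real.rpow_one]
  simp_rw [heq] at h
  rw [one_div_one_div] at h
  exact h


/-- Marginal on `Z`. -/
def pZf {L Z : Type} [Fintype L] (p : L × Z → ℝ) (z : Z) : ℝ := ∑ l, p (l, z)

/-- Pushforward of the joint pmf under a hash function, as a function of `(m, z)`. -/
def qf {L Z M : Type} [Fintype L] [DecidableEq M] (f : L → M) (p : L × Z → ℝ)
    (m : M) (z : Z) : ℝ := ∑ l, if f l = m then p (l, z) else 0

section helpers

variable {L Z M : Type} [Fintype L] [Fintype Z] [Fintype M] [DecidableEq M]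
  (f : L → M) (p : L × Z → ℝ)

lemma qf_nonneg (hp0 : ∀ a, 0 ≤ p a) (m : M) (z : Z) : 0 ≤ qf f p m z :=
  Finset.sum_nonneg fun l _ => by split; exacts [hp0 _, le_rfl]

lemma pZf_nonneg (hp0 : ∀ a, 0 ≤ p a) (z : Z) : 0 ≤ pZf p z :=
  Finset.sum_nonneg fun l _ => hp0 _

lemma sum_qf (z : Z) : ∑ m, qf f p m z = pZf p z := by
  unfold qf pZf
  rw [Finset.sum_comm]
  apply Finset.sum_congr rfl
  intro l _
  simp

lemma qf_le_pZf (hp0 : ∀ a, 0 ≤ p a) (m : M) (z : Z) : qf f p m z ≤ pZf p z := by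
  rw [← sum_qf f p z]
  exact Finset.single_le_sum (fun m _ => qf_nonneg f p hp0 m z) (Finset.mem_univ m)

lemma qf_pull (z : Z) (X : M → ℝ) :
    ∑ m, qf f p m z * X m = ∑ l, p (l, z) * X (f l) := by
  unfold qf
  simp only [Finset.sum_mul]
  rw [Finset.sum_comm]
  apply Finset.sum_congr rfl
  intro l _
  simp [ite_mul]

lemma sum_pZf (hp1 : ∑ a, p a = 1) : ∑ z, pZf p z = 1 := by
  unfold pZf
  rw [← hp1, Fintype.sum_prod_type]
  exact Finset.sum_comm

lemma sum_sum_qf (hp1 : ∑ a, p a = 1) : ∑ m, ∑ z, qf f p m z = 1 := by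
  rw [Finset.sum_comm]
  calc ∑ z, ∑ m, qf f p m z = ∑ z, pZf p z := by
        apply Finset.sum_congr rfl; intro z _; exact sum_qf f p z
    _ = 1 := sum_pZf p hp1

/-- Per-hash-function bound: `I(f(L);Z) ≤ (|M|^ρ ∑_z ∑_l p(l,z) (q(f l, z)/pZ z)^ρ - 1)/ρ`. -/
lemma per_hash_bound [Nonempty M] (hp0 : ∀ a, 0 ≤ p a) (hp1 : ∑ a, p a = 1)
    {ρ : ℝ} (hρ₀ : 0 < ρ) (hρ₁ : ρ ≤ 1) :
    mutualInfo (fun mz : M × Z => ∑ l, if f l = mz.1 then p (l, mz.2) else 0)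
      ≤ ((Fintype.card M : ℝ) ^ ρ *
          (∑ z, ∑ l, p (l, z) * (qf f p (f l) z / pZf p z) ^ ρ) - 1) / ρ := by
  have hMc : (0:ℝ) < (Fintype.card M : ℝ) := by exact_mod_cast Fintype.card_pos
  set Mc : ℝ := (Fintype.card M : ℝ) with hMcdef
  set qM : M → ℝ := fun m => ∑ z, qf f p m z with hqMdef
  have hqM0 : ∀ m, 0 ≤ qM m := fun m => Finset.sum_nonneg fun z _ => qf_nonneg f p hp0 m z
  have hqM1 : ∑ m, qM m = 1 := sum_sum_qf f p hp1
  have hq_le_qM : ∀ m z, qf f p m z ≤ qM m := fun m z =>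
    Finset.single_le_sum (fun z _ => qf_nonneg f p hp0 m z) (Finset.mem_univ z)
  -- Step 0: identify the mutual information
  have e1 : mutualInfo (fun mz : M × Z => ∑ l, if f l = mz.1 then p (l, mz.2) else 0)
      = ∑ m, ∑ z, qf f p m z * Real.log (qf f p m z / (qM m * (∑ m', qf f p m' z))) := rfl
  -- Step A: I ≤ log Mc + ∑∑ q log(q/pZ)
  have stepA : mutualInfo (fun mz : M × Z => ∑ l, if f l = mz.1 then p (l, mz.2) else 0)
      ≤ Real.log Mc + ∑ m, ∑ z, qf f p m z * Real.log (qf f p m z / pZf p z) := by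
    rw [e1]
    have e2 : ∀ m z, qf f p m z * Real.log (qf f p m z / (qM m * (∑ m', qf f p m' z)))
        = qf f p m z * Real.log (qf f p m z / pZf p z) - qf f p m z * Real.log (qM m) := by
      intro m z
      rcases (qf_nonneg f p hp0 m z).eq_or_lt with h | h
      · rw [← h]; ring
      · have hqM : 0 < qM m := lt_of_lt_of_le h (hq_le_qM m z)
        have hpZpos : 0 < pZf p z := lt_of_lt_of_le h (qf_le_pZf f p hp0 m z)
        rw [sum_qf f p z]
        have hd : qf f p m z / (qM m * pZf p z) = (qf f p m z / pZf p z) / qM m := by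
          rw [div_div, mul_comm]
        rw [hd, Real.log_div (by positivity) (ne_of_gt hqM)]
        ring
    simp_rw [e2, Finset.sum_sub_distrib]
    have e3 : ∑ m, ∑ z, qf f p m z * Real.log (qM m) = ∑ m, qM m * Real.log (qM m) := by
      apply Finset.sum_congr rfl; intro m _
      rw [← Finset.sum_mul]
    rw [e3]
    have := aux_neg_log_card_le qM hqM0 hqM1
    linarith
  -- Step B: log Mc + ∑∑ q log(q/pZ) ≤ (Mc^ρ S - 1)/ρ
  have stepB : Real.log Mc + ∑ m, ∑ z, qf f p m z * Real.log (qf f p m z / pZf p z)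
      ≤ (Mc ^ ρ * (∑ m, ∑ z, qf f p m z * (qf f p m z / pZf p z) ^ ρ) - 1) / ρ := by
    have hpt : ∀ m z, qf f p m z * Real.log Mc + qf f p m z * Real.log (qf f p m z / pZf p z)
        ≤ (Mc ^ ρ * (qf f p m z * (qf f p m z / pZf p z) ^ ρ) - qf f p m z) / ρ := by
      intro m z
      rcases (qf_nonneg f p hp0 m z).eq_or_lt with h | h
      · rw [← h]; simp
      · have hpZpos : 0 < pZf p z := lt_of_lt_of_le h (qf_le_pZf f p hp0 m z)
        have hx : 0 < Mc * (qf f p m z / pZf p z) := by positivity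
        have hlog := aux_log_le_rpow hρ₀ hx
        rw [Real.mul_rpow hMc.le (by positivity),
          Real.log_mul (ne_of_gt hMc) (by positivity)] at hlog
        have h2 := mul_le_mul_of_nonneg_left hlog h.le
        calc qf f p m z * Real.log Mc + qf f p m z * Real.log (qf f p m z / pZf p z)
            = qf f p m z * (Real.log Mc + Real.log (qf f p m z / pZf p z)) := by ring
          _ ≤ qf f p m z * ((Mc ^ ρ * (qf f p m z / pZf p z) ^ ρ - 1) / ρ) := h2
          _ = (Mc ^ ρ * (qf f p m z * (qf f p m z / pZf p z) ^ ρ) - qf f p m z) / ρ := by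
              field_simp
    have hsum : ∑ m, ∑ z, (qf f p m z * Real.log Mc
          + qf f p m z * Real.log (qf f p m z / pZf p z))
        ≤ ∑ m, ∑ z, (Mc ^ ρ * (qf f p m z * (qf f p m z / pZf p z) ^ ρ) - qf f p m z) / ρ :=
      Finset.sum_le_sum fun m _ => Finset.sum_le_sum fun z _ => hpt m z
    have eL : ∑ m, ∑ z, (qf f p m z * Real.log Mc
          + qf f p m z * Real.log (qf f p m z / pZf p z))
        = Real.log Mc + ∑ m, ∑ z, qf f p m z * Real.log (qf f p m z / pZf p z) := by
      simp_rw [Finset.sum_add_distrib]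
      congr 1
      simp_rw [← Finset.sum_mul]
      rw [sum_sum_qf f p hp1, one_mul]
    have eR : ∑ m, ∑ z, (Mc ^ ρ * (qf f p m z * (qf f p m z / pZf p z) ^ ρ) - qf f p m z) / ρ
        = (Mc ^ ρ * (∑ m, ∑ z, qf f p m z * (qf f p m z / pZf p z) ^ ρ) - 1) / ρ := by
      simp_rw [sub_div, Finset.sum_sub_distrib, ← Finset.sum_div, ← Finset.mul_sum]
      rw [sum_sum_qf f p hp1]
    rw [eL, eR] at hsum
    exact hsum
  refine stepA.trans (stepB.trans (le_of_eq ?_))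
  congr 2
  rw [Finset.sum_comm]
  congr 1
  exact Finset.sum_congr rfl fun z _ => qf_pull f p z _

end helpers

/-- privacy amplification bound, Proposition 1 of the paper.
`p` is the joint pmf of `(L, Z)`; the hash choice `F` (pmf `μ` on `ι`) is independent
of `(L, Z)`, so `I(F(L); Z | F) = ∑ i, μ i * I(hash i (L); Z)`, where the joint pmf of
`(hash i (L), Z)` is the pushforward of `p` under `hash i`.  Then for `0 < ρ ≤ 1`,
`I(F(L); Z | F) ≤ (1/ρ) |M|^ρ E[P_{L|Z}(L|Z)^ρ]`. -/
theorem stmt_0 {ι L Z M : Type} [Fintype ι] [Fintype L] [Fintype Z] [Fintype M]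
    [DecidableEq M] [Nonempty M]
    (μ : ι → ℝ) (hash : ι → L → M) (hhash : TwoUniversal μ hash)
    (p : L × Z → ℝ) (hp : IsPMF p)
    (ρ : ℝ) (hρ₀ : 0 < ρ) (hρ₁ : ρ ≤ 1) :
    ∑ i, μ i * mutualInfo (fun mz : M × Z =>
        ∑ l, if hash i l = mz.1 then p (l, mz.2) else 0)
      ≤ (1 / ρ) * (Fintype.card M : ℝ) ^ ρ *
        ∑ l, ∑ z, p (l, z) * (p (l, z) / ∑ l', p (l', z)) ^ ρ := by
  classical
  obtain ⟨⟨hμ0, hμ1⟩, hcoll⟩ := hhash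
  obtain ⟨hp0, hp1⟩ := hp
  have hMc : (0:ℝ) < (Fintype.card M : ℝ) := by exact_mod_cast Fintype.card_pos
  set Mc : ℝ := (Fintype.card M : ℝ) with hMcdef
  -- abbreviations
  set T : ι → ℝ := fun i => ∑ z, ∑ l, p (l, z) * (qf (hash i) p (hash i l) z / pZf p z) ^ ρ
    with hTdef
  set E : ℝ := ∑ l, ∑ z, p (l, z) * (p (l, z) / pZf p z) ^ ρ with hEdef
  have goalE : (∑ l, ∑ z, p (l, z) * (p (l, z) / ∑ l', p (l', z)) ^ ρ) = E := rfl
  rw [goalE]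
  -- Step C: ∑ i, μ i * T i ≤ E + Mc ^ (-ρ)
  have stepC : ∑ i, μ i * T i ≤ E + Mc ^ (-ρ) := by
    have hswap : ∑ i, μ i * T i
        = ∑ z, ∑ l, ∑ i, μ i * (p (l, z) * (qf (hash i) p (hash i l) z / pZf p z) ^ ρ) := by
      simp_rw [hTdef, Finset.mul_sum]
      rw [Finset.sum_comm]
      apply Finset.sum_congr rfl
      intro z _
      rw [Finset.sum_comm]
    rw [hswap]
    have hpt : ∀ z l, ∑ i, μ i * (p (l, z) * (qf (hash i) p (hash i l) z / pZf p z) ^ ρ)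
        ≤ p (l, z) * (p (l, z) / pZf p z) ^ ρ + p (l, z) * Mc ^ (-ρ) := by
      intro z l
      rcases (hp0 (l, z)).eq_or_lt with h | h
      · rw [← h]; simp
      · have hpZpos : 0 < pZf p z := lt_of_lt_of_le h
          (Finset.single_le_sum (f := fun l => p (l, z)) (fun l _ => hp0 _) (Finset.mem_univ l))
        set C : ι → ℝ := fun i =>
          ∑ l' ∈ Finset.univ.erase l, if hash i l' = hash i l then p (l', z) else 0 with hCdef
        have hC0 : ∀ i, 0 ≤ C i := fun i =>
          Finset.sum_nonneg fun l' _ => by split; exacts [hp0 _, le_rfl]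
        have hsplit : ∀ i, qf (hash i) p (hash i l) z = p (l, z) + C i := by
          intro i
          unfold qf
          rw [← Finset.add_sum_erase Finset.univ
            (fun l' => if hash i l' = hash i l then p (l', z) else 0) (Finset.mem_univ l),
            hCdef]
          simp
        have hCsum : ∑ i, μ i * C i ≤ pZf p z / Mc := by
          have h1 : ∑ i, μ i * C i = ∑ l' ∈ Finset.univ.erase l,
              ∑ i, μ i * (if hash i l' = hash i l then p (l', z) else 0) := by
            simp_rw [hCdef, Finset.mul_sum]
            exact Finset.sum_comm
          rw [h1]
          have h2 : ∀ l' ∈ Finset.univ.erase l,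
              ∑ i, μ i * (if hash i l' = hash i l then p (l', z) else 0) ≤ p (l', z) / Mc := by
            intro l' hl'
            have hne : l' ≠ l := Finset.ne_of_mem_erase hl'
            have hcoll' := hcoll l' l hne
            have h3 : ∑ i, μ i * (if hash i l' = hash i l then p (l', z) else 0)
                = p (l', z) * ∑ i, μ i * (if hash i l' = hash i l then (1:ℝ) else 0) := by
              rw [Finset.mul_sum]
              apply Finset.sum_congr rfl
              intro i _
              by_cases hh : hash i l' = hash i l <;> simp [hh, mul_comm]
            rw [h3]
            calc p (l', z) * ∑ i, μ i * (if hash i l' = hash i l then (1:ℝ) else 0)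
                ≤ p (l', z) * (1 / Mc) := mul_le_mul_of_nonneg_left hcoll' (hp0 _)
              _ = p (l', z) / Mc := by ring
          calc ∑ l' ∈ Finset.univ.erase l,
              ∑ i, μ i * (if hash i l' = hash i l then p (l', z) else 0)
              ≤ ∑ l' ∈ Finset.univ.erase l, p (l', z) / Mc := Finset.sum_le_sum h2
            _ ≤ ∑ l', p (l', z) / Mc := Finset.sum_le_sum_of_subset_of_nonneg
                (Finset.erase_subset l Finset.univ)
                (fun l' _ _ => div_nonneg (hp0 _) hMc.le)
            _ = pZf p z / Mc := by rw [← Finset.sum_div]; rfl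
        have hjen : ∑ i, μ i * (C i / pZf p z) ^ ρ ≤ Mc ^ (-ρ) := by
          have hj := aux_jensen_rpow μ (fun i => C i / pZf p z) hμ0 hμ1
            (fun i => div_nonneg (hC0 i) hpZpos.le) hρ₀ hρ₁
          have h2 : ∑ i, μ i * (C i / pZf p z) = (∑ i, μ i * C i) / pZf p z := by
            rw [Finset.sum_div]
            apply Finset.sum_congr rfl
            intro i _
            ring
          rw [h2] at hj
          have h3 : (∑ i, μ i * C i) / pZf p z ≤ 1 / Mc := by
            rw [div_le_div_iff₀ hpZpos hMc]
            calc (∑ i, μ i * C i) * Mc ≤ (pZf p z / Mc) * Mc :=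
                mul_le_mul_of_nonneg_right hCsum hMc.le
              _ = 1 * pZf p z := by field_simp
          have h4 : ((∑ i, μ i * C i) / pZf p z) ^ ρ ≤ (1 / Mc) ^ ρ :=
            Real.rpow_le_rpow (div_nonneg (Finset.sum_nonneg fun i _ =>
              mul_nonneg (hμ0 i) (hC0 i)) hpZpos.le) h3 hρ₀.le
          have h5 : (1 / Mc) ^ ρ = Mc ^ (-ρ) := by
            rw [Real.rpow_neg hMc.le, one_div, Real.inv_rpow hMc.le]
          calc ∑ i, μ i * (C i / pZf p z) ^ ρ ≤ ((∑ i, μ i * C i) / pZf p z) ^ ρ := hj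
            _ ≤ (1 / Mc) ^ ρ := h4
            _ = Mc ^ (-ρ) := h5
        calc ∑ i, μ i * (p (l, z) * (qf (hash i) p (hash i l) z / pZf p z) ^ ρ)
            ≤ ∑ i, μ i * (p (l, z) * ((p (l, z) / pZf p z) ^ ρ + (C i / pZf p z) ^ ρ)) := by
              apply Finset.sum_le_sum
              intro i _
              apply mul_le_mul_of_nonneg_left _ (hμ0 i)
              apply mul_le_mul_of_nonneg_left _ h.le
              rw [hsplit i, add_div]
              exact aux_rpow_add_le (div_nonneg (hp0 _) hpZpos.le)
                (div_nonneg (hC0 i) hpZpos.le) hρ₀.le hρ₁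
          _ = p (l, z) * (p (l, z) / pZf p z) ^ ρ * (∑ i, μ i)
              + p (l, z) * ∑ i, μ i * (C i / pZf p z) ^ ρ := by
              have hx : ∀ i ∈ Finset.univ, μ i * (p (l, z) *
                  ((p (l, z) / pZf p z) ^ ρ + (C i / pZf p z) ^ ρ))
                  = p (l, z) * (p (l, z) / pZf p z) ^ ρ * μ i
                    + p (l, z) * (μ i * (C i / pZf p z) ^ ρ) := fun i _ => by ring
              rw [Finset.sum_congr rfl hx, Finset.sum_add_distrib, ← Finset.mul_sum,
                ← Finset.mul_sum]
          _ ≤ p (l, z) * (p (l, z) / pZf p z) ^ ρ + p (l, z) * Mc ^ (-ρ) := by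
              rw [hμ1, mul_one]
              exact add_le_add (le_refl _) (mul_le_mul_of_nonneg_left hjen h.le)
    calc ∑ z, ∑ l, ∑ i, μ i * (p (l, z) * (qf (hash i) p (hash i l) z / pZf p z) ^ ρ)
        ≤ ∑ z, ∑ l, (p (l, z) * (p (l, z) / pZf p z) ^ ρ + p (l, z) * Mc ^ (-ρ)) :=
          Finset.sum_le_sum fun z _ => Finset.sum_le_sum fun l _ => hpt z l
      _ = E + Mc ^ (-ρ) := by
          simp_rw [Finset.sum_add_distrib]
          congr 1
          · rw [hEdef, Finset.sum_comm]
          · simp_rw [← Finset.sum_mul]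
            have : ∑ z, ∑ l, p (l, z) = 1 := sum_pZf p hp1
            rw [this, one_mul]
  -- assemble
  calc ∑ i, μ i * mutualInfo (fun mz : M × Z =>
        ∑ l, if hash i l = mz.1 then p (l, mz.2) else 0)
      ≤ ∑ i, μ i * ((Mc ^ ρ * T i - 1) / ρ) := by
        apply Finset.sum_le_sum
        intro i _
        exact mul_le_mul_of_nonneg_left
          (per_hash_bound (hash i) p hp0 hp1 hρ₀ hρ₁) (hμ0 i)
    _ = (Mc ^ ρ * (∑ i, μ i * T i) - 1) / ρ := by
        have hpt : ∀ i, μ i * ((Mc ^ ρ * T i - 1) / ρ)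
            = Mc ^ ρ / ρ * (μ i * T i) - 1 / ρ * μ i := by
          intro i
          field_simp
        simp_rw [hpt, Finset.sum_sub_distrib, ← Finset.mul_sum, hμ1]
        ring
    _ ≤ (Mc ^ ρ * (E + Mc ^ (-ρ)) - 1) / ρ := by
        gcongr
        all_goals first | positivity | exact stepC
    _ = 1 / ρ * Mc ^ ρ * E := by
        have hone : Mc ^ ρ * Mc ^ (-ρ) = 1 := by
          rw [← Real.rpow_add hMc]
          simp
        rw [mul_add, hone]
        ring
end
end

section
/- For every finite set 𝓛, finite set 𝓩, channel W from 𝓛 to 𝓩, probability mass function P on 𝓛, and ρ with 0 < ρ < 1, one has exp(ψ(ρ, W, P)) ≤ exp(φ(ρ, W, P)), i.e., Σ_{z} Σ_{ℓ} P(ℓ) W(z|ℓ)^{1+ρ} (Σ_{ℓ'} P(ℓ') W(z|ℓ'))^{−ρ} ≤ Σ_{z} ( Σ_{ℓ} P(ℓ) W(z|ℓ)^{1/(1−ρ)} )^{1−ρ}. -/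
open scoped BigOperators

noncomputable section

/-- Eq. (7) of the paper: `exp(ψ(ρ, W, P)) ≤ exp(φ(ρ, W, P))`, i.e.
`∑ z ∑ v, P v * W v z ^ (1+ρ) * (∑ v', P v' * W v' z) ^ (-ρ)
   ≤ ∑ z, (∑ v, P v * W v z ^ (1/(1-ρ))) ^ (1-ρ)`
for every channel `W`, input pmf `P` and `0 < ρ < 1`
(terms whose inner sum is `0` vanish, since `(0 : ℝ) ^ (-ρ) = 0` for `Real.rpow`). -/
theorem stmt_3 {V Z : Type} [Fintype V] [Fintype Z]
    (W : V → Z → ℝ) (hW : IsChannel W)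
    (P : V → ℝ) (hP : IsPMF P)
    (ρ : ℝ) (hρ₀ : 0 < ρ) (hρ₁ : ρ < 1) :
    ∑ z, ∑ v, P v * W v z ^ (1 + ρ) * (∑ v', P v' * W v' z) ^ (-ρ)
      ≤ ∑ z, (∑ v, P v * W v z ^ (1 / (1 - ρ))) ^ (1 - ρ) := by
  have h1ρ : (0:ℝ) < 1 - ρ := by linarith
  apply Finset.sum_le_sum
  intro z _
  set Q := ∑ v', P v' * W v' z with hQ
  have hQnn : 0 ≤ Q := Finset.sum_nonneg fun v _ =>
    mul_nonneg (hP.1 v) ((hW v).1 z)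
  have hsum_nn : 0 ≤ ∑ v, P v * W v z ^ (1 / (1 - ρ)) :=
    Finset.sum_nonneg fun v _ => mul_nonneg (hP.1 v)
      (Real.rpow_nonneg ((hW v).1 z) _)
  rcases eq_or_lt_of_le hQnn with hQ0 | hQpos
  · have : ∀ v ∈ Finset.univ, P v * W v z ^ (1 + ρ) * Q ^ (-ρ) = 0 := by
      intro v _
      rw [← hQ0, Real.zero_rpow (by linarith), mul_zero]
    rw [Finset.sum_congr rfl this, Finset.sum_const, smul_zero]
    exact Real.rpow_nonneg hsum_nn _
  · have hp : (1:ℝ) ≤ 1 / (1 - ρ) := by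
      rw [le_div_iff₀ h1ρ]; linarith
    have key := Real.inner_le_weight_mul_Lp_of_nonneg (Finset.univ : Finset V) hp
      (fun v => P v * W v z) (fun v => W v z ^ ρ)
      (fun v => mul_nonneg (hP.1 v) ((hW v).1 z))
      (fun v => Real.rpow_nonneg ((hW v).1 z) _)
    simp only [one_div, inv_inv] at key
    have e1 : ∀ v, P v * W v z * W v z ^ ρ = P v * W v z ^ (1 + ρ) := by
      intro v
      rw [Real.rpow_add' ((hW v).1 z) (by linarith), Real.rpow_one, mul_assoc]
    have e2 : ∀ v, P v * W v z * (W v z ^ ρ) ^ ((1 - ρ)⁻¹)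
        = P v * W v z ^ (1 / (1 - ρ)) := by
      intro v
      rw [← Real.rpow_mul ((hW v).1 z), mul_assoc]
      congr 1
      have he : 1 / (1 - ρ) = 1 + ρ * (1 - ρ)⁻¹ := by field_simp; ring
      rw [he, Real.rpow_add' ((hW v).1 z) (by rw [← he]; positivity), Real.rpow_one]
    simp only [e1, e2] at key
    have hQρ : Q ^ ρ * Q ^ (-ρ) = 1 := by
      rw [← Real.rpow_add hQpos, add_neg_cancel, Real.rpow_zero]
    calc ∑ v, P v * W v z ^ (1 + ρ) * Q ^ (-ρ)
        = (∑ v, P v * W v z ^ (1 + ρ)) * Q ^ (-ρ) := by rw [Finset.sum_mul]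
      _ ≤ Q ^ (1 - (1 - ρ)) * (∑ v, P v * W v z ^ (1 / (1 - ρ))) ^ (1 - ρ) * Q ^ (-ρ) := by
          apply mul_le_mul_of_nonneg_right key (Real.rpow_nonneg hQnn _)
      _ = (∑ v, P v * W v z ^ (1 / (1 - ρ))) ^ (1 - ρ) := by
          have : (1 : ℝ) - (1 - ρ) = ρ := by ring
          rw [this, mul_comm (Q ^ ρ), mul_assoc, hQρ, mul_one]
end
end

section
/- Let 𝓑, 𝓔, 𝓢, 𝓥, 𝓩 be finite sets. Let B be uniformly distributed on 𝓑, let E be a random variable on 𝓔 with arbitrary distribution, let (𝓕, F) be a family of two-universal hash functions from 𝓑 to 𝓢, and suppose B, E, F are mutually statistically independent. Let λ : 𝓑 × 𝓔 → 𝓥 be a deterministic map, let W be a channel from 𝓥 to 𝓩, and let Z be a random variable on 𝓩 whose conditional distribution given V = λ(B, E) is W(·|V) and which is conditionally independent of (B, E, F) given V. Then for every ρ with 0 < ρ ≤ 1: I(F(B); Z | F) ≤ Σ_{e∈𝓔} P_E(e) · (|𝓢|/|𝓑|)^ρ · exp( ψ(ρ, W, P_{V|E=e}) ) / ρ, where P_{V|E=e}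 denotes the probability mass function of λ(B, e) when B is uniform on 𝓑. -/
open scoped BigOperators

noncomputable section

section AuxLemmas
open Finset

lemma mul_self_rpow {ρ x : ℝ} (hρ₀ : 0 < ρ) (hx : 0 ≤ x) : x * x ^ ρ = x ^ (1+ρ) := by
  rcases hx.eq_or_lt with h|h
  · rw [← h, Real.zero_rpow (by positivity : (1:ℝ)+ρ ≠ 0), zero_mul]
  · rw [Real.rpow_add h, Real.rpow_one]

lemma rpow_neg_mul_rpow_one_add {ρ x : ℝ} (hρ₀ : 0 < ρ) (hx : 0 ≤ x) :
    x ^ (-ρ) * x ^ (1+ρ) = x := by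
  rcases hx.eq_or_lt with h|h
  · rw [← h, Real.zero_rpow (neg_ne_zero.2 hρ₀.ne'), zero_mul]
  · rw [← Real.rpow_add h]; norm_num

lemma rpow_subadd {ρ x y : ℝ} (hρ₀ : 0 < ρ) (hρ₁ : ρ ≤ 1) (hx : 0 ≤ x) (hy : 0 ≤ y) :
    (x+y) ^ ρ ≤ x ^ ρ + y ^ ρ := by
  have := NNReal.rpow_add_le_add_rpow (⟨x, hx⟩ : NNReal) ⟨y, hy⟩ hρ₀.le hρ₁
  have h2 := NNReal.coe_le_coe.2 this
  push_cast at h2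
  convert h2 using 2 <;> rfl

lemma jensen_rpow {ι : Type*} [Fintype ι] {ρ : ℝ} (hρ₀ : 0 < ρ) (hρ₁ : ρ ≤ 1)
    (w T : ι → ℝ) (hw : ∀ i, 0 ≤ w i) (hw1 : ∑ i, w i = 1) (hT : ∀ i, 0 ≤ T i) :
    ∑ i, w i * T i ^ ρ ≤ (∑ i, w i * T i) ^ ρ := by
  have hp : (1:ℝ) ≤ 1/ρ := by rw [le_div_iff₀ hρ₀]; linarith
  have h := Real.arith_mean_le_rpow_mean univ w (fun i => T i ^ ρ)
    (fun i _ => hw i) hw1 (fun i _ => Real.rpow_nonneg (hT i) ρ) hp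
  have key : ∀ i : ι, (T i ^ ρ) ^ (1/ρ) = T i := fun i => by
    rw [← Real.rpow_mul (hT i), mul_one_div, div_self hρ₀.ne', Real.rpow_one]
  calc ∑ i, w i * T i ^ ρ ≤ (∑ i, w i * (T i ^ ρ) ^ (1/ρ)) ^ (1/(1/ρ)) := h
    _ = (∑ i, w i * T i) ^ ρ := by
        rw [one_div_one_div]
        congr 1
        exact Finset.sum_congr rfl fun i _ => by rw [key i]

lemma tangent_ineq {ρ a c w r : ℝ} (hρ₀ : 0 < ρ) (ha : 0 < a) (hc : 0 < c)
    (hw : 0 ≤ w) (hr : 0 ≤ r) (hwr : r = 0 → w = 0) :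
    (1+ρ) * (a ^ ρ * c ^ (-ρ)) * w ≤ w ^ (1+ρ) * r ^ (-ρ) + ρ * (a ^ (1+ρ) * c ^ (-(1+ρ))) * r := by
  have h1ρ : (0:ℝ) < 1+ρ := by linarith
  rcases hr.eq_or_lt with h|h
  · rw [← h, hwr h.symm]
    simp [Real.zero_rpow (by positivity : (1:ℝ)+ρ ≠ 0)]
  rcases hw.eq_or_lt with h0|h0
  · rw [← h0]
    have : (0:ℝ) ^ (1+ρ) = 0 := Real.zero_rpow (by positivity)
    rw [this]
    have : 0 ≤ ρ * (a ^ (1+ρ) * c ^ (-(1+ρ))) * r := by positivity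
    nlinarith
  -- now w > 0, r > 0
  set θ : ℝ := 1/(1+ρ) with hθdef
  have hθ : 0 < θ := by positivity
  have hθ1 : (1+ρ) * θ = 1 := mul_one_div_cancel h1ρ.ne'
  have hθ' : θ + ρ*θ = 1 := by rw [← hθ1]; ring
  have hA : 0 ≤ w ^ (1+ρ) * r ^ (-ρ) := by positivity
  have hB : 0 ≤ a ^ (1+ρ) * c ^ (-(1+ρ)) * r := by positivity
  have amgm := Real.geom_mean_le_arith_mean2_weighted hθ.le (by positivity : 0 ≤ ρ*θ) hA hB hθ'
  have hg : (w ^ (1+ρ) * r ^ (-ρ)) ^ θ * (a ^ (1+ρ) * c ^ (-(1+ρ)) * r) ^ (ρ*θ)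
      = a ^ ρ * c ^ (-ρ) * w := by
    rw [Real.mul_rpow (by positivity) (by positivity),
        Real.mul_rpow (by positivity) (by positivity),
        Real.mul_rpow (by positivity) (by positivity),
        ← Real.rpow_mul hw, ← Real.rpow_mul hr, ← Real.rpow_mul ha.le, ← Real.rpow_mul hc.le,
        hθ1, Real.rpow_one]
    have e1 : (1+ρ) * (ρ*θ) = ρ := by rw [← mul_assoc, mul_comm (1+ρ) ρ, mul_assoc, hθ1, mul_one]
    have e2 : -(1+ρ) * (ρ*θ) = -ρ := by rw [neg_mul, e1]
    rw [e1, e2]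
    have e3 : r ^ (-ρ*θ) * r ^ (ρ*θ) = 1 := by
      rw [← Real.rpow_add h]
      norm_num
    calc w * r ^ (-ρ*θ) * (a ^ ρ * c ^ (-ρ) * r ^ (ρ*θ))
        = a ^ ρ * c ^ (-ρ) * w * (r ^ (-ρ*θ) * r ^ (ρ*θ)) := by ring
      _ = a ^ ρ * c ^ (-ρ) * w := by rw [e3, mul_one]
  rw [hg] at amgm
  have hmul := mul_le_mul_of_nonneg_left amgm h1ρ.le
  calc (1+ρ) * (a ^ ρ * c ^ (-ρ)) * w = (1+ρ) * (a ^ ρ * c ^ (-ρ) * w) := by ring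
    _ ≤ (1+ρ) * (θ * (w ^ (1+ρ) * r ^ (-ρ)) + ρ*θ * (a ^ (1+ρ) * c ^ (-(1+ρ)) * r)) := hmul
    _ = ((1+ρ)*θ) * (w ^ (1+ρ) * r ^ (-ρ)) + ((1+ρ)*θ) * (ρ * (a ^ (1+ρ) * c ^ (-(1+ρ))) * r) := by ring
    _ = w ^ (1+ρ) * r ^ (-ρ) + ρ * (a ^ (1+ρ) * c ^ (-(1+ρ))) * r := by rw [hθ1]; ring

lemma joint_convexity {E : Type*} [Fintype E] {ρ : ℝ} (hρ₀ : 0 < ρ)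
    (p w r : E → ℝ) (hp : ∀ e, 0 ≤ p e) (hw : ∀ e, 0 ≤ w e) (hr : ∀ e, 0 ≤ r e)
    (hwr : ∀ e, r e = 0 → w e = 0) :
    (∑ e, p e * w e) ^ (1+ρ) * (∑ e, p e * r e) ^ (-ρ)
      ≤ ∑ e, p e * (w e ^ (1+ρ) * r e ^ (-ρ)) := by
  have h1ρ : (0:ℝ) < 1+ρ := by linarith
  have hRHS : 0 ≤ ∑ e, p e * (w e ^ (1+ρ) * r e ^ (-ρ)) :=
    Finset.sum_nonneg fun e _ => mul_nonneg (hp e)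
      (mul_nonneg (Real.rpow_nonneg (hw e) _) (Real.rpow_nonneg (hr e) _))
  set a := ∑ e, p e * w e with hadef
  set c := ∑ e, p e * r e with hcdef
  have hann : 0 ≤ a := Finset.sum_nonneg fun e _ => mul_nonneg (hp e) (hw e)
  have hcnn : 0 ≤ c := Finset.sum_nonneg fun e _ => mul_nonneg (hp e) (hr e)
  rcases hcnn.eq_or_lt with hc|hc
  · rw [← hc, Real.zero_rpow (neg_ne_zero.2 hρ₀.ne'), mul_zero]; exact hRHS
  rcases hann.eq_or_lt with ha|ha
  · rw [← ha, Real.zero_rpow (by positivity : (1:ℝ)+ρ ≠ 0), zero_mul]; exact hRHS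
  -- a, c > 0 : sum the tangent inequalities
  have key : ∀ e, p e * ((1+ρ) * (a ^ ρ * c ^ (-ρ)) * w e)
      ≤ p e * (w e ^ (1+ρ) * r e ^ (-ρ) + ρ * (a ^ (1+ρ) * c ^ (-(1+ρ))) * r e) :=
    fun e => mul_le_mul_of_nonneg_left
      (tangent_ineq hρ₀ ha hc (hw e) (hr e) (hwr e)) (hp e)
  have hsum := Finset.sum_le_sum (fun e (_ : e ∈ univ) => key e)
  have lhs_eq : ∑ e, p e * ((1+ρ) * (a ^ ρ * c ^ (-ρ)) * w e)
      = (1+ρ) * (a ^ ρ * c ^ (-ρ)) * a := by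
    rw [hadef, Finset.mul_sum]; exact Finset.sum_congr rfl fun e _ => by ring
  have rhs_eq : ∑ e, p e * (w e ^ (1+ρ) * r e ^ (-ρ) + ρ * (a ^ (1+ρ) * c ^ (-(1+ρ))) * r e)
      = (∑ e, p e * (w e ^ (1+ρ) * r e ^ (-ρ))) + ρ * (a ^ (1+ρ) * c ^ (-(1+ρ))) * c := by
    have : ∀ e : E, p e * (w e ^ (1+ρ) * r e ^ (-ρ) + ρ * (a ^ (1+ρ) * c ^ (-(1+ρ))) * r e)
        = p e * (w e ^ (1+ρ) * r e ^ (-ρ)) + (ρ * (a ^ (1+ρ) * c ^ (-(1+ρ)))) * (p e * r e) :=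
      fun e => by ring
    rw [Finset.sum_congr rfl fun e _ => this e, Finset.sum_add_distrib, hcdef, ← Finset.mul_sum]
  rw [lhs_eq, rhs_eq] at hsum
  have e1 : (1+ρ) * (a ^ ρ * c ^ (-ρ)) * a = (1+ρ) * (a ^ (1+ρ) * c ^ (-ρ)) := by
    rw [show (1+ρ) * (a ^ ρ * c ^ (-ρ)) * a = (1+ρ) * ((a * a ^ ρ) * c ^ (-ρ)) from by ring,
        mul_self_rpow hρ₀ hann]
  have e2 : ρ * (a ^ (1+ρ) * c ^ (-(1+ρ))) * c = ρ * (a ^ (1+ρ) * c ^ (-ρ)) := by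
    have h2 : c ^ ((1:ℝ) + -(1+ρ)) = c ^ (1:ℝ) * c ^ (-(1+ρ)) := Real.rpow_add hc 1 (-(1+ρ))
    rw [show (1:ℝ) + -(1+ρ) = -ρ from by ring, Real.rpow_one] at h2
    rw [show ρ * (a ^ (1+ρ) * c ^ (-(1+ρ))) * c = ρ * (a ^ (1+ρ) * (c * c ^ (-(1+ρ)))) from by ring,
        ← h2]
  rw [e1, e2] at hsum
  linarith

lemma mi_bound {S Z : Type*} [Fintype S] [Fintype Z] [Nonempty S] {ρ : ℝ} (hρ₀ : 0 < ρ)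
    (p : S → Z → ℝ) (hp : ∀ s z, 0 ≤ p s z) (hsum : ∑ s, ∑ z, p s z = 1) :
    ∑ s, ∑ z, p s z * Real.log (p s z / ((∑ z', p s z') * (∑ s', p s' z)))
      ≤ (1/ρ) * ((Fintype.card S : ℝ) ^ ρ *
          (∑ s, ∑ z, (p s z) ^ (1+ρ) * (∑ s', p s' z) ^ (-ρ)) - 1) := by
  set K : ℝ := (Fintype.card S : ℝ) with hKdef
  have hK : 0 < K := by
    simp only [hKdef]; exact_mod_cast Fintype.card_pos
  set U : ℝ := K⁻¹ with hUdef
  have hU : 0 < U := by positivity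
  set q : S → ℝ := fun s => ∑ z', p s z' with hqdef
  set R : Z → ℝ := fun z => ∑ s', p s' z with hRdef
  have hq : ∀ s, 0 ≤ q s := fun s => Finset.sum_nonneg fun z _ => hp s z
  have hR : ∀ z, 0 ≤ R z := fun z => Finset.sum_nonneg fun s _ => hp s z
  -- termwise bound
  have hterm : ∀ s z, p s z * Real.log (p s z / (q s * R z))
      ≤ (1/ρ) * ((p s z) ^ (1+ρ) * (K ^ ρ * (R z) ^ (-ρ)) - p s z)
        + p s z * (Real.log U - Real.log (q s)) := by
    intro s z
    rcases (hp s z).eq_or_lt with h0|h0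
    · rw [← h0]
      rw [Real.zero_rpow (by positivity : (1:ℝ)+ρ ≠ 0)]
      simp
    have hqpos : 0 < q s := lt_of_lt_of_le h0 (Finset.single_le_sum (fun z' _ => hp s z') (mem_univ z))
    have hRpos : 0 < R z := lt_of_lt_of_le h0 (Finset.single_le_sum (fun s' _ => hp s' z) (mem_univ s))
    set d : ℝ := p s z / (U * R z) with hddef
    have hd : 0 < d := by positivity
    have hlogd : Real.log d ≤ (1/ρ) * (d ^ ρ - 1) := by
      have h1 : Real.log (d ^ ρ) = ρ * Real.log d := Real.log_rpow hd ρ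
      have h2 : Real.log (d ^ ρ) ≤ d ^ ρ - 1 :=
        Real.log_le_sub_one_of_pos (Real.rpow_pos_of_pos hd ρ)
      rw [h1] at h2
      have h3 : (1/ρ) * (ρ * Real.log d) ≤ (1/ρ) * (d ^ ρ - 1) :=
        mul_le_mul_of_nonneg_left h2 (by positivity)
      rwa [show (1/ρ) * (ρ * Real.log d) = Real.log d from by field_simp] at h3
    have hsplit : Real.log (p s z / (q s * R z))
        = Real.log d + (Real.log U - Real.log (q s)) := by
      rw [hddef, Real.log_div h0.ne' (by positivity), Real.log_div h0.ne' (by positivity),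
          Real.log_mul hqpos.ne' hRpos.ne', Real.log_mul hU.ne' hRpos.ne']
      ring
    have hpd : p s z * d ^ ρ = (p s z) ^ (1+ρ) * (K ^ ρ * (R z) ^ (-ρ)) := by
      have hKρ : (0:ℝ) < K ^ ρ := Real.rpow_pos_of_pos hK ρ
      have hRρ : (0:ℝ) < R z ^ ρ := Real.rpow_pos_of_pos hRpos ρ
      rw [hddef, Real.div_rpow (hp s z) (by positivity), Real.mul_rpow hU.le (hR z),
          hUdef, Real.inv_rpow hK.le, Real.rpow_neg (hR z), ← mul_self_rpow hρ₀ (hp s z)]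
      field_simp
    calc p s z * Real.log (p s z / (q s * R z))
        = p s z * Real.log d + p s z * (Real.log U - Real.log (q s)) := by rw [hsplit]; ring
      _ ≤ p s z * ((1/ρ) * (d ^ ρ - 1)) + p s z * (Real.log U - Real.log (q s)) := by
          have := mul_le_mul_of_nonneg_left hlogd (hp s z)
          linarith
      _ = (1/ρ) * (p s z * d ^ ρ - p s z) + p s z * (Real.log U - Real.log (q s)) := by ring
      _ = (1/ρ) * ((p s z) ^ (1+ρ) * (K ^ ρ * (R z) ^ (-ρ)) - p s z)
            + p s z * (Real.log U - Real.log (q s)) := by rw [hpd]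
  have main := Finset.sum_le_sum (fun s (_ : s ∈ univ) =>
    Finset.sum_le_sum (fun z (_ : z ∈ univ) => hterm s z))
  have split : ∑ s, ∑ z, ((1/ρ) * ((p s z) ^ (1+ρ) * (K ^ ρ * (R z) ^ (-ρ)) - p s z)
        + p s z * (Real.log U - Real.log (q s)))
      = (1/ρ) * (K ^ ρ * (∑ s, ∑ z, (p s z) ^ (1+ρ) * (R z) ^ (-ρ)) - 1)
        + ∑ s, q s * (Real.log U - Real.log (q s)) := by
    have hterm_eq : ∀ s : S, ∀ z : Z,
        (1/ρ) * ((p s z) ^ (1+ρ) * (K ^ ρ * (R z) ^ (-ρ)) - p s z)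
          + p s z * (Real.log U - Real.log (q s))
        = (1/ρ) * K ^ ρ * ((p s z) ^ (1+ρ) * (R z) ^ (-ρ)) - (1/ρ) * p s z
          + p s z * (Real.log U - Real.log (q s)) := fun s z => by ring
    simp only [hterm_eq, Finset.sum_add_distrib, Finset.sum_sub_distrib, ← Finset.mul_sum]
    rw [hsum]
    have hqe : ∀ s : S, ∑ z, p s z * (Real.log U - Real.log (q s))
        = q s * (Real.log U - Real.log (q s)) := fun s => by
      rw [← Finset.sum_mul]
    rw [Finset.sum_congr rfl fun s _ => hqe s]
    ring
  have neg : ∑ s, q s * (Real.log U - Real.log (q s)) ≤ 0 := by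
    have per : ∀ s, q s * (Real.log U - Real.log (q s)) ≤ U - q s := by
      intro s
      rcases (hq s).eq_or_lt with h0|h0
      · rw [← h0]; simp [hU.le]
      · have hlog : Real.log U - Real.log (q s) = Real.log (U / q s) :=
          (Real.log_div hU.ne' h0.ne').symm
        have h2 : Real.log (U / q s) ≤ U / q s - 1 :=
          Real.log_le_sub_one_of_pos (by positivity)
        calc q s * (Real.log U - Real.log (q s)) = q s * Real.log (U / q s) := by rw [hlog]
          _ ≤ q s * (U / q s - 1) := mul_le_mul_of_nonneg_left h2 h0.le
          _ = U - q s := by field_simp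
    calc ∑ s, q s * (Real.log U - Real.log (q s)) ≤ ∑ s, (U - q s) :=
        Finset.sum_le_sum (fun s _ => per s)
      _ = K * U - 1 := by
          rw [Finset.sum_sub_distrib, Finset.sum_const, hsum]
          simp [hKdef, nsmul_eq_mul]
      _ = 0 := by rw [hUdef, mul_inv_cancel₀ hK.ne']; ring
  calc ∑ s, ∑ z, p s z * Real.log (p s z / (q s * R z))
      ≤ ∑ s, ∑ z, ((1/ρ) * ((p s z) ^ (1+ρ) * (K ^ ρ * (R z) ^ (-ρ)) - p s z)
          + p s z * (Real.log U - Real.log (q s))) := main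
    _ = (1/ρ) * (K ^ ρ * (∑ s, ∑ z, (p s z) ^ (1+ρ) * (R z) ^ (-ρ)) - 1)
          + ∑ s, q s * (Real.log U - Real.log (q s)) := split
    _ ≤ (1/ρ) * (K ^ ρ * (∑ s, ∑ z, (p s z) ^ (1+ρ) * (R z) ^ (-ρ)) - 1) := by linarith

lemma two_universal_bound {ι B S : Type*} [Fintype ι] [Fintype B] [Fintype S]
    [DecidableEq S] [Nonempty S] {ρ : ℝ} (hρ₀ : 0 < ρ) (hρ₁ : ρ ≤ 1)
    (μ : ι → ℝ) (hash : ι → B → S) (hμ0 : ∀ i, 0 ≤ μ i) (hμ1 : ∑ i, μ i = 1)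
    (hcol : ∀ x₁ x₂ : B, x₁ ≠ x₂ →
      ∑ i, μ i * (if hash i x₁ = hash i x₂ then (1:ℝ) else 0) ≤ 1 / Fintype.card S)
    (α : B → ℝ) (hα : ∀ b, 0 ≤ α b) :
    ∑ i, μ i * ∑ s, (∑ b, if hash i b = s then α b else 0) ^ (1+ρ)
      ≤ ∑ b, (α b) ^ (1+ρ) + (Fintype.card S : ℝ) ^ (-ρ) * (∑ b, α b) ^ (1+ρ) := by
  classical
  set K : ℝ := (Fintype.card S : ℝ) with hKdef
  have hK : 0 < K := by simp only [hKdef]; exact_mod_cast Fintype.card_pos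
  set T : ι → B → ℝ := fun i b => ∑ b' ∈ univ.erase b,
    if hash i b' = hash i b then α b' else 0 with hTdef
  have hT0 : ∀ i b, 0 ≤ T i b := fun i b =>
    Finset.sum_nonneg fun b' _ => by split <;> [exact hα b'; exact le_rfl]
  set Q : ι → S → ℝ := fun i s => ∑ b, if hash i b = s then α b else 0 with hQdef
  have hQ0 : ∀ i s, 0 ≤ Q i s := fun i s =>
    Finset.sum_nonneg fun b _ => by split <;> [exact hα b; exact le_rfl]
  -- Step 1: rewrite the inner sum
  have step1 : ∀ i, ∑ s, Q i s ^ (1+ρ) = ∑ b, α b * Q i (hash i b) ^ ρ := by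
    intro i
    have e1 : ∀ s : S, Q i s ^ (1+ρ) = ∑ b, if hash i b = s then α b * Q i s ^ ρ else 0 := by
      intro s
      rw [← mul_self_rpow hρ₀ (hQ0 i s)]
      nth_rewrite 1 [hQdef]
      rw [Finset.sum_mul]
      exact Finset.sum_congr rfl fun b _ => by split <;> simp
    rw [Finset.sum_congr rfl fun s _ => e1 s, Finset.sum_comm]
    exact Finset.sum_congr rfl fun b _ => by rw [Finset.sum_ite_eq, if_pos (mem_univ _)]
  -- Step 2: decompose Q at hash i b
  have step2 : ∀ i b, Q i (hash i b) = α b + T i b := by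
    intro i b
    show (∑ b', if hash i b' = hash i b then α b' else 0) = α b + T i b
    rw [← Finset.add_sum_erase _ (fun b' => if hash i b' = hash i b then α b' else 0)
      (mem_univ b), if_pos rfl]
  -- Step 3: per-i bound
  have step3 : ∀ i, ∑ s, Q i s ^ (1+ρ) ≤ ∑ b, (α b ^ (1+ρ) + α b * T i b ^ ρ) := by
    intro i
    rw [step1 i]
    refine Finset.sum_le_sum fun b _ => ?_
    rw [step2 i b]
    calc α b * (α b + T i b) ^ ρ ≤ α b * (α b ^ ρ + T i b ^ ρ) :=
          mul_le_mul_of_nonneg_left (rpow_subadd hρ₀ hρ₁ (hα b) (hT0 i b)) (hα b)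
      _ = α b * α b ^ ρ + α b * T i b ^ ρ := by ring
      _ = α b ^ (1+ρ) + α b * T i b ^ ρ := by rw [mul_self_rpow hρ₀ (hα b)]
  -- Sum over i
  have hTbound : ∀ b, ∑ i, μ i * T i b ≤ (∑ b', α b') / K := by
    intro b
    have swap : ∑ i, μ i * T i b
        = ∑ b' ∈ univ.erase b, α b' * ∑ i, μ i * (if hash i b' = hash i b then (1:ℝ) else 0) := by
      calc ∑ i, μ i * T i b
          = ∑ i, ∑ b' ∈ univ.erase b, μ i * (if hash i b' = hash i b then α b' else 0) := by
            refine Finset.sum_congr rfl fun i _ => ?_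
            rw [Finset.mul_sum]
        _ = ∑ b' ∈ univ.erase b, ∑ i, μ i * (if hash i b' = hash i b then α b' else 0) :=
            Finset.sum_comm
        _ = ∑ b' ∈ univ.erase b, α b' * ∑ i, μ i * (if hash i b' = hash i b then (1:ℝ) else 0) := by
            refine Finset.sum_congr rfl fun b' _ => ?_
            rw [Finset.mul_sum]
            refine Finset.sum_congr rfl fun i _ => by split <;> ring
    rw [swap]
    calc ∑ b' ∈ univ.erase b, α b' * ∑ i, μ i * (if hash i b' = hash i b then (1:ℝ) else 0)
        ≤ ∑ b' ∈ univ.erase b, α b' * (1/K) := by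
          refine Finset.sum_le_sum fun b' hb' => ?_
          exact mul_le_mul_of_nonneg_left (hcol b' b (Finset.ne_of_mem_erase hb')) (hα b')
      _ ≤ ∑ b', α b' * (1/K) := by
          refine Finset.sum_le_sum_of_subset_of_nonneg (Finset.subset_univ _) fun b' _ _ => ?_
          exact mul_nonneg (hα b') (by positivity)
      _ = (∑ b', α b') / K := by rw [← Finset.sum_mul]; ring
  have hμT : ∀ b, ∑ i, μ i * T i b ^ ρ ≤ (∑ b', α b') ^ ρ * K ^ (-ρ) := by
    intro b
    have h1 := jensen_rpow hρ₀ hρ₁ μ (fun i => T i b) hμ0 hμ1 (fun i => hT0 i b)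
    have h2 : (∑ i, μ i * T i b) ^ ρ ≤ ((∑ b', α b') / K) ^ ρ :=
      Real.rpow_le_rpow (Finset.sum_nonneg fun i _ => mul_nonneg (hμ0 i) (hT0 i b))
        (hTbound b) hρ₀.le
    have h3 : ((∑ b', α b') / K) ^ ρ = (∑ b', α b') ^ ρ * K ^ (-ρ) := by
      rw [Real.div_rpow (Finset.sum_nonneg fun b' _ => hα b') hK.le, Real.rpow_neg hK.le]
      ring
    calc ∑ i, μ i * T i b ^ ρ ≤ (∑ i, μ i * T i b) ^ ρ := h1
      _ ≤ ((∑ b', α b') / K) ^ ρ := h2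
      _ = (∑ b', α b') ^ ρ * K ^ (-ρ) := h3
  calc ∑ i, μ i * ∑ s, Q i s ^ (1+ρ)
      ≤ ∑ i, μ i * ∑ b, (α b ^ (1+ρ) + α b * T i b ^ ρ) := by
        refine Finset.sum_le_sum fun i _ => mul_le_mul_of_nonneg_left (step3 i) (hμ0 i)
    _ = (∑ i, μ i) * (∑ b, α b ^ (1+ρ)) + ∑ b, α b * ∑ i, μ i * T i b ^ ρ := by
        calc ∑ i, μ i * ∑ b, (α b ^ (1+ρ) + α b * T i b ^ ρ)
            = ∑ i, (μ i * ∑ b, α b ^ (1+ρ) + ∑ b, α b * (μ i * T i b ^ ρ)) := by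
              refine Finset.sum_congr rfl fun i _ => ?_
              rw [Finset.sum_add_distrib, mul_add]
              congr 1
              rw [Finset.mul_sum]
              exact Finset.sum_congr rfl fun b _ => by ring
          _ = (∑ i, μ i) * (∑ b, α b ^ (1+ρ)) + ∑ i, ∑ b, α b * (μ i * T i b ^ ρ) := by
              rw [Finset.sum_add_distrib, Finset.sum_mul]
          _ = (∑ i, μ i) * (∑ b, α b ^ (1+ρ)) + ∑ b, α b * ∑ i, μ i * T i b ^ ρ := by
              rw [Finset.sum_comm]
              congr 1
              refine Finset.sum_congr rfl fun b _ => ?_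
              rw [Finset.mul_sum]
    _ ≤ (∑ b, α b ^ (1+ρ)) + ∑ b, α b * ((∑ b', α b') ^ ρ * K ^ (-ρ)) := by
        rw [hμ1, one_mul]
        refine (add_le_add_iff_left _).2 (Finset.sum_le_sum fun b _ =>
          mul_le_mul_of_nonneg_left (hμT b) (hα b))
    _ = (∑ b, α b ^ (1+ρ)) + K ^ (-ρ) * (∑ b, α b) ^ (1+ρ) := by
        rw [← Finset.sum_mul, ← mul_self_rpow hρ₀ (Finset.sum_nonneg fun b _ => hα b)]
        ring

end AuxLemmas

open Finset
/-- Eqs. (8)–(9) of the paper.  `B` is uniform on `B`, `E` has pmf `PE`,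
the hash choice `F` (pmf `μ` on `ι`) is independent of `(B, E)`, `lam : B × E → V` is the
(deterministic) encoder, `W` is a channel from `V` to `Z`, and `Z` is conditionally
independent of `(B, E, F)` given `V = lam (B, E)`.  Hence the joint pmf of
`(hash i (B), Z)` is as displayed on the left, and for `0 < ρ ≤ 1`,
`I(F(B); Z | F) ≤ ∑ e, PE e * (|S|/|B|)^ρ * exp(ψ(ρ, W, P_{V|E=e})) / ρ`,
where `P_{V|E=e}` is the pmf of `lam (B, e)` for uniform `B`. -/
theorem stmt_5 {ι B E S V Z : Type} [Fintype ι] [Fintype B] [Fintype E] [Fintype S]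
    [Fintype V] [Fintype Z] [DecidableEq S] [DecidableEq V] [Nonempty B] [Nonempty S]
    (μ : ι → ℝ) (hash : ι → B → S) (hhash : TwoUniversal μ hash)
    (PE : E → ℝ) (hPE : IsPMF PE)
    (lam : B × E → V) (W : V → Z → ℝ) (hW : IsChannel W)
    (ρ : ℝ) (hρ₀ : 0 < ρ) (hρ₁ : ρ ≤ 1) :
    ∑ i, μ i * mutualInfo (fun sz : S × Z =>
        ∑ b, ∑ e, if hash i b = sz.1
          then (1 / Fintype.card B : ℝ) * PE e * W (lam (b, e)) sz.2 else 0)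
      ≤ ∑ e, PE e * ((Fintype.card S : ℝ) / Fintype.card B) ^ ρ *
          (∑ z, ∑ v, (∑ b, if lam (b, e) = v then (1 / Fintype.card B : ℝ) else 0) *
              W v z ^ (1 + ρ) *
              (∑ v', (∑ b, if lam (b, e) = v' then (1 / Fintype.card B : ℝ) else 0) *
                W v' z) ^ (-ρ)) / ρ := by
  classical
  obtain ⟨⟨hμ0, hμ1⟩, hcol⟩ := hhash
  obtain ⟨hPE0, hPE1⟩ := hPE
  have hW0 : ∀ v z, 0 ≤ W v z := fun v z => (hW v).1 z
  have hW1 : ∀ v, ∑ z, W v z = 1 := fun v => (hW v).2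
  have hKB : (0:ℝ) < (Fintype.card B : ℝ) := by exact_mod_cast Fintype.card_pos
  have hKS : (0:ℝ) < (Fintype.card S : ℝ) := by exact_mod_cast Fintype.card_pos
  set KB : ℝ := (Fintype.card B : ℝ) with hKBdef
  set KS : ℝ := (Fintype.card S : ℝ) with hKSdef
  -- the joint weight of message b and output z
  set A : B → Z → ℝ := fun b z => ∑ e, (1 / KB) * PE e * W (lam (b, e)) z with hAdef
  set R : Z → ℝ := fun z => ∑ b, A b z with hRdef
  set P : ι → S → Z → ℝ := fun i s z => ∑ b, if hash i b = s then A b z else 0 with hPdef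
  have hA0 : ∀ b z, 0 ≤ A b z := fun b z =>
    Finset.sum_nonneg fun e _ =>
      mul_nonneg (mul_nonneg (by positivity) (hPE0 e)) (hW0 _ z)
  have hR0 : ∀ z, 0 ≤ R z := fun z => Finset.sum_nonneg fun b _ => hA0 b z
  have hP0 : ∀ i s z, 0 ≤ P i s z := fun i s z =>
    Finset.sum_nonneg fun b _ => by split <;> [exact hA0 b z; exact le_rfl]
  -- identification of the joint pmf
  have hp_eq : ∀ i (s : S) (z : Z),
      (∑ b, ∑ e, if hash i b = s then (1 / KB) * PE e * W (lam (b, e)) z else 0)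
        = P i s z := by
    intro i s z
    refine Finset.sum_congr rfl fun b _ => ?_
    show (∑ e, if hash i b = s then (1 / KB) * PE e * W (lam (b, e)) z else 0) = _
    split
    · rfl
    · exact Finset.sum_const_zero
  -- marginal over s is R z
  have hmarg : ∀ i (z : Z), ∑ s, P i s z = R z := by
    intro i z
    rw [hPdef, hRdef]
    dsimp only
    rw [Finset.sum_comm]
    refine Finset.sum_congr rfl fun b _ => ?_
    rw [Finset.sum_ite_eq, if_pos (mem_univ _)]
  -- total mass one
  have htot : ∑ z, R z = 1 := by
    rw [hRdef]
    dsimp only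
    rw [Finset.sum_comm]
    have hb : ∀ b : B, ∑ z, A b z = 1 / KB := by
      intro b
      rw [hAdef]
      dsimp only
      rw [Finset.sum_comm]
      have : ∀ e : E, ∑ z, 1 / KB * PE e * W (lam (b, e)) z = 1 / KB * PE e := by
        intro e
        rw [← Finset.mul_sum, hW1, mul_one]
      rw [Finset.sum_congr rfl fun e _ => this e, ← Finset.mul_sum, hPE1, mul_one]
    rw [Finset.sum_congr rfl fun b _ => hb b, Finset.sum_const, Finset.card_univ]
    rw [nsmul_eq_mul, ← hKBdef, mul_one_div, div_self hKB.ne']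
  have hPsum : ∀ i, ∑ s, ∑ z, P i s z = 1 := by
    intro i
    rw [Finset.sum_comm, Finset.sum_congr rfl fun z (_ : z ∈ univ) => hmarg i z]
    exact htot
  -- Step 1: Renyi-type bound on each mutual information
  set T : ι → ℝ := fun i => ∑ s, ∑ z, (P i s z) ^ (1+ρ) * (R z) ^ (-ρ) with hTdef
  have hMI : ∀ i, mutualInfo (fun sz : S × Z =>
      ∑ b, ∑ e, if hash i b = sz.1 then (1 / KB) * PE e * W (lam (b, e)) sz.2 else 0)
      ≤ (1/ρ) * (KS ^ ρ * T i - 1) := by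
    intro i
    have h1 := mi_bound (S := S) (Z := Z) hρ₀ (P i) (hP0 i) (hPsum i)
    have h2 : (∑ s, ∑ z, (P i s z) ^ (1+ρ) * (∑ s', P i s' z) ^ (-ρ)) = T i := by
      rw [hTdef]
      exact Finset.sum_congr rfl fun s _ => Finset.sum_congr rfl fun z _ => by
        rw [hmarg i z]
    rw [h2] at h1
    have h3 : mutualInfo (fun sz : S × Z =>
        ∑ b, ∑ e, if hash i b = sz.1 then (1 / KB) * PE e * W (lam (b, e)) sz.2 else 0)
        = ∑ s, ∑ z, P i s z *
            Real.log (P i s z / ((∑ z', P i s z') * (∑ s', P i s' z))) := by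
      simp only [mutualInfo]
      exact Finset.sum_congr rfl fun s _ => Finset.sum_congr rfl fun z _ => by
        rw [hp_eq i s z]
        exact congrArg _ (by rw [Finset.sum_congr rfl fun z' (_ : z' ∈ univ) => hp_eq i s z',
          Finset.sum_congr rfl fun s' (_ : s' ∈ univ) => hp_eq i s' z])
    rw [h3]
    exact h1
  -- conditional channel output distribution given e
  set Re : E → Z → ℝ := fun e z => ∑ b', (1 / KB) * W (lam (b', e)) z with hRedef
  have hRe0 : ∀ e z, 0 ≤ Re e z := fun e z =>
    Finset.sum_nonneg fun b' _ => mul_nonneg (by positivity) (hW0 _ z)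
  set M : ℝ := ∑ z, (∑ b, (A b z) ^ (1+ρ)) * (R z) ^ (-ρ) with hMdef
  set M2 : ℝ := ∑ z, ∑ b, ∑ e,
    PE e * (((1 / KB) * W (lam (b, e)) z) ^ (1+ρ) * (Re e z) ^ (-ρ)) with hM2def
  -- Step 2 : two-universality bound
  have hμT : ∑ i, μ i * T i ≤ M + KS ^ (-ρ) := by
    have hG : ∀ i, T i = ∑ z, (∑ s, (P i s z) ^ (1+ρ)) * (R z) ^ (-ρ) := by
      intro i
      rw [hTdef]
      dsimp only
      rw [Finset.sum_comm]
      exact Finset.sum_congr rfl fun z _ => (Finset.sum_mul _ _ _).symm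
    calc ∑ i, μ i * T i
        = ∑ i, ∑ z, (μ i * ∑ s, (P i s z) ^ (1+ρ)) * (R z) ^ (-ρ) := by
          refine Finset.sum_congr rfl fun i _ => ?_
          rw [hG i, Finset.mul_sum]
          exact Finset.sum_congr rfl fun z _ => by ring
      _ = ∑ z, (∑ i, μ i * ∑ s, (P i s z) ^ (1+ρ)) * (R z) ^ (-ρ) := by
          rw [Finset.sum_comm]
          exact Finset.sum_congr rfl fun z _ => (Finset.sum_mul _ _ _).symm
      _ ≤ ∑ z, (∑ b, (A b z) ^ (1+ρ) + KS ^ (-ρ) * (R z) ^ (1+ρ)) * (R z) ^ (-ρ) := by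
          refine Finset.sum_le_sum fun z _ => ?_
          refine mul_le_mul_of_nonneg_right ?_ (Real.rpow_nonneg (hR0 z) _)
          exact two_universal_bound hρ₀ hρ₁ μ hash hμ0 hμ1 hcol
            (fun b => A b z) (fun b => hA0 b z)
      _ = M + KS ^ (-ρ) := by
          have per : ∀ z : Z, (∑ b, (A b z) ^ (1+ρ) + KS ^ (-ρ) * (R z) ^ (1+ρ)) * (R z) ^ (-ρ)
              = (∑ b, (A b z) ^ (1+ρ)) * (R z) ^ (-ρ)
                + KS ^ (-ρ) * ((R z) ^ (-ρ) * (R z) ^ (1+ρ)) := fun z => by ring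
          rw [Finset.sum_congr rfl fun z _ => per z, Finset.sum_add_distrib, hMdef]
          congr 1
          calc ∑ z, KS ^ (-ρ) * ((R z) ^ (-ρ) * (R z) ^ (1+ρ)) = ∑ z, KS ^ (-ρ) * R z :=
              Finset.sum_congr rfl fun z _ => by rw [rpow_neg_mul_rpow_one_add hρ₀ (hR0 z)]
            _ = KS ^ (-ρ) := by rw [← Finset.mul_sum, htot, mul_one]
  -- Step 3 : joint convexity
  have hMM2 : M ≤ M2 := by
    rw [hMdef, hM2def]
    refine Finset.sum_le_sum fun z _ => ?_
    rw [Finset.sum_mul]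
    refine Finset.sum_le_sum fun b _ => ?_
    have hAw : A b z = ∑ e, PE e * ((1 / KB) * W (lam (b, e)) z) := by
      rw [hAdef]
      exact Finset.sum_congr rfl fun e _ => by ring
    have hRr : R z = ∑ e, PE e * Re e z := by
      rw [hRdef, hRedef, hAdef]
      dsimp only
      rw [Finset.sum_comm]
      refine Finset.sum_congr rfl fun e _ => ?_
      rw [Finset.mul_sum]
      exact Finset.sum_congr rfl fun b' _ => by ring
    have hwr : ∀ e, Re e z = 0 → (1 / KB) * W (lam (b, e)) z = 0 := by
      intro e h
      have h1 : (1 / KB) * W (lam (b, e)) z ≤ Re e z := by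
        show (1 / KB) * W (lam (b, e)) z ≤ ∑ b', (1 / KB) * W (lam (b', e)) z
        exact Finset.single_le_sum (f := fun b' => (1 / KB) * W (lam (b', e)) z)
          (fun b' _ => mul_nonneg (by positivity) (hW0 _ z)) (mem_univ b)
      have h2 : 0 ≤ (1 / KB) * W (lam (b, e)) z := mul_nonneg (by positivity) (hW0 _ z)
      rw [h] at h1
      linarith
    have jc := joint_convexity hρ₀ PE (fun e => (1 / KB) * W (lam (b, e)) z)
      (fun e => Re e z) hPE0 (fun e => mul_nonneg (by positivity) (hW0 _ z))
      (fun e => hRe0 e z) hwr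
    rw [← hAw, ← hRr] at jc
    exact jc
  -- constants
  have hKSc : KS ^ ρ * KS ^ (-ρ) = 1 := by
    rw [← Real.rpow_add hKS]
    norm_num
  have hKSnn : (0:ℝ) ≤ KS ^ ρ := Real.rpow_nonneg hKS.le ρ
  have hρinv : (0:ℝ) ≤ 1/ρ := by positivity
  -- final identification with the right-hand side
  have final_eq : (1/ρ) * (KS ^ ρ * M2) = ∑ e, PE e * (KS / KB) ^ ρ *
      (∑ z, ∑ v, (∑ b, if lam (b, e) = v then (1 / KB) else 0) * W v z ^ (1 + ρ) *
        (∑ v', (∑ b, if lam (b, e) = v' then (1 / KB) else 0) * W v' z) ^ (-ρ)) / ρ := by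
    have hr' : ∀ (e : E) (z : Z),
        (∑ v', (∑ b, if lam (b, e) = v' then (1 / KB) else 0) * W v' z) = Re e z := by
      intro e z
      calc ∑ v', (∑ b, if lam (b, e) = v' then (1 / KB) else 0) * W v' z
          = ∑ v', ∑ b, (if lam (b, e) = v' then (1 / KB) * W v' z else 0) := by
            refine Finset.sum_congr rfl fun v' _ => ?_
            rw [Finset.sum_mul]
            exact Finset.sum_congr rfl fun b _ => by split <;> ring
        _ = ∑ b, ∑ v', (if lam (b, e) = v' then (1 / KB) * W v' z else 0) := Finset.sum_comm
        _ = ∑ b, (1 / KB) * W (lam (b, e)) z := by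
            refine Finset.sum_congr rfl fun b _ => ?_
            rw [Finset.sum_ite_eq, if_pos (mem_univ _)]
        _ = Re e z := rfl
    have hv : ∀ (e : E) (z : Z),
        (∑ v, (∑ b, if lam (b, e) = v then (1 / KB) else 0) * W v z ^ (1 + ρ)
          * (Re e z) ^ (-ρ))
        = ∑ b, (1 / KB) * (W (lam (b, e)) z ^ (1+ρ) * (Re e z) ^ (-ρ)) := by
      intro e z
      calc ∑ v, (∑ b, if lam (b, e) = v then (1 / KB) else 0) * W v z ^ (1 + ρ)
            * (Re e z) ^ (-ρ)
          = ∑ v, ∑ b, (if lam (b, e) = v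
              then (1 / KB) * (W v z ^ (1+ρ) * (Re e z) ^ (-ρ)) else 0) := by
            refine Finset.sum_congr rfl fun v _ => ?_
            rw [Finset.sum_mul, Finset.sum_mul]
            exact Finset.sum_congr rfl fun b _ => by split <;> ring
        _ = ∑ b, ∑ v, (if lam (b, e) = v
              then (1 / KB) * (W v z ^ (1+ρ) * (Re e z) ^ (-ρ)) else 0) := Finset.sum_comm
        _ = ∑ b, (1 / KB) * (W (lam (b, e)) z ^ (1+ρ) * (Re e z) ^ (-ρ)) := by
            refine Finset.sum_congr rfl fun b _ => ?_
            rw [Finset.sum_ite_eq, if_pos (mem_univ _)]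
    have hpow : ∀ (v : V) (z : Z),
        ((1 / KB) * W v z) ^ (1+ρ) = (1 / KB) * (1 / KB) ^ ρ * W v z ^ (1+ρ) := by
      intro v z
      rw [Real.mul_rpow (by positivity) (hW0 v z),
        ← mul_self_rpow hρ₀ (by positivity : (0:ℝ) ≤ 1/KB)]
    have hdiv : (KS / KB) ^ ρ = KS ^ ρ * (1 / KB) ^ ρ := by
      rw [← Real.mul_rpow hKS.le (by positivity)]
      congr 1
      field_simp
    have hM2e : M2 = ∑ e, ∑ z, ∑ b,
        PE e * (((1 / KB) * W (lam (b, e)) z) ^ (1+ρ) * (Re e z) ^ (-ρ)) := by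
      rw [hM2def]
      calc ∑ z, ∑ b, ∑ e, PE e * (((1 / KB) * W (lam (b, e)) z) ^ (1+ρ) * (Re e z) ^ (-ρ))
          = ∑ z, ∑ e, ∑ b, PE e * (((1 / KB) * W (lam (b, e)) z) ^ (1+ρ) * (Re e z) ^ (-ρ)) :=
            Finset.sum_congr rfl fun z _ => Finset.sum_comm
        _ = ∑ e, ∑ z, ∑ b, PE e * (((1 / KB) * W (lam (b, e)) z) ^ (1+ρ) * (Re e z) ^ (-ρ)) :=
            Finset.sum_comm
    rw [hM2e, Finset.mul_sum, Finset.mul_sum]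
    refine Finset.sum_congr rfl fun e _ => ?_
    have hinner : (∑ z, ∑ v, (∑ b, if lam (b, e) = v then (1 / KB) else 0) * W v z ^ (1 + ρ) *
          (∑ v', (∑ b, if lam (b, e) = v' then (1 / KB) else 0) * W v' z) ^ (-ρ))
        = ∑ z, ∑ b, (1 / KB) * (W (lam (b, e)) z ^ (1+ρ) * (Re e z) ^ (-ρ)) := by
      refine Finset.sum_congr rfl fun z _ => ?_
      rw [Finset.sum_congr rfl fun v (_ : v ∈ univ) => by rw [hr' e z]]
      exact hv e z
    rw [hinner]
    have lhs_eq : ∑ z, ∑ b, PE e * (((1 / KB) * W (lam (b, e)) z) ^ (1+ρ) * (Re e z) ^ (-ρ))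
        = ∑ z, ∑ b, PE e * ((1 / KB) * (1 / KB) ^ ρ
            * (W (lam (b, e)) z ^ (1+ρ) * (Re e z) ^ (-ρ))) := by
      refine Finset.sum_congr rfl fun z _ => Finset.sum_congr rfl fun b _ => ?_
      rw [hpow]
      ring
    rw [lhs_eq, hdiv]
    simp only [Finset.mul_sum, Finset.sum_div]
    exact Finset.sum_congr rfl fun z _ => Finset.sum_congr rfl fun b _ => by ring
  -- put everything together
  refine le_trans (Finset.sum_le_sum fun i (_ : i ∈ univ) =>
    mul_le_mul_of_nonneg_left (hMI i) (hμ0 i)) ?_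
  rw [← final_eq]
  calc ∑ i, μ i * ((1/ρ) * (KS ^ ρ * T i - 1))
      = (1/ρ) * (KS ^ ρ * (∑ i, μ i * T i) - 1) := by
        have per : ∀ i : ι, μ i * ((1/ρ) * (KS ^ ρ * T i - 1))
            = (1/ρ) * KS ^ ρ * (μ i * T i) - (1/ρ) * μ i := fun i => by ring
        rw [Finset.sum_congr rfl fun i _ => per i, Finset.sum_sub_distrib,
          ← Finset.mul_sum, ← Finset.mul_sum, hμ1]
        ring
    _ ≤ (1/ρ) * (KS ^ ρ * (M + KS ^ (-ρ)) - 1) := by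
        refine mul_le_mul_of_nonneg_left (sub_le_sub_right ?_ 1) hρinv
        exact mul_le_mul_of_nonneg_left hμT hKSnn
    _ = (1/ρ) * (KS ^ ρ * M) := by rw [mul_add, hKSc]; ring
    _ ≤ (1/ρ) * (KS ^ ρ * M2) := by
        exact mul_le_mul_of_nonneg_left (mul_le_mul_of_nonneg_left hMM2 hKSnn) hρinv
end
end

section
/- Let 𝓤, 𝓥, 𝓩 be finite sets, P_U a probability mass function on 𝓤, P_{V|U} a channel from 𝓤 to 𝓥, and W a channel from 𝓥 to 𝓩. Fix n ≥ 1 and finite sets 𝓑ₙ, 𝓔ₙ, 𝓢ₙ. Construct a random codebook Λ as follows: independently for each e ∈ 𝓔ₙ draw Uⁿ(e) ∈ 𝓤ⁿ according to the product distribution P_U^{⊗n}, and then independently for each (b, e) ∈ 𝓑ₙ × 𝓔ₙ draw Vⁿ(b, e) ∈ 𝓥ⁿ according to ∏_{i=1}^{n} P_{V|U}(·|U_i(e)). Let B be uniform on 𝓑ₙ, E a random variable on 𝓔ₙ, and (𝓕, F) a family of two-universal hash functions from 𝓑ₙ to 𝓢ₙ, with B, E, F, Λ mutually statistically independent. Let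 Zⁿ be the output of the memoryless channel W^{⊗n}(zⁿ|vⁿ) = ∏_i W(z_i|v_i) with input Vⁿ = Λ(B, E), conditionally independent of (B, E, F, Λ) given Vⁿ. Then for every ρ with 0 < ρ < 1: I(F(B); Zⁿ | F, Λ) ≤ (1/ρ) · (|𝓢ₙ|/|𝓑ₙ|)^ρ · [ Σ_{u∈𝓤} P_U(u) exp( φ(ρ, W, P_{V|U=u}) ) ]ⁿ. -/
open scoped BigOperators

noncomputable section

namespace Stmt6Aux
open Finset

/-! ### Basic sum-product manipulations over function types -/

lemma sum_pi_prod {A X : Type} [Fintype A] [DecidableEq A] [Fintype X]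
    (f : A → X → ℝ) :
    ∑ c : A → X, ∏ a, f a (c a) = ∏ a, ∑ x, f a x := by
  have h := Finset.prod_univ_sum (fun _ : A => (Finset.univ : Finset X)) f
  rw [Fintype.piFinset_univ] at h
  exact h.symm

lemma sum_pi_prod_mul {A X : Type} [Fintype A] [DecidableEq A] [Fintype X]
    (f : A → X → ℝ) (hf : ∀ a, ∑ x, f a x = 1) (a₀ : A) (g : X → ℝ) :
    ∑ c : A → X, (∏ a, f a (c a)) * g (c a₀) = ∑ x, f a₀ x * g x := by
  have h1 : ∀ c : A → X, (∏ a, f a (c a)) * g (c a₀)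
      = ∏ a, (f a (c a) * (if a = a₀ then g (c a) else 1)) := by
    intro c
    rw [Finset.prod_mul_distrib]
    congr 1
    rw [Fintype.prod_ite_eq']
  simp_rw [h1]
  rw [sum_pi_prod (fun a v => f a v * (if a = a₀ then g v else 1))]
  have h2 : ∀ a : A, (∑ x, f a x * (if a = a₀ then g x else 1))
      = (if a = a₀ then ∑ x, f a₀ x * g x else 1) := by
    intro a
    by_cases h : a = a₀
    · subst h; simp
    · simp [h, hf a]
  simp_rw [h2]
  rw [Fintype.prod_ite_eq']

/-! ### Log inequalities -/

lemma one_sub_inv_le_log {t : ℝ} (ht : 0 < t) : 1 - t⁻¹ ≤ Real.log t := by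
  have h := Real.log_le_sub_one_of_pos (inv_pos.mpr ht)
  rw [Real.log_inv] at h; linarith

lemma log_le_rpow_sub_one_div {t ρ : ℝ} (ht : 0 < t) (hρ : 0 < ρ) :
    Real.log t ≤ (t ^ ρ - 1) / ρ := by
  have h := Real.log_le_sub_one_of_pos (Real.rpow_pos_of_pos ht ρ)
  rw [Real.log_rpow ht] at h
  rw [le_div_iff₀ hρ]
  nlinarith

/-- The log-sum inequality, with Lean's `log 0 = 0` conventions. -/
lemma log_sum_le {ι : Type*} (s : Finset ι) (a b : ι → ℝ)
    (ha : ∀ i ∈ s, 0 ≤ a i) (hb : ∀ i ∈ s, 0 ≤ b i)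
    (hab : ∀ i ∈ s, 0 < a i → 0 < b i) :
    (∑ i ∈ s, a i) * Real.log ((∑ i ∈ s, a i) / (∑ i ∈ s, b i)) ≤
      ∑ i ∈ s, a i * Real.log (a i / b i) := by
  rcases eq_or_lt_of_le (Finset.sum_nonneg ha) with h0 | hApos
  · have hz : ∀ i ∈ s, a i = 0 := (Finset.sum_eq_zero_iff_of_nonneg ha).mp h0.symm
    have hz2 : ∀ i ∈ s, a i * Real.log (a i / b i) = 0 := fun i hi => by
      rw [hz i hi, zero_mul]
    rw [Finset.sum_congr rfl hz2, Finset.sum_const_zero, ← h0, zero_mul]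
  · set t := s.filter (fun i => 0 < a i) with ht
    have hsub : t ⊆ s := Finset.filter_subset _ _
    have hmem : ∀ i ∈ t, 0 < a i := fun i hi => (Finset.mem_filter.mp hi).2
    have hAt : ∑ i ∈ t, a i = ∑ i ∈ s, a i := by
      apply Finset.sum_subset hsub
      intro i hi hni
      by_contra hne
      exact hni (Finset.mem_filter.mpr ⟨hi, lt_of_le_of_ne (ha i hi) (Ne.symm hne)⟩)
    have hRt : ∑ i ∈ t, a i * Real.log (a i / b i) = ∑ i ∈ s, a i * Real.log (a i / b i) := by
      apply Finset.sum_subset hsub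
      intro i hi hni
      have : a i = 0 := by
        by_contra hne
        exact hni (Finset.mem_filter.mpr ⟨hi, lt_of_le_of_ne (ha i hi) (Ne.symm hne)⟩)
      rw [this, zero_mul]
    set A := ∑ i ∈ s, a i with hA
    have htne : t.Nonempty := by
      by_contra h
      rw [Finset.not_nonempty_iff_eq_empty] at h
      rw [← hAt, h, Finset.sum_empty] at hApos
      exact lt_irrefl _ hApos
    have hB't : ∀ i ∈ t, 0 < b i := fun i hi => hab i (hsub hi) (hmem i hi)
    have hB'pos : 0 < ∑ i ∈ t, b i := Finset.sum_pos hB't htne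
    set B' := ∑ i ∈ t, b i with hB'
    have hBB' : B' ≤ ∑ i ∈ s, b i :=
      Finset.sum_le_sum_of_subset_of_nonneg hsub (fun i hi _ => hb i hi)
    -- main inequality with B'
    have key : A * Real.log (A / B') ≤ ∑ i ∈ t, a i * Real.log (a i / b i) := by
      have hterm : ∀ i ∈ t,
          a i * Real.log (A / B') + a i - (A / B') * b i ≤ a i * Real.log (a i / b i) := by
        intro i hi
        have hai := hmem i hi
        have hbi := hB't i hi
        have hx : 0 < a i * B' / (b i * A) := by positivity
        have hlog := one_sub_inv_le_log hx
        have hxinv : (a i * B' / (b i * A))⁻¹ = b i * A / (a i * B') := by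
          rw [inv_div]
        rw [hxinv] at hlog
        have hlogeq : Real.log (a i * B' / (b i * A))
            = Real.log (a i / b i) - Real.log (A / B') := by
          rw [Real.log_div (by positivity) (by positivity),
            Real.log_div hai.ne' hbi.ne', Real.log_div hApos.ne' hB'pos.ne',
            Real.log_mul hai.ne' hB'pos.ne', Real.log_mul hbi.ne' hApos.ne']
          ring
        rw [hlogeq] at hlog
        have := mul_le_mul_of_nonneg_left hlog hai.le
        have hcalc : a i * (1 - b i * A / (a i * B')) = a i - (A / B') * b i := by
          field_simp
        rw [hcalc] at this
        linarith [this]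
      have hsumm := Finset.sum_le_sum hterm
      have hleft : ∑ i ∈ t, (a i * Real.log (A / B') + a i - (A / B') * b i)
          = A * Real.log (A / B') := by
        rw [Finset.sum_sub_distrib, Finset.sum_add_distrib, ← Finset.sum_mul, ← Finset.mul_sum,
          ← hB', hAt]
        rw [div_mul_cancel₀ _ hB'pos.ne']
        ring
      rw [hleft] at hsumm
      exact hsumm
    have hmono : A * Real.log (A / ∑ i ∈ s, b i) ≤ A * Real.log (A / B') := by
      apply mul_le_mul_of_nonneg_left _ hApos.le
      have hBpos : (0:ℝ) < ∑ i ∈ s, b i := lt_of_lt_of_le hB'pos hBB'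
      apply Real.log_le_log (by positivity)
      exact div_le_div_of_nonneg_left hApos.le hB'pos hBB'
    calc A * Real.log (A / ∑ i ∈ s, b i) ≤ A * Real.log (A / B') := hmono
      _ ≤ ∑ i ∈ t, a i * Real.log (a i / b i) := key
      _ = ∑ i ∈ s, a i * Real.log (a i / b i) := hRt

end Stmt6Aux

/-! ### Power mean inequalities -/

namespace Stmt6Aux
open Finset
open scoped NNReal

/-- Two-function Hölder inequality for finite sums. -/
lemma holder2 {ι : Type*} (s : Finset ι) (f g : ι → ℝ)
    (hf : ∀ i ∈ s, 0 ≤ f i) (hg : ∀ i ∈ s, 0 ≤ g i)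
    {α : ℝ} (hα0 : 0 < α) (hα1 : α < 1) :
    ∑ i ∈ s, f i * g i ≤
      (∑ i ∈ s, f i ^ (1/α)) ^ α * (∑ i ∈ s, g i ^ (1/(1-α))) ^ (1-α) := by
  have h1α : 0 < 1 - α := by linarith
  set A := ∑ i ∈ s, f i ^ (1/α) with hA
  set B := ∑ i ∈ s, g i ^ (1/(1-α)) with hB
  have hAnn : 0 ≤ A := Finset.sum_nonneg fun i hi => Real.rpow_nonneg (hf i hi) _
  have hBnn : 0 ≤ B := Finset.sum_nonneg fun i hi => Real.rpow_nonneg (hg i hi) _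
  rcases eq_or_lt_of_le hAnn with hA0 | hApos
  · -- A = 0 : all f vanish
    have hz : ∀ i ∈ s, f i ^ (1/α) = 0 :=
      (Finset.sum_eq_zero_iff_of_nonneg fun i hi => Real.rpow_nonneg (hf i hi) _).mp hA0.symm
    have hfz : ∀ i ∈ s, f i = 0 := by
      intro i hi
      have := hz i hi
      by_contra hne
      exact hne (by
        have hfi := lt_of_le_of_ne (hf i hi) (Ne.symm hne)
        exact absurd this (ne_of_gt (Real.rpow_pos_of_pos hfi _)))
    have : ∑ i ∈ s, f i * g i = 0 :=
      Finset.sum_eq_zero fun i hi => by rw [hfz i hi, zero_mul]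
    rw [this, ← hA0, Real.zero_rpow (ne_of_gt hα0), zero_mul]
  rcases eq_or_lt_of_le hBnn with hB0 | hBpos
  · have hz : ∀ i ∈ s, g i ^ (1/(1-α)) = 0 :=
      (Finset.sum_eq_zero_iff_of_nonneg fun i hi => Real.rpow_nonneg (hg i hi) _).mp hB0.symm
    have hgz : ∀ i ∈ s, g i = 0 := by
      intro i hi
      have := hz i hi
      by_contra hne
      have hgi := lt_of_le_of_ne (hg i hi) (Ne.symm hne)
      exact absurd this (ne_of_gt (Real.rpow_pos_of_pos hgi _))
    have : ∑ i ∈ s, f i * g i = 0 :=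
      Finset.sum_eq_zero fun i hi => by rw [hgz i hi, mul_zero]
    rw [this, ← hB0, Real.zero_rpow (ne_of_gt h1α), mul_zero]
  · -- main case
    have hconj : (1/α).HolderConjugate (1/(1-α)) := by
      rw [Real.holderConjugate_iff]
      constructor
      · rw [lt_div_iff₀ hα0]; linarith
      · rw [one_div, inv_inv, one_div, inv_inv]; ring
    have hApow : 0 < A ^ α := Real.rpow_pos_of_pos hApos _
    have hBpow : 0 < B ^ (1-α) := Real.rpow_pos_of_pos hBpos _
    rw [← div_le_one (by positivity)]
    have hterm : ∀ i ∈ s,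
        (f i / A ^ α) * (g i / B ^ (1-α)) ≤
          α * (f i ^ (1/α) / A) + (1-α) * (g i ^ (1/(1-α)) / B) := by
      intro i hi
      have hy := Real.young_inequality_of_nonneg
        (div_nonneg (hf i hi) hApow.le) (div_nonneg (hg i hi) hBpow.le) hconj
      have e1 : (f i / A ^ α) ^ (1/α) = f i ^ (1/α) / A := by
        rw [Real.div_rpow (hf i hi) hApow.le, ← Real.rpow_mul hApos.le]
        rw [mul_one_div, div_self (ne_of_gt hα0), Real.rpow_one]
      have e2 : (g i / B ^ (1-α)) ^ (1/(1-α)) = g i ^ (1/(1-α)) / B := by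
        rw [Real.div_rpow (hg i hi) hBpow.le, ← Real.rpow_mul hBpos.le]
        rw [mul_one_div, div_self (ne_of_gt h1α), Real.rpow_one]
      rw [e1, e2] at hy
      calc (f i / A ^ α) * (g i / B ^ (1-α))
          ≤ (f i ^ (1/α) / A) / (1/α) + (g i ^ (1/(1-α)) / B) / (1/(1-α)) := hy
        _ = α * (f i ^ (1/α) / A) + (1-α) * (g i ^ (1/(1-α)) / B) := by
            rw [div_div_eq_mul_div, div_div_eq_mul_div]
            ring
    have hsum := Finset.sum_le_sum hterm
    have hL : ∑ i ∈ s, (f i / A ^ α) * (g i / B ^ (1-α))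
        = (∑ i ∈ s, f i * g i) / (A ^ α * B ^ (1-α)) := by
      rw [Finset.sum_div]
      apply Finset.sum_congr rfl
      intro i _
      field_simp
    have hR : ∑ i ∈ s, (α * (f i ^ (1/α) / A) + (1-α) * (g i ^ (1/(1-α)) / B)) = 1 := by
      rw [Finset.sum_add_distrib, ← Finset.mul_sum, ← Finset.mul_sum, ← Finset.sum_div,
        ← Finset.sum_div, ← hA, ← hB, div_self hApos.ne', div_self hBpos.ne']
      ring
    rw [hL, hR] at hsum
    exact hsum

/-- Jensen's inequality for the concave function `x ↦ x ^ c`, `0 < c < 1`. -/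
lemma jensen_rpow {ι : Type*} (s : Finset ι) (w t : ι → ℝ)
    (hw : ∀ i ∈ s, 0 ≤ w i) (hw1 : ∑ i ∈ s, w i = 1)
    (ht : ∀ i ∈ s, 0 ≤ t i) {c : ℝ} (hc0 : 0 < c) (hc1 : c < 1) :
    ∑ i ∈ s, w i * t i ^ c ≤ (∑ i ∈ s, w i * t i) ^ c := by
  have h := Real.arith_mean_le_rpow_mean s w (fun i => t i ^ c) hw hw1
    (fun i hi => Real.rpow_nonneg (ht i hi) _) (p := 1/c)
    (by rw [le_div_iff₀ hc0]; linarith)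
  have he : ∀ i ∈ s, w i * (t i ^ c) ^ (1/c) = w i * t i := by
    intro i hi
    rw [← Real.rpow_mul (ht i hi), mul_one_div, div_self hc0.ne', Real.rpow_one]
  have h' : ∑ i ∈ s, w i * t i ^ c ≤ (∑ i ∈ s, w i * (t i ^ c) ^ (1/c)) ^ (1/(1/c)) := h
  rwa [Finset.sum_congr rfl he, one_div_one_div] at h'

/-- Subadditivity of `x ↦ x ^ c` for `0 < c ≤ 1`. -/
lemma rpow_add_le {a b c : ℝ} (ha : 0 ≤ a) (hb : 0 ≤ b) (hc0 : 0 < c) (hc1 : c ≤ 1) :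
    (a + b) ^ c ≤ a ^ c + b ^ c := by
  have key : ∀ x y : ℝ≥0, (x + y) ^ c ≤ x ^ c + y ^ c := by
    intro x y
    have h := NNReal.rpow_add_rpow_le x y hc0 hc1
    simp only [NNReal.rpow_one, one_div_one] at h
    -- h : (x ^ 1 + y ^ 1) ^ (1/1) ≤ (x ^ c + y ^ c) ^ (1/c)  — check form
    have h2 := NNReal.rpow_le_rpow h hc0.le
    rwa [← NNReal.rpow_mul, one_div, inv_mul_cancel₀ hc0.ne', NNReal.rpow_one] at h2
  have h := key a.toNNReal b.toNNReal
  have hcoe : ((a.toNNReal + b.toNNReal : ℝ≥0) : ℝ) = a + b := by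
    simp [Real.coe_toNNReal _ ha, Real.coe_toNNReal _ hb]
  calc (a + b) ^ c = ((a.toNNReal + b.toNNReal : ℝ≥0) : ℝ) ^ c := by rw [hcoe]
    _ = (((a.toNNReal + b.toNNReal) ^ c : ℝ≥0) : ℝ) := by rw [NNReal.coe_rpow]
    _ ≤ ((a.toNNReal ^ c + b.toNNReal ^ c : ℝ≥0) : ℝ) := by exact_mod_cast h
    _ = a ^ c + b ^ c := by
        push_cast [NNReal.coe_rpow]
        rw [Real.coe_toNNReal _ ha, Real.coe_toNNReal _ hb]

end Stmt6Aux

/-! ### rpow helpers and pointwise key inequalities -/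

namespace Stmt6Aux
open Finset

lemma rpow_one_add {y ρ : ℝ} (hy : 0 ≤ y) (hρ : 0 < ρ) : y ^ (1+ρ) = y * y ^ ρ := by
  rcases eq_or_lt_of_le hy with h0 | hpos
  · rw [← h0, Real.zero_rpow (by positivity), zero_mul]
  · rw [Real.rpow_add hpos, Real.rpow_one]

lemma rpow_neg_mul_self {y ρ : ℝ} (hy : 0 ≤ y) (hρ : 0 < ρ) :
    y ^ (-ρ) * y ^ (1+ρ) = y := by
  rcases eq_or_lt_of_le hy with h0 | hpos
  · rw [← h0, Real.zero_rpow (by positivity : (1:ℝ)+ρ ≠ 0), mul_zero]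
  · rw [← Real.rpow_add hpos]
    norm_num

lemma rpow_neg_mul_rpow_le_one {y ρ : ℝ} (hy : 0 ≤ y) :
    y ^ (-ρ) * y ^ ρ ≤ 1 := by
  rcases eq_or_lt_of_le hy with h0 | hpos
  · rcases eq_or_ne ρ 0 with hρ | hρ
    · simp [hρ]
    · rw [← h0, Real.zero_rpow (neg_ne_zero.mpr hρ), zero_mul]; norm_num
  · rw [← Real.rpow_add hpos, neg_add_cancel, Real.rpow_zero]

/-- Pointwise inequality behind step (3). -/
lemma key3 {q qZ S ρ : ℝ} (hq : 0 ≤ q) (hle : q ≤ qZ) (hS : 0 < S) (hρ : 0 < ρ) :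
    q * Real.log (q * S / qZ) ≤ (1/ρ) * (S ^ ρ * (qZ ^ (-ρ) * q ^ (1+ρ)) - q) := by
  rcases eq_or_lt_of_le hq with h0 | hqpos
  · rw [← h0, Real.zero_rpow (by positivity : (1:ℝ)+ρ ≠ 0)]
    simp
  · have hqZ : 0 < qZ := lt_of_lt_of_le hqpos hle
    have ht : 0 < q * S / qZ := by positivity
    have hlog := log_le_rpow_sub_one_div ht hρ
    have h1 := mul_le_mul_of_nonneg_left hlog hq
    have heq : q * ((q * S / qZ) ^ ρ - 1) / ρ = (1/ρ) * (S ^ ρ * (qZ ^ (-ρ) * q ^ (1+ρ)) - q) := by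
      rw [Real.div_rpow (by positivity) hqZ.le, Real.mul_rpow hq hS.le,
        Real.rpow_neg hqZ.le, rpow_one_add hq hρ]
      field_simp
    calc q * Real.log (q * S / qZ) ≤ q * (((q * S / qZ) ^ ρ - 1) / ρ) := h1
      _ = (1/ρ) * (S ^ ρ * (qZ ^ (-ρ) * q ^ (1+ρ)) - q) := by rw [← heq]; ring
end Stmt6Aux

/-! ### Step C (hash averaging) and Step D (Hölder) -/

namespace Stmt6Aux
open Finset

lemma stepD {BT : Type} [Fintype BT] (x : BT → ℝ) (hx : ∀ b, 0 ≤ x b)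
    {ρ : ℝ} (hρ0 : 0 < ρ) (hρ1 : ρ < 1) :
    (∑ b, x b) ^ (-ρ) * ∑ b, x b ^ (1+ρ) ≤ (∑ b, x b ^ (1/(1-ρ))) ^ (1-ρ) := by
  have h1ρ : 0 < 1 - ρ := by linarith
  have hXnn : (0:ℝ) ≤ ∑ b, x b := Finset.sum_nonneg fun b _ => hx b
  have hHnn : (0:ℝ) ≤ (∑ b, x b ^ (1/(1-ρ))) ^ (1-ρ) :=
    Real.rpow_nonneg (Finset.sum_nonneg fun b _ => Real.rpow_nonneg (hx b) _) _
  have hH : ∑ b, x b ^ (1+ρ) ≤ (∑ b, x b ^ (1/(1-ρ))) ^ (1-ρ) * (∑ b, x b) ^ ρ := by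
    have h := holder2 Finset.univ x (fun b => x b ^ ρ) (fun b _ => hx b)
      (fun b _ => Real.rpow_nonneg (hx b) _) h1ρ (by linarith : 1 - ρ < 1)
    have e0 : (1:ℝ) - (1 - ρ) = ρ := by ring
    rw [e0] at h
    have e1 : ∀ b ∈ Finset.univ (α := BT), x b * x b ^ ρ = x b ^ (1+ρ) :=
      fun b _ => (rpow_one_add (hx b) hρ0).symm
    have e2 : ∀ b ∈ Finset.univ (α := BT), (x b ^ ρ) ^ (1/ρ) = x b := by
      intro b _
      rw [← Real.rpow_mul (hx b), mul_one_div, div_self hρ0.ne', Real.rpow_one]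
    rw [Finset.sum_congr rfl e1, Finset.sum_congr rfl e2] at h
    exact h
  calc (∑ b, x b) ^ (-ρ) * ∑ b, x b ^ (1+ρ)
      ≤ (∑ b, x b) ^ (-ρ) * ((∑ b, x b ^ (1/(1-ρ))) ^ (1-ρ) * (∑ b, x b) ^ ρ) :=
        mul_le_mul_of_nonneg_left hH (Real.rpow_nonneg hXnn _)
    _ = (∑ b, x b ^ (1/(1-ρ))) ^ (1-ρ) * ((∑ b, x b) ^ (-ρ) * (∑ b, x b) ^ ρ) := by ring
    _ ≤ (∑ b, x b ^ (1/(1-ρ))) ^ (1-ρ) * 1 :=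
        mul_le_mul_of_nonneg_left (rpow_neg_mul_rpow_le_one hXnn) hHnn
    _ = (∑ b, x b ^ (1/(1-ρ))) ^ (1-ρ) := mul_one _

lemma stepC {ι BT ST : Type} [Fintype ι] [Fintype BT] [Fintype ST] [DecidableEq BT]
    [DecidableEq ST] [Nonempty ST]
    (μ : ι → ℝ) (hash : ι → BT → ST) (hhash : TwoUniversal μ hash)
    (x : BT → ℝ) (hx : ∀ b, 0 ≤ x b) {ρ : ℝ} (hρ0 : 0 < ρ) (hρ1 : ρ < 1) :
    ∑ i, μ i * ∑ s : ST, (∑ b, if hash i b = s then x b else 0) ^ (1+ρ)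
      ≤ ∑ b, x b ^ (1+ρ) + (Fintype.card ST : ℝ) ^ (-ρ) * (∑ b, x b) ^ (1+ρ) := by
  obtain ⟨⟨hμnn, hμ1⟩, hcoll⟩ := hhash
  have hSpos : (0:ℝ) < (Fintype.card ST : ℝ) := by
    exact_mod_cast Fintype.card_pos
  set y : ι → ST → ℝ := fun i s => ∑ b, if hash i b = s then x b else 0 with hy
  have hynn : ∀ i s, 0 ≤ y i s := fun i s =>
    Finset.sum_nonneg fun b _ => by split <;> simp [hx b]
  set c : ι → BT → ℝ := fun i b =>
    ∑ b' ∈ Finset.univ.erase b, if hash i b' = hash i b then x b' else 0 with hc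
  have hcnn : ∀ i b, 0 ≤ c i b := fun i b =>
    Finset.sum_nonneg fun b' _ => by split <;> simp [hx b']
  have step1 : ∀ i, ∑ s : ST, y i s ^ (1+ρ)
      ≤ ∑ b, x b ^ (1+ρ) + ∑ b, x b * c i b ^ ρ := by
    intro i
    have e1 : ∑ s : ST, y i s ^ (1+ρ) = ∑ b, x b * y i (hash i b) ^ ρ := by
      have e11 : ∀ s ∈ Finset.univ (α := ST), y i s ^ (1+ρ)
          = ∑ b, if hash i b = s then x b * y i s ^ ρ else 0 := by
        intro s _
        rw [rpow_one_add (hynn i s) hρ0, hy]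
        rw [Finset.sum_mul]
        apply Finset.sum_congr rfl
        intro b _
        split <;> simp
      rw [Finset.sum_congr rfl e11, Finset.sum_comm]
      apply Finset.sum_congr rfl
      intro b _
      rw [Finset.sum_ite_eq]
      simp
    have e2 : ∀ b, y i (hash i b) = x b + c i b := by
      intro b
      simp only [hy, hc]
      rw [← Finset.add_sum_erase Finset.univ _ (Finset.mem_univ b), if_pos rfl]
    rw [e1]
    have hterm : ∀ b ∈ Finset.univ (α := BT),
        x b * y i (hash i b) ^ ρ ≤ x b ^ (1+ρ) + x b * c i b ^ ρ := by
      intro b _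
      rw [e2 b]
      calc x b * (x b + c i b) ^ ρ ≤ x b * (x b ^ ρ + c i b ^ ρ) :=
            mul_le_mul_of_nonneg_left (rpow_add_le (hx b) (hcnn i b) hρ0 hρ1.le) (hx b)
        _ = x b * x b ^ ρ + x b * c i b ^ ρ := by ring
        _ = x b ^ (1+ρ) + x b * c i b ^ ρ := by rw [← rpow_one_add (hx b) hρ0]
    calc ∑ b, x b * y i (hash i b) ^ ρ ≤ ∑ b, (x b ^ (1+ρ) + x b * c i b ^ ρ) :=
          Finset.sum_le_sum hterm
      _ = ∑ b, x b ^ (1+ρ) + ∑ b, x b * c i b ^ ρ := Finset.sum_add_distrib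
  -- average over i
  have hXnn : (0:ℝ) ≤ ∑ b, x b := Finset.sum_nonneg fun b _ => hx b
  have hcollb : ∀ b, ∑ i, μ i * c i b ≤ (∑ b', x b') / (Fintype.card ST : ℝ) := by
    intro b
    have e3 : ∑ i, μ i * c i b
        = ∑ b' ∈ Finset.univ.erase b,
            x b' * ∑ i, μ i * (if hash i b' = hash i b then (1:ℝ) else 0) := by
      calc ∑ i, μ i * c i b
          = ∑ i, ∑ b' ∈ Finset.univ.erase b,
              μ i * (if hash i b' = hash i b then x b' else 0) := by
            apply Finset.sum_congr rfl
            intro i _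
            rw [hc]
            exact Finset.mul_sum _ _ _
        _ = ∑ b' ∈ Finset.univ.erase b, ∑ i,
              μ i * (if hash i b' = hash i b then x b' else 0) := Finset.sum_comm
        _ = ∑ b' ∈ Finset.univ.erase b,
              x b' * ∑ i, μ i * (if hash i b' = hash i b then (1:ℝ) else 0) := by
            apply Finset.sum_congr rfl
            intro b' _
            rw [Finset.mul_sum]
            apply Finset.sum_congr rfl
            intro i _
            split_ifs <;> ring
    rw [e3]
    calc ∑ b' ∈ Finset.univ.erase b,
          x b' * ∑ i, μ i * (if hash i b' = hash i b then (1:ℝ) else 0)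
        ≤ ∑ b' ∈ Finset.univ.erase b, x b' * (1 / (Fintype.card ST : ℝ)) := by
          apply Finset.sum_le_sum
          intro b' hb'
          exact mul_le_mul_of_nonneg_left (hcoll b' b (Finset.ne_of_mem_erase hb')) (hx b')
      _ = (∑ b' ∈ Finset.univ.erase b, x b') * (1 / (Fintype.card ST : ℝ)) :=
          (Finset.sum_mul _ _ _).symm
      _ ≤ (∑ b', x b') * (1 / (Fintype.card ST : ℝ)) := by
          apply mul_le_mul_of_nonneg_right _ (by positivity)
          exact Finset.sum_le_sum_of_subset_of_nonneg
            (Finset.erase_subset _ _) (fun b' _ _ => hx b')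
      _ = (∑ b', x b') / (Fintype.card ST : ℝ) := by ring
  calc ∑ i, μ i * ∑ s : ST, y i s ^ (1+ρ)
      ≤ ∑ i, μ i * (∑ b, x b ^ (1+ρ) + ∑ b, x b * c i b ^ ρ) :=
        Finset.sum_le_sum fun i _ => mul_le_mul_of_nonneg_left (step1 i) (hμnn i)
    _ = ∑ b, x b ^ (1+ρ) + ∑ b, x b * ∑ i, μ i * c i b ^ ρ := by
        simp_rw [mul_add]
        rw [Finset.sum_add_distrib, ← Finset.sum_mul, hμ1, one_mul]
        congr 1
        simp_rw [Finset.mul_sum]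
        rw [Finset.sum_comm]
        apply Finset.sum_congr rfl
        intro b _
        apply Finset.sum_congr rfl
        intro i _
        ring
    _ ≤ ∑ b, x b ^ (1+ρ) + ∑ b, x b * ((∑ b', x b') / (Fintype.card ST : ℝ)) ^ ρ := by
        apply add_le_add_right
        apply Finset.sum_le_sum
        intro b _
        apply mul_le_mul_of_nonneg_left _ (hx b)
        calc ∑ i, μ i * c i b ^ ρ ≤ (∑ i, μ i * c i b) ^ ρ :=
              jensen_rpow Finset.univ μ (fun i => c i b) (fun i _ => hμnn i) hμ1
                (fun i _ => hcnn i b) hρ0 hρ1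
          _ ≤ ((∑ b', x b') / (Fintype.card ST : ℝ)) ^ ρ :=
              Real.rpow_le_rpow
                (Finset.sum_nonneg fun i _ => mul_nonneg (hμnn i) (hcnn i b))
                (hcollb b) hρ0.le
    _ = ∑ b, x b ^ (1+ρ) + (Fintype.card ST : ℝ) ^ (-ρ) * (∑ b, x b) ^ (1+ρ) := by
        congr 1
        rw [← Finset.sum_mul, Real.div_rpow hXnn hSpos.le, rpow_one_add hXnn hρ0,
          Real.rpow_neg hSpos.le]
        ring

end Stmt6Aux

/-! ### Step B and the combined per-codebook bound -/

namespace Stmt6Aux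
open Finset

lemma stepB {ST γ : Type} [Fintype ST] [Fintype γ]
    (q : ST → γ → ℝ) (qZ : γ → ℝ)
    (hq : ∀ s z, 0 ≤ q s z) (hle : ∀ s z, q s z ≤ qZ z)
    (hq1 : ∑ s, ∑ z, q s z = 1)
    {S ρ : ℝ} (hS : 0 < S) (hρ0 : 0 < ρ) :
    ∑ s, ∑ z, q s z * Real.log (q s z * S / qZ z)
      ≤ (1/ρ) * (S ^ ρ * ∑ z, qZ z ^ (-ρ) * ∑ s, q s z ^ (1+ρ) - 1) := by
  have e1 : ∑ s, ∑ z, qZ z ^ (-ρ) * q s z ^ (1+ρ)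
      = ∑ z, qZ z ^ (-ρ) * ∑ s, q s z ^ (1+ρ) := by
    rw [Finset.sum_comm]
    exact Finset.sum_congr rfl fun z _ => (Finset.mul_sum _ _ _).symm
  calc ∑ s, ∑ z, q s z * Real.log (q s z * S / qZ z)
      ≤ ∑ s, ∑ z, (1/ρ) * (S ^ ρ * (qZ z ^ (-ρ) * q s z ^ (1+ρ)) - q s z) :=
        Finset.sum_le_sum fun s _ => Finset.sum_le_sum fun z _ =>
          key3 (hq s z) (hle s z) hS hρ0
    _ = (1/ρ) * (S ^ ρ * ∑ z, qZ z ^ (-ρ) * ∑ s, q s z ^ (1+ρ) - 1) := by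
        have e2 : ∀ s z, (1/ρ) * (S ^ ρ * (qZ z ^ (-ρ) * q s z ^ (1+ρ)) - q s z)
            = (1/ρ) * S ^ ρ * (qZ z ^ (-ρ) * q s z ^ (1+ρ)) - (1/ρ) * q s z :=
          fun s z => by ring
        simp_rw [e2, Finset.sum_sub_distrib, ← Finset.mul_sum]
        rw [hq1, e1]
        ring

lemma stepBCD {ι BT ST γ : Type} [Fintype ι] [Fintype BT] [Fintype ST] [Fintype γ]
    [DecidableEq BT] [DecidableEq ST] [Nonempty BT] [Nonempty ST]
    (μ : ι → ℝ) (hash : ι → BT → ST) (hhash : TwoUniversal μ hash)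
    (k : BT → γ → ℝ) (hk : ∀ b z, 0 ≤ k b z) (hk1 : ∀ b, ∑ z, k b z = 1)
    {ρ : ℝ} (hρ0 : 0 < ρ) (hρ1 : ρ < 1) :
    ∑ i, μ i * ∑ s : ST, ∑ z : γ,
        (∑ b, if hash i b = s then (Fintype.card BT : ℝ)⁻¹ * k b z else 0) *
        Real.log ((∑ b, if hash i b = s then (Fintype.card BT : ℝ)⁻¹ * k b z else 0) *
          (Fintype.card ST : ℝ) / ∑ b, (Fintype.card BT : ℝ)⁻¹ * k b z)
      ≤ (1/ρ) * (Fintype.card ST : ℝ) ^ ρ *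
          ((Fintype.card BT : ℝ)⁻¹ * ∑ z : γ, (∑ b, k b z ^ (1/(1-ρ))) ^ (1-ρ)) := by
  have hμnn : ∀ i, 0 ≤ μ i := hhash.1.1
  have hμ1 : ∑ i, μ i = 1 := hhash.1.2
  have hBc : (0:ℝ) < (Fintype.card BT : ℝ) := by exact_mod_cast Fintype.card_pos
  have hS : (0:ℝ) < (Fintype.card ST : ℝ) := by exact_mod_cast Fintype.card_pos
  have h1ρ : 0 < 1 - ρ := by linarith
  have hxnn : ∀ z b, (0:ℝ) ≤ (Fintype.card BT : ℝ)⁻¹ * k b z :=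
    fun z b => mul_nonneg (by positivity) (hk b z)
  have hqnn : ∀ i (s : ST) (z : γ),
      (0:ℝ) ≤ ∑ b, if hash i b = s then (Fintype.card BT : ℝ)⁻¹ * k b z else 0 :=
    by
    intro i s z
    apply Finset.sum_nonneg
    intro b _
    split
    · exact hxnn z b
    · exact le_refl 0
  have hqle : ∀ i (s : ST) (z : γ),
      (∑ b, if hash i b = s then (Fintype.card BT : ℝ)⁻¹ * k b z else 0)
        ≤ ∑ b, (Fintype.card BT : ℝ)⁻¹ * k b z :=
    by
    intro i s z
    apply Finset.sum_le_sum
    intro b _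
    split
    · exact le_refl _
    · exact hxnn z b
  have hqZnn : ∀ z : γ, (0:ℝ) ≤ ∑ b, (Fintype.card BT : ℝ)⁻¹ * k b z :=
    fun z => Finset.sum_nonneg fun b _ => hxnn z b
  have hqZ1 : ∑ z : γ, ∑ b, (Fintype.card BT : ℝ)⁻¹ * k b z = 1 := by
    rw [Finset.sum_comm]
    have e : ∀ b ∈ Finset.univ (α := BT),
        ∑ z : γ, (Fintype.card BT : ℝ)⁻¹ * k b z = (Fintype.card BT : ℝ)⁻¹ := by
      intro b _
      rw [← Finset.mul_sum, hk1 b, mul_one]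
    rw [Finset.sum_congr rfl e, Finset.sum_const, Finset.card_univ, nsmul_eq_mul,
      mul_inv_cancel₀ hBc.ne']
  have hq1 : ∀ i, ∑ s : ST, ∑ z : γ,
      (∑ b, if hash i b = s then (Fintype.card BT : ℝ)⁻¹ * k b z else 0) = 1 := by
    intro i
    rw [Finset.sum_comm]
    have e : ∀ z ∈ Finset.univ (α := γ),
        (∑ s : ST, ∑ b, if hash i b = s then (Fintype.card BT : ℝ)⁻¹ * k b z else 0)
          = ∑ b, (Fintype.card BT : ℝ)⁻¹ * k b z := by
      intro z _
      rw [Finset.sum_comm]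
      apply Finset.sum_congr rfl
      intro b _
      rw [Finset.sum_ite_eq]
      simp
    rw [Finset.sum_congr rfl e, hqZ1]
  -- step B applied for each i
  have hJ : ∀ i, ∑ s : ST, ∑ z : γ,
        (∑ b, if hash i b = s then (Fintype.card BT : ℝ)⁻¹ * k b z else 0) *
        Real.log ((∑ b, if hash i b = s then (Fintype.card BT : ℝ)⁻¹ * k b z else 0) *
          (Fintype.card ST : ℝ) / ∑ b, (Fintype.card BT : ℝ)⁻¹ * k b z)
      ≤ (1/ρ) * ((Fintype.card ST : ℝ) ^ ρ *
          ∑ z : γ, (∑ b, (Fintype.card BT : ℝ)⁻¹ * k b z) ^ (-ρ) *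
            ∑ s : ST, (∑ b, if hash i b = s then (Fintype.card BT : ℝ)⁻¹ * k b z else 0) ^ (1+ρ)
          - 1) :=
    fun i => stepB
      (fun s z => ∑ b, if hash i b = s then (Fintype.card BT : ℝ)⁻¹ * k b z else 0)
      (fun z => ∑ b, (Fintype.card BT : ℝ)⁻¹ * k b z)
      (hqnn i) (hqle i) (hq1 i) hS hρ0
  -- the K bound
  have hKb : ∑ i, μ i * ∑ z : γ, (∑ b, (Fintype.card BT : ℝ)⁻¹ * k b z) ^ (-ρ) *
        ∑ s : ST, (∑ b, if hash i b = s then (Fintype.card BT : ℝ)⁻¹ * k b z else 0) ^ (1+ρ)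
      ≤ (Fintype.card BT : ℝ)⁻¹ * (∑ z : γ, (∑ b, k b z ^ (1/(1-ρ))) ^ (1-ρ))
          + (Fintype.card ST : ℝ) ^ (-ρ) := by
    have swap : ∑ i, μ i * ∑ z : γ, (∑ b, (Fintype.card BT : ℝ)⁻¹ * k b z) ^ (-ρ) *
          ∑ s : ST, (∑ b, if hash i b = s then (Fintype.card BT : ℝ)⁻¹ * k b z else 0) ^ (1+ρ)
        = ∑ z : γ, (∑ b, (Fintype.card BT : ℝ)⁻¹ * k b z) ^ (-ρ) *
            ∑ i, μ i *
              ∑ s : ST, (∑ b, if hash i b = s then (Fintype.card BT : ℝ)⁻¹ * k b z else 0) ^ (1+ρ) := by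
      simp_rw [Finset.mul_sum]
      rw [Finset.sum_comm]
      apply Finset.sum_congr rfl
      intro z _
      apply Finset.sum_congr rfl
      intro i _
      apply Finset.sum_congr rfl
      intro s _
      ring
    rw [swap]
    calc ∑ z : γ, (∑ b, (Fintype.card BT : ℝ)⁻¹ * k b z) ^ (-ρ) *
            ∑ i, μ i *
              ∑ s : ST, (∑ b, if hash i b = s then (Fintype.card BT : ℝ)⁻¹ * k b z else 0) ^ (1+ρ)
        ≤ ∑ z : γ, (∑ b, (Fintype.card BT : ℝ)⁻¹ * k b z) ^ (-ρ) *
            (∑ b, ((Fintype.card BT : ℝ)⁻¹ * k b z) ^ (1+ρ)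
              + (Fintype.card ST : ℝ) ^ (-ρ) * (∑ b, (Fintype.card BT : ℝ)⁻¹ * k b z) ^ (1+ρ)) :=
          Finset.sum_le_sum fun z _ => mul_le_mul_of_nonneg_left
            (stepC μ hash hhash (fun b => (Fintype.card BT : ℝ)⁻¹ * k b z) (hxnn z) hρ0 hρ1)
            (Real.rpow_nonneg (hqZnn z) _)
      _ = ∑ z : γ, ((∑ b, (Fintype.card BT : ℝ)⁻¹ * k b z) ^ (-ρ) *
              ∑ b, ((Fintype.card BT : ℝ)⁻¹ * k b z) ^ (1+ρ))
            + (Fintype.card ST : ℝ) ^ (-ρ) * ∑ z : γ, ∑ b, (Fintype.card BT : ℝ)⁻¹ * k b z := by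
          simp_rw [mul_add, Finset.sum_add_distrib]
          congr 1
          rw [Finset.mul_sum]
          apply Finset.sum_congr rfl
          intro z _
          rw [mul_left_comm, rpow_neg_mul_self (hqZnn z) hρ0]
      _ ≤ ∑ z : γ, (∑ b, ((Fintype.card BT : ℝ)⁻¹ * k b z) ^ (1/(1-ρ))) ^ (1-ρ)
            + (Fintype.card ST : ℝ) ^ (-ρ) * 1 := by
          apply add_le_add
          · exact Finset.sum_le_sum fun z _ =>
              stepD (fun b => (Fintype.card BT : ℝ)⁻¹ * k b z) (hxnn z) hρ0 hρ1
          · rw [hqZ1]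
      _ = (Fintype.card BT : ℝ)⁻¹ * (∑ z : γ, (∑ b, k b z ^ (1/(1-ρ))) ^ (1-ρ))
            + (Fintype.card ST : ℝ) ^ (-ρ) := by
          rw [mul_one]
          congr 1
          rw [Finset.mul_sum]
          apply Finset.sum_congr rfl
          intro z _
          have e1 : ∀ b ∈ Finset.univ (α := BT),
              ((Fintype.card BT : ℝ)⁻¹ * k b z) ^ (1/(1-ρ))
                = (Fintype.card BT : ℝ)⁻¹ ^ (1/(1-ρ)) * k b z ^ (1/(1-ρ)) :=
            fun b _ => Real.mul_rpow (by positivity) (hk b z)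
          rw [Finset.sum_congr rfl e1, ← Finset.mul_sum,
            Real.mul_rpow (Real.rpow_nonneg (by positivity) _)
              (Finset.sum_nonneg fun b _ => Real.rpow_nonneg (hk b z) _),
            ← Real.rpow_mul (by positivity : (0:ℝ) ≤ (Fintype.card BT : ℝ)⁻¹),
            one_div_mul_cancel h1ρ.ne', Real.rpow_one]
  -- put everything together
  calc ∑ i, μ i * ∑ s : ST, ∑ z : γ,
        (∑ b, if hash i b = s then (Fintype.card BT : ℝ)⁻¹ * k b z else 0) *
        Real.log ((∑ b, if hash i b = s then (Fintype.card BT : ℝ)⁻¹ * k b z else 0) *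
          (Fintype.card ST : ℝ) / ∑ b, (Fintype.card BT : ℝ)⁻¹ * k b z)
      ≤ ∑ i, μ i * ((1/ρ) * ((Fintype.card ST : ℝ) ^ ρ *
          ∑ z : γ, (∑ b, (Fintype.card BT : ℝ)⁻¹ * k b z) ^ (-ρ) *
            ∑ s : ST, (∑ b, if hash i b = s then (Fintype.card BT : ℝ)⁻¹ * k b z else 0) ^ (1+ρ)
          - 1)) :=
        Finset.sum_le_sum fun i _ => mul_le_mul_of_nonneg_left (hJ i) (hμnn i)
    _ = (1/ρ) * ((Fintype.card ST : ℝ) ^ ρ *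
          (∑ i, μ i * ∑ z : γ, (∑ b, (Fintype.card BT : ℝ)⁻¹ * k b z) ^ (-ρ) *
            ∑ s : ST, (∑ b, if hash i b = s then (Fintype.card BT : ℝ)⁻¹ * k b z else 0) ^ (1+ρ))
          - 1) := by
        have e : ∀ i : ι, μ i * ((1/ρ) * ((Fintype.card ST : ℝ) ^ ρ *
            ∑ z : γ, (∑ b, (Fintype.card BT : ℝ)⁻¹ * k b z) ^ (-ρ) *
              ∑ s : ST, (∑ b, if hash i b = s then (Fintype.card BT : ℝ)⁻¹ * k b z else 0) ^ (1+ρ)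
            - 1))
            = (1/ρ) * (Fintype.card ST : ℝ) ^ ρ *
                (μ i * ∑ z : γ, (∑ b, (Fintype.card BT : ℝ)⁻¹ * k b z) ^ (-ρ) *
                  ∑ s : ST, (∑ b, if hash i b = s then (Fintype.card BT : ℝ)⁻¹ * k b z else 0) ^ (1+ρ))
              - (1/ρ) * μ i := fun i => by ring
        simp_rw [e, Finset.sum_sub_distrib, ← Finset.mul_sum, hμ1]
        ring
    _ ≤ (1/ρ) * ((Fintype.card ST : ℝ) ^ ρ *
          ((Fintype.card BT : ℝ)⁻¹ * (∑ z : γ, (∑ b, k b z ^ (1/(1-ρ))) ^ (1-ρ))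
            + (Fintype.card ST : ℝ) ^ (-ρ)) - 1) := by
        apply mul_le_mul_of_nonneg_left _ (by positivity)
        apply sub_le_sub_right
        exact mul_le_mul_of_nonneg_left hKb (Real.rpow_nonneg hS.le _)
    _ = (1/ρ) * (Fintype.card ST : ℝ) ^ ρ *
          ((Fintype.card BT : ℝ)⁻¹ * ∑ z : γ, (∑ b, k b z ^ (1/(1-ρ))) ^ (1-ρ)) := by
        have e : (Fintype.card ST : ℝ) ^ ρ * (Fintype.card ST : ℝ) ^ (-ρ) = 1 := by
          rw [← Real.rpow_add hS]
          norm_num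
        have e2 : (Fintype.card ST : ℝ) ^ ρ *
            ((Fintype.card BT : ℝ)⁻¹ * (∑ z : γ, (∑ b, k b z ^ (1/(1-ρ))) ^ (1-ρ))
              + (Fintype.card ST : ℝ) ^ (-ρ)) - 1
            = (Fintype.card ST : ℝ) ^ ρ *
                ((Fintype.card BT : ℝ)⁻¹ * (∑ z : γ, (∑ b, k b z ^ (1/(1-ρ))) ^ (1-ρ)))
              + ((Fintype.card ST : ℝ) ^ ρ * (Fintype.card ST : ℝ) ^ (-ρ) - 1) := by ring
        rw [e2, e]
        ring

end Stmt6Aux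

/-! ### Step A : from mutual information to conditional relative entropy -/

namespace Stmt6Aux
open Finset

lemma stepA {ST ET γ : Type} [Fintype ST] [Fintype ET] [Fintype γ] [Nonempty ST]
    (p : ST → γ → ℝ) (q : ET → ST → γ → ℝ) (qZ : ET → γ → ℝ) (PE : ET → ℝ)
    (hPEnn : ∀ e, 0 ≤ PE e) (hPE1 : ∑ e, PE e = 1)
    (hqnn : ∀ e s z, 0 ≤ q e s z) (hqle : ∀ e s z, q e s z ≤ qZ e z)
    (hqZs : ∀ e z, ∑ s, q e s z = qZ e z)
    (hq1 : ∀ e, ∑ s, ∑ z, q e s z = 1)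
    (hpq : ∀ s z, p s z = ∑ e, PE e * q e s z)
    {S : ℝ} (hS : S = (Fintype.card ST : ℝ)) :
    ∑ s, ∑ z, p s z * Real.log (p s z / ((∑ z', p s z') * (∑ s', p s' z)))
      ≤ ∑ e, PE e * ∑ s, ∑ z, q e s z * Real.log (q e s z * S / qZ e z) := by
  have hSpos : (0:ℝ) < S := by
    rw [hS]; exact_mod_cast Fintype.card_pos
  have hpnn : ∀ s z, 0 ≤ p s z := fun s z => by
    rw [hpq]
    exact Finset.sum_nonneg fun e _ => mul_nonneg (hPEnn e) (hqnn e s z)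
  have hqZnn : ∀ e z, 0 ≤ qZ e z := fun e z => by
    rw [← hqZs]
    exact Finset.sum_nonneg fun s _ => hqnn e s z
  have hp1 : ∑ s, ∑ z, p s z = 1 := by
    simp_rw [hpq]
    have e1 : ∀ s ∈ Finset.univ (α := ST), ∑ z : γ, ∑ e, PE e * q e s z
        = ∑ e, ∑ z : γ, PE e * q e s z := fun s _ => Finset.sum_comm
    rw [Finset.sum_congr rfl e1, Finset.sum_comm]
    have e2 : ∀ e ∈ Finset.univ (α := ET), ∑ s, ∑ z : γ, PE e * q e s z = PE e := by
      intro e _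
      simp_rw [← Finset.mul_sum]
      rw [hq1 e, mul_one]
    rw [Finset.sum_congr rfl e2, hPE1]
  -- decompose the mutual information
  have hL : ∑ s, ∑ z, p s z * Real.log (p s z / ((∑ z', p s z') * (∑ s', p s' z)))
      = (∑ s, ∑ z, p s z * Real.log (p s z * S / (∑ s', p s' z)))
        - ∑ s, (∑ z, p s z) * (Real.log (∑ z', p s z') + Real.log S) := by
    have hterm : ∀ (s : ST) (z : γ),
        p s z * Real.log (p s z / ((∑ z', p s z') * (∑ s', p s' z)))
        = p s z * Real.log (p s z * S / (∑ s', p s' z))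
          - p s z * (Real.log (∑ z', p s z') + Real.log S) := by
      intro s z
      rcases eq_or_lt_of_le (hpnn s z) with h0 | hp
      · rw [← h0]; ring
      · have hpS : 0 < ∑ z', p s z' :=
          lt_of_lt_of_le hp (Finset.single_le_sum (fun z' _ => hpnn s z') (Finset.mem_univ z))
        have hpZ : 0 < ∑ s', p s' z :=
          lt_of_lt_of_le hp (Finset.single_le_sum (fun s' _ => hpnn s' z) (Finset.mem_univ s))
        rw [Real.log_div hp.ne' (by positivity), Real.log_mul hpS.ne' hpZ.ne',
          Real.log_div (by positivity) hpZ.ne', Real.log_mul hp.ne' hSpos.ne']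
        ring
    simp_rw [hterm, Finset.sum_sub_distrib]
    congr 1
    apply Finset.sum_congr rfl
    intro s _
    rw [← Finset.sum_mul]
  have hGibbs : 0 ≤ ∑ s, (∑ z, p s z) * (Real.log (∑ z', p s z') + Real.log S) := by
    have h := log_sum_le Finset.univ (fun s => ∑ z, p s z) (fun _ => S⁻¹)
      (fun s _ => Finset.sum_nonneg fun z _ => hpnn s z)
      (fun s _ => by positivity)
      (fun s _ _ => by positivity)
    rw [hp1] at h
    have hSsum : ∑ _s : ST, S⁻¹ = 1 := by
      rw [Finset.sum_const, Finset.card_univ, nsmul_eq_mul, ← hS, mul_inv_cancel₀ hSpos.ne']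
    rw [hSsum] at h
    simp only [div_one, Real.log_one, mul_zero, one_mul] at h
    have hmatch : ∀ s ∈ Finset.univ (α := ST),
        (∑ z, p s z) * Real.log ((∑ z, p s z) / S⁻¹)
        = (∑ z, p s z) * (Real.log (∑ z', p s z') + Real.log S) := by
      intro s _
      rcases eq_or_lt_of_le (Finset.sum_nonneg fun z _ => hpnn s z) with h0 | hpS
      · rw [← h0, zero_mul, zero_mul]
      · rw [Real.log_div hpS.ne' (by positivity), Real.log_inv]
        ring
    rw [Finset.sum_congr rfl hmatch] at h
    exact h
  -- conditioning on e (log-sum inequality)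
  have hA2 : ∀ (s : ST) (z : γ), p s z * Real.log (p s z * S / (∑ s', p s' z))
      ≤ ∑ e, PE e * (q e s z * Real.log (q e s z * S / qZ e z)) := by
    intro s z
    have h := log_sum_le Finset.univ (fun e => PE e * q e s z)
      (fun e => PE e * (qZ e z * S⁻¹))
      (fun e _ => mul_nonneg (hPEnn e) (hqnn e s z))
      (fun e _ => mul_nonneg (hPEnn e) (mul_nonneg (hqZnn e z) (by positivity)))
      (by
        intro e _ hpos
        have hPEe : 0 < PE e := by
          rcases eq_or_lt_of_le (hPEnn e) with h0 | h1
          · rw [← h0, zero_mul] at hpos; exact absurd hpos (lt_irrefl 0)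
          · exact h1
        have hqe : 0 < q e s z := by
          rcases eq_or_lt_of_le (hqnn e s z) with h0 | h1
          · rw [← h0, mul_zero] at hpos; exact absurd hpos (lt_irrefl 0)
          · exact h1
        exact mul_pos hPEe (mul_pos (lt_of_lt_of_le hqe (hqle e s z)) (by positivity)))
    have hb : ∑ e, PE e * (qZ e z * S⁻¹) = (∑ s', p s' z) * S⁻¹ := by
      have hpZq : ∑ s', p s' z = ∑ e, PE e * qZ e z := by
        simp_rw [hpq]
        rw [Finset.sum_comm]
        exact Finset.sum_congr rfl fun e _ => by rw [← Finset.mul_sum, hqZs]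
      rw [hpZq, Finset.sum_mul]
      exact Finset.sum_congr rfl fun e _ => by ring
    rw [← hpq, hb] at h
    have harg : p s z / ((∑ s', p s' z) * S⁻¹) = p s z * S / (∑ s', p s' z) := by
      rcases eq_or_ne (∑ s', p s' z) 0 with h0 | h0
      · rw [h0]; simp
      · field_simp
    rw [harg] at h
    refine le_trans h (le_of_eq (Finset.sum_congr rfl fun e _ => ?_))
    show PE e * q e s z * Real.log (PE e * q e s z / (PE e * (qZ e z * S⁻¹)))
        = PE e * (q e s z * Real.log (q e s z * S / qZ e z))
    rcases eq_or_lt_of_le (hPEnn e) with h0 | hPEe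
    · rw [← h0]; simp only [zero_mul]
    rcases eq_or_lt_of_le (hqnn e s z) with hq0 | hq
    · rw [← hq0]; simp only [mul_zero, zero_mul]
    · have hqZ : 0 < qZ e z := lt_of_lt_of_le hq (hqle e s z)
      have harg2 : (PE e * q e s z) / (PE e * (qZ e z * S⁻¹)) = q e s z * S / qZ e z := by
        rw [mul_div_mul_left _ _ hPEe.ne', div_mul_eq_div_div, div_inv_eq_mul]
        ring
      rw [harg2]
      ring
  -- put the pieces together
  calc ∑ s, ∑ z, p s z * Real.log (p s z / ((∑ z', p s z') * (∑ s', p s' z)))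
      = (∑ s, ∑ z, p s z * Real.log (p s z * S / (∑ s', p s' z)))
        - ∑ s, (∑ z, p s z) * (Real.log (∑ z', p s z') + Real.log S) := hL
    _ ≤ ∑ s, ∑ z, p s z * Real.log (p s z * S / (∑ s', p s' z)) := by linarith
    _ ≤ ∑ s, ∑ z, ∑ e, PE e * (q e s z * Real.log (q e s z * S / qZ e z)) :=
        Finset.sum_le_sum fun s _ => Finset.sum_le_sum fun z _ => hA2 s z
    _ = ∑ e, PE e * ∑ s, ∑ z, q e s z * Real.log (q e s z * S / qZ e z) := by
        have e1 : ∀ s ∈ Finset.univ (α := ST),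
            ∑ z : γ, ∑ e, PE e * (q e s z * Real.log (q e s z * S / qZ e z))
            = ∑ e, ∑ z : γ, PE e * (q e s z * Real.log (q e s z * S / qZ e z)) :=
          fun s _ => Finset.sum_comm
        rw [Finset.sum_congr rfl e1, Finset.sum_comm]
        apply Finset.sum_congr rfl
        intro e _
        simp_rw [← Finset.mul_sum]

end Stmt6Aux

/-! ### Step E : averaging over the random codebook -/

namespace Stmt6Aux
open Finset

lemma stepE {U V Z BT ET : Type} [Fintype U] [Fintype V] [Fintype Z] [Fintype BT]
    [Fintype ET] [DecidableEq BT] [DecidableEq ET]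
    (PU : U → ℝ) (hPU : IsPMF PU) (PVU : U → V → ℝ) (hPVU : IsChannel PVU)
    (W' : V → Z → ℝ) (hW' : ∀ v ζ, 0 ≤ W' v ζ)
    (n : ℕ) {c : ℝ} (hc0 : 0 < c) (hc1 : c < 1) (e : ET) :
    ∑ cb : (ET → Fin n → U) × (BT × ET → Fin n → V),
      ((∏ e', ∏ j, PU (cb.1 e' j)) * ∏ be : BT × ET, ∏ j, PVU (cb.1 be.2 j) (cb.2 be j)) *
        ∑ z : Fin n → Z, (∑ b, ∏ j, W' (cb.2 (b, e) j) (z j)) ^ c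
    ≤ (Fintype.card BT : ℝ) ^ c *
        (∑ u, PU u * ∑ ζ, (∑ v, PVU u v * W' v ζ) ^ c) ^ n := by
  obtain ⟨hPUnn, hPU1⟩ := hPU
  have hPVUnn : ∀ u v, 0 ≤ PVU u v := fun u v => (hPVU u).1 v
  have hPVU1 : ∀ u, ∑ v, PVU u v = 1 := fun u => (hPVU u).2
  have hBc : (0:ℝ) ≤ (Fintype.card BT : ℝ) := by positivity
  have hπV1 : ∀ un : Fin n → U, ∑ v : Fin n → V, ∏ j, PVU (un j) (v j) = 1 := by
    intro un
    rw [sum_pi_prod (fun j x => PVU (un j) x)]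
    rw [Finset.prod_congr rfl (fun j _ => hPVU1 (un j)), Finset.prod_const_one]
  have hπU1 : ∑ un : Fin n → U, ∏ j, PU (un j) = 1 := by
    rw [sum_pi_prod (fun _ x => PU x)]
    rw [Finset.prod_congr rfl (fun j _ => hPU1), Finset.prod_const_one]
  have hπ2nn : ∀ (cu : ET → Fin n → U) (cv : BT × ET → Fin n → V),
      0 ≤ ∏ be : BT × ET, ∏ j, PVU (cu be.2 j) (cv be j) :=
    fun cu cv => Finset.prod_nonneg fun be _ =>
      Finset.prod_nonneg fun j _ => hPVUnn _ _
  have hπ2sum : ∀ cu : ET → Fin n → U,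
      ∑ cv : BT × ET → Fin n → V, ∏ be : BT × ET, ∏ j, PVU (cu be.2 j) (cv be j) = 1 := by
    intro cu
    rw [sum_pi_prod (fun (be : BT × ET) (v : Fin n → V) => ∏ j, PVU (cu be.2 j) (v j))]
    rw [Finset.prod_congr rfl (fun be _ => hπV1 (cu be.2)), Finset.prod_const_one]
  have hTnn : ∀ (cv : BT × ET → Fin n → V) (z : Fin n → Z),
      0 ≤ ∑ b, ∏ j, W' (cv (b, e) j) (z j) :=
    fun cv z => Finset.sum_nonneg fun b _ => Finset.prod_nonneg fun j _ => hW' _ _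
  have inner : ∀ cu : ET → Fin n → U,
      ∑ cv : BT × ET → Fin n → V,
        (∏ be : BT × ET, ∏ j, PVU (cu be.2 j) (cv be j)) *
          ∑ z : Fin n → Z, (∑ b, ∏ j, W' (cv (b, e) j) (z j)) ^ c
      ≤ (Fintype.card BT : ℝ) ^ c *
          ∏ j, ∑ ζ, (∑ v, PVU (cu e j) v * W' v ζ) ^ c := by
    intro cu
    have hE : ∀ z : Fin n → Z,
        ∑ cv : BT × ET → Fin n → V,
          (∏ be : BT × ET, ∏ j, PVU (cu be.2 j) (cv be j)) *
            ∑ b, ∏ j, W' (cv (b, e) j) (z j)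
        = (Fintype.card BT : ℝ) * ∏ j, ∑ v, PVU (cu e j) v * W' v (z j) := by
      intro z
      have swap : ∑ cv : BT × ET → Fin n → V,
            (∏ be : BT × ET, ∏ j, PVU (cu be.2 j) (cv be j)) *
              ∑ b, ∏ j, W' (cv (b, e) j) (z j)
          = ∑ b, ∑ cv : BT × ET → Fin n → V,
              (∏ be : BT × ET, ∏ j, PVU (cu be.2 j) (cv be j)) *
                ∏ j, W' (cv (b, e) j) (z j) := by
        simp_rw [Finset.mul_sum]
        exact Finset.sum_comm
      rw [swap]
      have hper : ∀ b : BT,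
          ∑ cv : BT × ET → Fin n → V,
            (∏ be : BT × ET, ∏ j, PVU (cu be.2 j) (cv be j)) *
              ∏ j, W' (cv (b, e) j) (z j)
          = ∏ j, ∑ v, PVU (cu e j) v * W' v (z j) := by
        intro b
        have hm := sum_pi_prod_mul (A := BT × ET) (X := Fin n → V)
          (fun be v => ∏ j, PVU (cu be.2 j) (v j)) (fun be => hπV1 (cu be.2)) (b, e)
          (fun v => ∏ j, W' (v j) (z j))
        rw [hm]
        have e2 : ∀ v : Fin n → V, (∏ j, PVU (cu (b, e).2 j) (v j)) * ∏ j, W' (v j) (z j)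
            = ∏ j, PVU (cu e j) (v j) * W' (v j) (z j) :=
          fun v => (Finset.prod_mul_distrib).symm
        rw [Finset.sum_congr rfl (fun v _ => e2 v),
          sum_pi_prod (fun (j : Fin n) (x : V) => PVU (cu e j) x * W' x (z j))]
      rw [Finset.sum_congr rfl (fun b _ => hper b), Finset.sum_const, Finset.card_univ,
        nsmul_eq_mul]
    calc ∑ cv : BT × ET → Fin n → V,
          (∏ be : BT × ET, ∏ j, PVU (cu be.2 j) (cv be j)) *
            ∑ z : Fin n → Z, (∑ b, ∏ j, W' (cv (b, e) j) (z j)) ^ c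
        = ∑ z : Fin n → Z, ∑ cv : BT × ET → Fin n → V,
            (∏ be : BT × ET, ∏ j, PVU (cu be.2 j) (cv be j)) *
              (∑ b, ∏ j, W' (cv (b, e) j) (z j)) ^ c := by
          simp_rw [Finset.mul_sum]
          exact Finset.sum_comm
      _ ≤ ∑ z : Fin n → Z, (∑ cv : BT × ET → Fin n → V,
            (∏ be : BT × ET, ∏ j, PVU (cu be.2 j) (cv be j)) *
              ∑ b, ∏ j, W' (cv (b, e) j) (z j)) ^ c :=
          Finset.sum_le_sum fun z _ =>
            jensen_rpow Finset.univ _ _ (fun cv _ => hπ2nn cu cv) (hπ2sum cu)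
              (fun cv _ => hTnn cv z) hc0 hc1
      _ = ∑ z : Fin n → Z, ((Fintype.card BT : ℝ) * ∏ j, ∑ v, PVU (cu e j) v * W' v (z j)) ^ c :=
          Finset.sum_congr rfl fun z _ => by rw [hE z]
      _ = (Fintype.card BT : ℝ) ^ c *
            ∑ z : Fin n → Z, ∏ j, (∑ v, PVU (cu e j) v * W' v (z j)) ^ c := by
          rw [Finset.mul_sum]
          apply Finset.sum_congr rfl
          intro z _
          rw [Real.mul_rpow hBc (Finset.prod_nonneg fun j _ =>
            Finset.sum_nonneg fun v _ => mul_nonneg (hPVUnn _ _) (hW' _ _))]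
          rw [Real.finset_prod_rpow Finset.univ _ (fun j _ =>
            Finset.sum_nonneg fun v _ => mul_nonneg (hPVUnn _ _) (hW' _ _)) c]
      _ = (Fintype.card BT : ℝ) ^ c *
            ∏ j, ∑ ζ, (∑ v, PVU (cu e j) v * W' v ζ) ^ c := by
          rw [sum_pi_prod (fun (j : Fin n) (ζ : Z) => (∑ v, PVU (cu e j) v * W' v ζ) ^ c)]
  -- now average over cu
  have hφnn : ∀ u, 0 ≤ ∑ ζ, (∑ v, PVU u v * W' v ζ) ^ c :=
    fun u => Finset.sum_nonneg fun ζ _ => Real.rpow_nonneg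
      (Finset.sum_nonneg fun v _ => mul_nonneg (hPVUnn _ _) (hW' _ _)) _
  calc ∑ cb : (ET → Fin n → U) × (BT × ET → Fin n → V),
      ((∏ e', ∏ j, PU (cb.1 e' j)) * ∏ be : BT × ET, ∏ j, PVU (cb.1 be.2 j) (cb.2 be j)) *
        ∑ z : Fin n → Z, (∑ b, ∏ j, W' (cb.2 (b, e) j) (z j)) ^ c
      = ∑ cu : ET → Fin n → U, (∏ e', ∏ j, PU (cu e' j)) *
          ∑ cv : BT × ET → Fin n → V,
            (∏ be : BT × ET, ∏ j, PVU (cu be.2 j) (cv be j)) *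
              ∑ z : Fin n → Z, (∑ b, ∏ j, W' (cv (b, e) j) (z j)) ^ c := by
        rw [Fintype.sum_prod_type]
        apply Finset.sum_congr rfl
        intro cu _
        rw [Finset.mul_sum]
        apply Finset.sum_congr rfl
        intro cv _
        ring
    _ ≤ ∑ cu : ET → Fin n → U, (∏ e', ∏ j, PU (cu e' j)) *
          ((Fintype.card BT : ℝ) ^ c * ∏ j, ∑ ζ, (∑ v, PVU (cu e j) v * W' v ζ) ^ c) :=
        Finset.sum_le_sum fun cu _ => mul_le_mul_of_nonneg_left (inner cu)
          (Finset.prod_nonneg fun e' _ => Finset.prod_nonneg fun j _ => hPUnn _)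
    _ = (Fintype.card BT : ℝ) ^ c * ∑ cu : ET → Fin n → U,
          (∏ e', ∏ j, PU (cu e' j)) * ∏ j, ∑ ζ, (∑ v, PVU (cu e j) v * W' v ζ) ^ c := by
        rw [Finset.mul_sum]
        apply Finset.sum_congr rfl
        intro cu _
        ring
    _ = (Fintype.card BT : ℝ) ^ c * ∑ un : Fin n → U,
          (∏ j, PU (un j)) * ∏ j, (∑ ζ, (∑ v, PVU (un j) v * W' v ζ) ^ c) := by
        congr 1
        exact sum_pi_prod_mul (A := ET) (X := Fin n → U)
          (fun _ un => ∏ j, PU (un j)) (fun _ => hπU1) e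
          (fun un => ∏ j, ∑ ζ, (∑ v, PVU (un j) v * W' v ζ) ^ c)
    _ = (Fintype.card BT : ℝ) ^ c *
          (∑ u, PU u * ∑ ζ, (∑ v, PVU u v * W' v ζ) ^ c) ^ n := by
        congr 1
        have e3 : ∀ un : Fin n → U,
            (∏ j, PU (un j)) * ∏ j, (∑ ζ, (∑ v, PVU (un j) v * W' v ζ) ^ c)
            = ∏ j, PU (un j) * ∑ ζ, (∑ v, PVU (un j) v * W' v ζ) ^ c :=
          fun un => (Finset.prod_mul_distrib).symm
        rw [Finset.sum_congr rfl (fun un _ => e3 un),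
          sum_pi_prod (fun (j : Fin n) (u : U) => PU u * ∑ ζ, (∑ v, PVU u v * W' v ζ) ^ c),
          Finset.prod_const, Finset.card_univ, Fintype.card_fin]

end Stmt6Aux

/-! ### Rearrangement lemmas -/

namespace Stmt6Aux
open Finset

lemma rearrange1 {ι CB ET : Type} [Fintype ι] [Fintype CB] [Fintype ET]
    (μ : ι → ℝ) (π : CB → ℝ) (PE : ET → ℝ) (J : ι → CB → ET → ℝ) :
    ∑ i, μ i * ∑ cb, π cb * ∑ e, PE e * J i cb e
      = ∑ cb, ∑ e, (π cb * PE e) * ∑ i, μ i * J i cb e := by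
  simp_rw [Finset.mul_sum]
  rw [Finset.sum_comm]
  apply Finset.sum_congr rfl
  intro cb _
  rw [Finset.sum_comm]
  apply Finset.sum_congr rfl
  intro e _
  apply Finset.sum_congr rfl
  intro i _
  ring

lemma rearrange2 {CB ET : Type} [Fintype CB] [Fintype ET]
    (π : CB → ℝ) (PE : ET → ℝ) (M : CB → ET → ℝ) (C D : ℝ) :
    ∑ cb, ∑ e, (π cb * PE e) * (C * (D * M cb e))
      = C * D * ∑ e, PE e * ∑ cb, π cb * M cb e := by
  simp_rw [Finset.mul_sum]
  rw [Finset.sum_comm]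
  apply Finset.sum_congr rfl
  intro e _
  apply Finset.sum_congr rfl
  intro cb _
  ring

end Stmt6Aux


set_option maxHeartbeats 1000000 in
/-- Eq. (10) of the paper.  Random codebook argument: a codebook
`cb = (cb.1, cb.2)` consists of codewords `cb.1 e ∈ U^n` (drawn i.i.d. `PU`) and
`cb.2 (b, e) ∈ V^n` (drawn according to `∏ i, PVU (cb.1 e i)`, independently over
`(b, e)`); its probability is the displayed product.  `B` is uniform on `BT`, `E` has pmf
`PE`, the hash choice (pmf `μ` on `ι`) is independent of everything, and `Z^n` is the
memoryless output of `W` for input `cb.2 (B, E)`.  Then for `0 < ρ < 1`,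
`I(F(B); Z^n | F, Λ) ≤ (1/ρ) (|ST|/|BT|)^ρ (∑ u, PU u * exp(φ(ρ, W, P_{V|U=u})))^n`. -/
theorem stmt_6 {ι U V Z BT ET ST : Type} [Fintype ι] [Fintype U] [Fintype V] [Fintype Z]
    [Fintype BT] [Fintype ET] [Fintype ST] [DecidableEq BT] [DecidableEq ET]
    [DecidableEq ST] [Nonempty BT] [Nonempty ST]
    (PU : U → ℝ) (hPU : IsPMF PU)
    (PVU : U → V → ℝ) (hPVU : IsChannel PVU)
    (W : V → Z → ℝ) (hW : IsChannel W)
    (n : ℕ) (hn : 1 ≤ n)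
    (μ : ι → ℝ) (hash : ι → BT → ST) (hhash : TwoUniversal μ hash)
    (PE : ET → ℝ) (hPE : IsPMF PE)
    (ρ : ℝ) (hρ₀ : 0 < ρ) (hρ₁ : ρ < 1) :
    ∑ i, μ i * ∑ cb : (ET → Fin n → U) × (BT × ET → Fin n → V),
        ((∏ e, ∏ j, PU (cb.1 e j)) *
          ∏ be : BT × ET, ∏ j, PVU (cb.1 be.2 j) (cb.2 be j)) *
        mutualInfo (fun sz : ST × (Fin n → Z) =>
          ∑ b, ∑ e, if hash i b = sz.1
            then (1 / Fintype.card BT : ℝ) * PE e * ∏ j, W (cb.2 (b, e) j) (sz.2 j)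
            else 0)
      ≤ (1 / ρ) * ((Fintype.card ST : ℝ) / Fintype.card BT) ^ ρ *
          (∑ u, PU u * ∑ z, (∑ v, PVU u v * W v z ^ (1 / (1 - ρ))) ^ (1 - ρ)) ^ n := by
  have hμnn : ∀ i, 0 ≤ μ i := hhash.1.1
  have hPEnn : ∀ e, 0 ≤ PE e := hPE.1
  have hPE1 : ∑ e, PE e = 1 := hPE.2
  have hWnn : ∀ v ζ, 0 ≤ W v ζ := fun v => (hW v).1
  have hW1 : ∀ v, ∑ ζ, W v ζ = 1 := fun v => (hW v).2
  have hPUnn : ∀ u, 0 ≤ PU u := hPU.1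
  have hPVUnn : ∀ u v, 0 ≤ PVU u v := fun u v => (hPVU u).1 v
  have hBc : (0:ℝ) < (Fintype.card BT : ℝ) := by exact_mod_cast Fintype.card_pos
  have hS : (0:ℝ) < (Fintype.card ST : ℝ) := by exact_mod_cast Fintype.card_pos
  have h1ρ : (0:ℝ) < 1 - ρ := by linarith
  have hWn1 : ∀ v : Fin n → V, ∑ z : Fin n → Z, ∏ j, W (v j) (z j) = 1 := by
    intro v
    rw [Stmt6Aux.sum_pi_prod (fun j ζ => W (v j) ζ)]
    rw [Finset.prod_congr rfl (fun j _ => hW1 (v j)), Finset.prod_const_one]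
  have hWnnn : ∀ (v : Fin n → V) (z : Fin n → Z), 0 ≤ ∏ j, W (v j) (z j) :=
    fun v z => Finset.prod_nonneg fun j _ => hWnn _ _
  have hπnn : ∀ cb : (ET → Fin n → U) × (BT × ET → Fin n → V),
      0 ≤ (∏ e, ∏ j, PU (cb.1 e j)) *
        ∏ be : BT × ET, ∏ j, PVU (cb.1 be.2 j) (cb.2 be j) :=
    fun cb => mul_nonneg
      (Finset.prod_nonneg fun e _ => Finset.prod_nonneg fun j _ => hPUnn _)
      (Finset.prod_nonneg fun be _ => Finset.prod_nonneg fun j _ => hPVUnn _ _)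
  -- Step A for each hash function and codebook
  have hstepA : ∀ (i : ι) (cb : (ET → Fin n → U) × (BT × ET → Fin n → V)),
      mutualInfo (fun sz : ST × (Fin n → Z) =>
        ∑ b, ∑ e, if hash i b = sz.1
          then (1 / Fintype.card BT : ℝ) * PE e * ∏ j, W (cb.2 (b, e) j) (sz.2 j)
          else 0)
      ≤ ∑ e, PE e * ∑ s : ST, ∑ z : Fin n → Z,
          (∑ b, if hash i b = s
            then (Fintype.card BT : ℝ)⁻¹ * ∏ j, W (cb.2 (b, e) j) (z j) else 0) *
          Real.log ((∑ b, if hash i b = s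
            then (Fintype.card BT : ℝ)⁻¹ * ∏ j, W (cb.2 (b, e) j) (z j) else 0) *
            (Fintype.card ST : ℝ) /
            ∑ b, (Fintype.card BT : ℝ)⁻¹ * ∏ j, W (cb.2 (b, e) j) (z j)) := by
    intro i cb
    have hqnn : ∀ (e : ET) (s : ST) (z : Fin n → Z),
        0 ≤ ∑ b, if hash i b = s
          then (Fintype.card BT : ℝ)⁻¹ * ∏ j, W (cb.2 (b, e) j) (z j) else 0 := by
      intro e s z
      apply Finset.sum_nonneg
      intro b _
      split
      · exact mul_nonneg (by positivity) (hWnnn _ _)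
      · exact le_refl 0
    have hqle : ∀ (e : ET) (s : ST) (z : Fin n → Z),
        (∑ b, if hash i b = s
          then (Fintype.card BT : ℝ)⁻¹ * ∏ j, W (cb.2 (b, e) j) (z j) else 0)
        ≤ ∑ b, (Fintype.card BT : ℝ)⁻¹ * ∏ j, W (cb.2 (b, e) j) (z j) := by
      intro e s z
      apply Finset.sum_le_sum
      intro b _
      split
      · exact le_refl _
      · exact mul_nonneg (by positivity) (hWnnn _ _)
    have hqZs : ∀ (e : ET) (z : Fin n → Z),
        (∑ s : ST, ∑ b, if hash i b = s
          then (Fintype.card BT : ℝ)⁻¹ * ∏ j, W (cb.2 (b, e) j) (z j) else 0)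
        = ∑ b, (Fintype.card BT : ℝ)⁻¹ * ∏ j, W (cb.2 (b, e) j) (z j) := by
      intro e z
      rw [Finset.sum_comm]
      apply Finset.sum_congr rfl
      intro b _
      rw [Finset.sum_ite_eq]
      simp
    have hq1 : ∀ e : ET,
        (∑ s : ST, ∑ z : Fin n → Z, ∑ b, if hash i b = s
          then (Fintype.card BT : ℝ)⁻¹ * ∏ j, W (cb.2 (b, e) j) (z j) else 0) = 1 := by
      intro e
      rw [Finset.sum_comm]
      rw [Finset.sum_congr rfl (fun z _ => hqZs e z), Finset.sum_comm]
      have h2 : ∀ b ∈ Finset.univ (α := BT),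
          (∑ z : Fin n → Z, (Fintype.card BT : ℝ)⁻¹ * ∏ j, W (cb.2 (b, e) j) (z j))
          = (Fintype.card BT : ℝ)⁻¹ := by
        intro b _
        rw [← Finset.mul_sum, hWn1 (cb.2 (b, e)), mul_one]
      rw [Finset.sum_congr rfl h2, Finset.sum_const, Finset.card_univ, nsmul_eq_mul,
        mul_inv_cancel₀ hBc.ne']
    have hpq : ∀ (s : ST) (z : Fin n → Z),
        (∑ b, ∑ e, if hash i b = s
          then (1 / Fintype.card BT : ℝ) * PE e * ∏ j, W (cb.2 (b, e) j) (z j) else 0)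
        = ∑ e, PE e * ∑ b, if hash i b = s
            then (Fintype.card BT : ℝ)⁻¹ * ∏ j, W (cb.2 (b, e) j) (z j) else 0 := by
      intro s z
      rw [Finset.sum_comm]
      apply Finset.sum_congr rfl
      intro e _
      rw [Finset.mul_sum]
      apply Finset.sum_congr rfl
      intro b _
      split
      · rw [one_div]; ring
      · rw [mul_zero]
    exact Stmt6Aux.stepA (ST := ST) (ET := ET) (γ := Fin n → Z)
      (fun s z => ∑ b, ∑ e, if hash i b = s
        then (1 / Fintype.card BT : ℝ) * PE e * ∏ j, W (cb.2 (b, e) j) (z j) else 0)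
      (fun e s z => ∑ b, if hash i b = s
        then (Fintype.card BT : ℝ)⁻¹ * ∏ j, W (cb.2 (b, e) j) (z j) else 0)
      (fun e z => ∑ b, (Fintype.card BT : ℝ)⁻¹ * ∏ j, W (cb.2 (b, e) j) (z j))
      PE hPEnn hPE1 hqnn hqle hqZs hq1 hpq rfl
  -- Step BCD for each codebook and e, with conversion of the product rpow
  have hstepBCD : ∀ (cb : (ET → Fin n → U) × (BT × ET → Fin n → V)) (e : ET),
      (∑ i, μ i * ∑ s : ST, ∑ z : Fin n → Z,
          (∑ b, if hash i b = s
            then (Fintype.card BT : ℝ)⁻¹ * ∏ j, W (cb.2 (b, e) j) (z j) else 0) *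
          Real.log ((∑ b, if hash i b = s
            then (Fintype.card BT : ℝ)⁻¹ * ∏ j, W (cb.2 (b, e) j) (z j) else 0) *
            (Fintype.card ST : ℝ) /
            ∑ b, (Fintype.card BT : ℝ)⁻¹ * ∏ j, W (cb.2 (b, e) j) (z j)))
      ≤ (1 / ρ) * (Fintype.card ST : ℝ) ^ ρ * ((Fintype.card BT : ℝ)⁻¹ *
          ∑ z : Fin n → Z,
            (∑ b, ∏ j, W (cb.2 (b, e) j) (z j) ^ (1 / (1 - ρ))) ^ (1 - ρ)) := by
    intro cb e
    have h := Stmt6Aux.stepBCD (γ := Fin n → Z) μ hash hhash (fun b z => ∏ j, W (cb.2 (b, e) j) (z j))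
      (fun b z => hWnnn _ _) (fun b => hWn1 (cb.2 (b, e))) hρ₀ hρ₁
    have hconv : (∑ z : Fin n → Z,
          (∑ b, (∏ j, W (cb.2 (b, e) j) (z j)) ^ (1 / (1 - ρ))) ^ (1 - ρ))
        = ∑ z : Fin n → Z,
          (∑ b, ∏ j, W (cb.2 (b, e) j) (z j) ^ (1 / (1 - ρ))) ^ (1 - ρ) := by
      apply Finset.sum_congr rfl
      intro z _
      congr 1
      apply Finset.sum_congr rfl
      intro b _
      rw [← Real.finset_prod_rpow Finset.univ _ (fun j _ => hWnn _ _) _]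
    rw [hconv] at h
    exact h
  -- assemble
  calc ∑ i, μ i * ∑ cb : (ET → Fin n → U) × (BT × ET → Fin n → V),
        ((∏ e, ∏ j, PU (cb.1 e j)) *
          ∏ be : BT × ET, ∏ j, PVU (cb.1 be.2 j) (cb.2 be j)) *
        mutualInfo (fun sz : ST × (Fin n → Z) =>
          ∑ b, ∑ e, if hash i b = sz.1
            then (1 / Fintype.card BT : ℝ) * PE e * ∏ j, W (cb.2 (b, e) j) (sz.2 j)
            else 0)
      ≤ ∑ i, μ i * ∑ cb : (ET → Fin n → U) × (BT × ET → Fin n → V),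
        ((∏ e, ∏ j, PU (cb.1 e j)) *
          ∏ be : BT × ET, ∏ j, PVU (cb.1 be.2 j) (cb.2 be j)) *
        ∑ e, PE e * ∑ s : ST, ∑ z : Fin n → Z,
          (∑ b, if hash i b = s
            then (Fintype.card BT : ℝ)⁻¹ * ∏ j, W (cb.2 (b, e) j) (z j) else 0) *
          Real.log ((∑ b, if hash i b = s
            then (Fintype.card BT : ℝ)⁻¹ * ∏ j, W (cb.2 (b, e) j) (z j) else 0) *
            (Fintype.card ST : ℝ) /
            ∑ b, (Fintype.card BT : ℝ)⁻¹ * ∏ j, W (cb.2 (b, e) j) (z j)) := by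
        apply Finset.sum_le_sum
        intro i _
        apply mul_le_mul_of_nonneg_left _ (hμnn i)
        apply Finset.sum_le_sum
        intro cb _
        exact mul_le_mul_of_nonneg_left (hstepA i cb) (hπnn cb)
    _ = ∑ cb : (ET → Fin n → U) × (BT × ET → Fin n → V), ∑ e,
          (((∏ e', ∏ j, PU (cb.1 e' j)) *
            ∏ be : BT × ET, ∏ j, PVU (cb.1 be.2 j) (cb.2 be j)) * PE e) *
          ∑ i, μ i * ∑ s : ST, ∑ z : Fin n → Z,
            (∑ b, if hash i b = s
              then (Fintype.card BT : ℝ)⁻¹ * ∏ j, W (cb.2 (b, e) j) (z j) else 0) *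
            Real.log ((∑ b, if hash i b = s
              then (Fintype.card BT : ℝ)⁻¹ * ∏ j, W (cb.2 (b, e) j) (z j) else 0) *
              (Fintype.card ST : ℝ) /
              ∑ b, (Fintype.card BT : ℝ)⁻¹ * ∏ j, W (cb.2 (b, e) j) (z j)) :=
        Stmt6Aux.rearrange1 μ _ PE _
    _ ≤ ∑ cb : (ET → Fin n → U) × (BT × ET → Fin n → V), ∑ e,
          (((∏ e', ∏ j, PU (cb.1 e' j)) *
            ∏ be : BT × ET, ∏ j, PVU (cb.1 be.2 j) (cb.2 be j)) * PE e) *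
          ((1 / ρ) * (Fintype.card ST : ℝ) ^ ρ * ((Fintype.card BT : ℝ)⁻¹ *
            ∑ z : Fin n → Z,
              (∑ b, ∏ j, W (cb.2 (b, e) j) (z j) ^ (1 / (1 - ρ))) ^ (1 - ρ))) := by
        apply Finset.sum_le_sum
        intro cb _
        apply Finset.sum_le_sum
        intro e _
        exact mul_le_mul_of_nonneg_left (hstepBCD cb e)
          (mul_nonneg (hπnn cb) (hPEnn e))
    _ = (1 / ρ) * (Fintype.card ST : ℝ) ^ ρ * (Fintype.card BT : ℝ)⁻¹ *
          ∑ e, PE e * ∑ cb : (ET → Fin n → U) × (BT × ET → Fin n → V),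
            ((∏ e', ∏ j, PU (cb.1 e' j)) *
              ∏ be : BT × ET, ∏ j, PVU (cb.1 be.2 j) (cb.2 be j)) *
            ∑ z : Fin n → Z,
              (∑ b, ∏ j, W (cb.2 (b, e) j) (z j) ^ (1 / (1 - ρ))) ^ (1 - ρ) := by
        have h := Stmt6Aux.rearrange2
          (fun cb : (ET → Fin n → U) × (BT × ET → Fin n → V) =>
            (∏ e', ∏ j, PU (cb.1 e' j)) *
              ∏ be : BT × ET, ∏ j, PVU (cb.1 be.2 j) (cb.2 be j))
          PE
          (fun cb e => ∑ z : Fin n → Z,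
            (∑ b, ∏ j, W (cb.2 (b, e) j) (z j) ^ (1 / (1 - ρ))) ^ (1 - ρ))
          ((1 / ρ) * (Fintype.card ST : ℝ) ^ ρ) ((Fintype.card BT : ℝ)⁻¹)
        rw [h]
    _ ≤ (1 / ρ) * (Fintype.card ST : ℝ) ^ ρ * (Fintype.card BT : ℝ)⁻¹ *
          ∑ e, PE e * ((Fintype.card BT : ℝ) ^ (1 - ρ) *
            (∑ u, PU u * ∑ z, (∑ v, PVU u v * W v z ^ (1 / (1 - ρ))) ^ (1 - ρ)) ^ n) := by
        apply mul_le_mul_of_nonneg_left _ (by positivity)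
        apply Finset.sum_le_sum
        intro e _
        apply mul_le_mul_of_nonneg_left _ (hPEnn e)
        exact Stmt6Aux.stepE PU hPU PVU hPVU (fun v ζ => W v ζ ^ (1 / (1 - ρ)))
          (fun v ζ => Real.rpow_nonneg (hWnn v ζ) _) n h1ρ (by linarith) e
    _ = (1 / ρ) * ((Fintype.card ST : ℝ) / Fintype.card BT) ^ ρ *
          (∑ u, PU u * ∑ z, (∑ v, PVU u v * W v z ^ (1 / (1 - ρ))) ^ (1 - ρ)) ^ n := by
        rw [← Finset.sum_mul, hPE1, one_mul]
        have e1 : (Fintype.card BT : ℝ) ^ (1 - ρ)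
            = (Fintype.card BT : ℝ) * (Fintype.card BT : ℝ) ^ (-ρ) := by
          rw [sub_eq_add_neg, Real.rpow_add hBc, Real.rpow_one]
        have e2 : ((Fintype.card ST : ℝ) / Fintype.card BT) ^ ρ
            = (Fintype.card ST : ℝ) ^ ρ * (Fintype.card BT : ℝ) ^ (-ρ) := by
          rw [Real.div_rpow hS.le hBc.le, Real.rpow_neg hBc.le, div_eq_mul_inv]
        rw [e1, e2]
        field_simp
end
end

section
/- Let 𝓤, 𝓥, 𝓩 be finite sets, P_U a probability mass function on 𝓤, P_{V|U} a channel from 𝓤 to 𝓥, and W a channel from 𝓥 to 𝓩. Let the random variables (U, V, Z) be jointly distributed with U ~ P_U, V | U=u ~ P_{V|U}(·|u), and Z | V=v ~ W(·|v) (so that U → V → Z is a Markov chain). Then lim_{ρ → 0⁺} (1/ρ) · log ( Σ_{u∈𝓤} P_U(u) exp( φ(ρ, W, P_{V|U=u}) ) ) = I(V; Z | U), the conditional mutual information in natural base. -/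
open scoped BigOperators

noncomputable section

lemma hasDerivAt_inv_one_sub : HasDerivAt (fun ρ : ℝ => 1 / (1 - ρ)) 1 0 := by
  have h : HasDerivAt (fun ρ : ℝ => 1 - ρ) (-1) 0 := by
    simpa using (hasDerivAt_id (0:ℝ)).const_sub 1
  have h2 := h.fun_inv (by norm_num)
  simp only [one_div]
  exact h2.congr_deriv (by norm_num)

lemma hasDerivAt_rpow_aux (w : ℝ) (hw : 0 ≤ w) :
    HasDerivAt (fun ρ : ℝ => w ^ (1 / (1 - ρ))) (w * Real.log w) 0 := by
  rcases eq_or_lt_of_le hw with h0 | hpos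
  · -- w = 0
    have hev : (fun ρ : ℝ => w ^ (1 / (1 - ρ))) =ᶠ[nhds (0:ℝ)] fun _ => (0:ℝ) := by
      filter_upwards [Ioo_mem_nhds (show (-1:ℝ) < 0 by norm_num) (show (0:ℝ) < 1 by norm_num)]
        with ρ hρ
      have h1 : (0:ℝ) < 1 - ρ := by linarith [hρ.2]
      rw [← h0, Real.zero_rpow (by positivity)]
    have : HasDerivAt (fun _ : ℝ => (0:ℝ)) (w * Real.log w) 0 := by
      rw [← h0]; simpa using hasDerivAt_const (0:ℝ) (0:ℝ)
    exact this.congr_of_eventuallyEq hev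
  · have hev : (fun ρ : ℝ => w ^ (1 / (1 - ρ)))
        = fun ρ => Real.exp (Real.log w * (1 / (1 - ρ))) := by
      funext ρ; exact Real.rpow_def_of_pos hpos _
    rw [hev]
    have hinner : HasDerivAt (fun ρ : ℝ => Real.log w * (1 / (1 - ρ))) (Real.log w) 0 := by
      simpa using hasDerivAt_inv_one_sub.const_mul (Real.log w)
    have := hinner.exp
    simpa [Real.exp_log hpos] using this

lemma hasDerivAt_term {V : Type} [Fintype V] (p w : V → ℝ)
    (hp : ∀ v, 0 ≤ p v) (hw : ∀ v, 0 ≤ w v) :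
    HasDerivAt (fun ρ : ℝ => (∑ v, p v * w v ^ (1 / (1 - ρ))) ^ (1 - ρ))
      (-((∑ v, p v * w v) * Real.log (∑ v, p v * w v))
        + ∑ v, p v * (w v * Real.log (w v))) 0 := by
  set s : ℝ := ∑ v, p v * w v with hs
  set S : ℝ → ℝ := fun ρ => ∑ v, p v * w v ^ (1 / (1 - ρ)) with hSdef
  have hS : HasDerivAt S (∑ v, p v * (w v * Real.log (w v))) 0 := by
    apply HasDerivAt.fun_sum
    intro v _
    exact (hasDerivAt_rpow_aux (w v) (hw v)).const_mul (p v)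
  have hS0 : S 0 = s := by
    simp [S, s]
  rcases eq_or_lt_of_le (show (0:ℝ) ≤ s from Finset.sum_nonneg fun v _ =>
      mul_nonneg (hp v) (hw v)) with h0 | hspos
  · -- s = 0 : every term p v * w v = 0
    have hterm : ∀ v ∈ Finset.univ, p v * w v = 0 := by
      intro v _
      have := (Finset.sum_eq_zero_iff_of_nonneg (fun v _ =>
        mul_nonneg (hp v) (hw v))).mp h0.symm
      exact this v (Finset.mem_univ v)
    have hev : (fun ρ : ℝ => (S ρ) ^ (1 - ρ)) =ᶠ[nhds (0:ℝ)] fun _ => (0:ℝ) := by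
      filter_upwards [Ioo_mem_nhds (show (-1:ℝ) < 0 by norm_num) (show (0:ℝ) < 1 by norm_num)]
        with ρ hρ
      have h1 : (0:ℝ) < 1 - ρ := by linarith [hρ.2]
      have hSz : S ρ = 0 := by
        apply Finset.sum_eq_zero
        intro v _
        rcases mul_eq_zero.mp (hterm v (Finset.mem_univ v)) with hp0 | hw0
        · simp [hp0]
        · rw [hw0, Real.zero_rpow (by positivity)]; ring
      rw [hSz, Real.zero_rpow (ne_of_gt h1)]
    have hval : -((s : ℝ) * Real.log s) + ∑ v, p v * (w v * Real.log (w v)) = 0 := by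
      rw [← h0]
      simp only [Real.log_zero, mul_zero, zero_mul, neg_zero, zero_add]
      apply Finset.sum_eq_zero
      intro v _
      rcases mul_eq_zero.mp (hterm v (Finset.mem_univ v)) with hp0 | hw0
      · simp [hp0]
      · simp [hw0]
    rw [hval]
    exact (hasDerivAt_const (0:ℝ) (0:ℝ)).congr_of_eventuallyEq hev
  · -- s > 0
    have hcont : ContinuousAt S 0 := hS.continuousAt
    have hevpos : ∀ᶠ ρ in nhds (0:ℝ), 0 < S ρ := by
      have : ∀ᶠ y in nhds (S 0), 0 < y := by
        rw [hS0]; exact eventually_gt_nhds hspos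
      exact hcont.eventually this
    have hev : (fun ρ : ℝ => (S ρ) ^ (1 - ρ))
        =ᶠ[nhds (0:ℝ)] fun ρ => Real.exp (Real.log (S ρ) * (1 - ρ)) := by
      filter_upwards [hevpos] with ρ hρ
      exact Real.rpow_def_of_pos hρ _
    have hlog : HasDerivAt (fun ρ => Real.log (S ρ))
        ((∑ v, p v * (w v * Real.log (w v))) / s) 0 := by
      have := hS.log (by rw [hS0]; exact ne_of_gt hspos)
      rwa [hS0] at this
    have hlin : HasDerivAt (fun ρ : ℝ => 1 - ρ) (-1) 0 := by
      simpa using (hasDerivAt_id (0:ℝ)).const_sub 1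
    have hmul := hlog.fun_mul hlin
    have hexp := hmul.exp
    have : HasDerivAt (fun ρ => Real.exp (Real.log (S ρ) * (1 - ρ)))
        (-(s * Real.log s) + ∑ v, p v * (w v * Real.log (w v))) 0 := by
      convert hexp using 1
      rw [hS0]
      simp only [sub_zero, mul_one]
      rw [Real.exp_log hspos]
      field_simp
      ring
    exact this.congr_of_eventuallyEq hev

lemma sum_rearrange {V Z : Type} [Fintype V] [Fintype Z] (p : V → ℝ) (W : V → Z → ℝ)
    (hp : ∀ v, 0 ≤ p v) (hw : ∀ v z, 0 ≤ W v z) :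
    ∑ z, (-((∑ v, p v * W v z) * Real.log (∑ v, p v * W v z))
        + ∑ v, p v * (W v z * Real.log (W v z)))
      = ∑ v, ∑ z, p v * W v z * Real.log (W v z / ∑ v', p v' * W v' z) := by
  rw [Finset.sum_comm]
  apply Finset.sum_congr rfl
  intro z _
  set s : ℝ := ∑ v, p v * W v z with hs
  have hterm : ∀ v, p v * W v z * Real.log (W v z / s)
      = p v * (W v z * Real.log (W v z)) - p v * W v z * Real.log s := by
    intro v
    rcases eq_or_lt_of_le (mul_nonneg (hp v) (hw v z)) with h0 | hpos
    · rcases mul_eq_zero.mp h0.symm with hp0 | hw0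
      · simp [hp0]
      · simp [hw0]
    · have hwpos : 0 < W v z := by
        rcases (hw v z).lt_or_eq with h | h
        · exact h
        · exfalso; rw [← h] at hpos; simp at hpos
      have hspos : 0 < s := by
        have hle : p v * W v z ≤ s := by
          apply Finset.single_le_sum (f := fun v' => p v' * W v' z)
            (fun v' _ => mul_nonneg (hp v') (hw v' z)) (Finset.mem_univ v)
        linarith
      rw [Real.log_div (ne_of_gt hwpos) (ne_of_gt hspos)]
      ring
  have : ∑ v, p v * W v z * Real.log (W v z / s)
      = ∑ v, (p v * (W v z * Real.log (W v z)) - p v * W v z * Real.log s) :=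
    Finset.sum_congr rfl fun v _ => hterm v
  rw [this, Finset.sum_sub_distrib, ← Finset.sum_mul, ← hs]
  ring

theorem stmt_7' {U V Z : Type} [Fintype U] [Fintype V] [Fintype Z]
    (PU : U → ℝ) (hPU : IsPMF PU)
    (PVU : U → V → ℝ) (hPVU : ∀ u, (∀ v, 0 ≤ PVU u v) ∧ ∑ v, PVU u v = 1)
    (W : V → Z → ℝ) (hW : ∀ v, (∀ z, 0 ≤ W v z) ∧ ∑ z, W v z = 1) :
    Filter.Tendsto
      (fun ρ : ℝ => (1 / ρ) * Real.log (∑ u, PU u *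
        ∑ z, (∑ v, PVU u v * W v z ^ (1 / (1 - ρ))) ^ (1 - ρ)))
      (nhdsWithin 0 (Set.Ioi 0))
      (nhds (∑ u, PU u * ∑ v, ∑ z, PVU u v * W v z *
        Real.log (W v z / ∑ v', PVU u v' * W v' z))) := by
  set L : ℝ := ∑ u, PU u * ∑ v, ∑ z, PVU u v * W v z *
      Real.log (W v z / ∑ v', PVU u v' * W v' z) with hL
  set F : ℝ → ℝ := fun ρ => ∑ u, PU u *
      ∑ z, (∑ v, PVU u v * W v z ^ (1 / (1 - ρ))) ^ (1 - ρ) with hF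
  have hF0 : F 0 = 1 := by
    simp only [F, sub_zero, one_div_one, div_self (show (1:ℝ) ≠ 0 by norm_num), Real.rpow_one]
    have : ∀ u, ∑ z, ∑ v, PVU u v * W v z = 1 := by
      intro u
      rw [Finset.sum_comm]
      have : ∀ v, ∑ z, PVU u v * W v z = PVU u v := by
        intro v
        rw [← Finset.mul_sum, (hW v).2, mul_one]
      rw [Finset.sum_congr rfl fun v _ => this v, (hPVU u).2]
    rw [Finset.sum_congr rfl fun u (_ : u ∈ Finset.univ) => by rw [this u]]
    simp [hPU.2]
  have hFD : HasDerivAt F L 0 := by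
    have hD : HasDerivAt F (∑ u, PU u * ∑ z,
        (-((∑ v, PVU u v * W v z) * Real.log (∑ v, PVU u v * W v z))
          + ∑ v, PVU u v * (W v z * Real.log (W v z)))) 0 := by
      apply HasDerivAt.fun_sum
      intro u _
      apply HasDerivAt.const_mul
      apply HasDerivAt.fun_sum
      intro z _
      exact hasDerivAt_term (PVU u) (fun v => W v z) (hPVU u).1 (fun v => (hW v).1 z)
    have hDL : (∑ u, PU u * ∑ z,
        (-((∑ v, PVU u v * W v z) * Real.log (∑ v, PVU u v * W v z))
          + ∑ v, PVU u v * (W v z * Real.log (W v z)))) = L := by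
      rw [hL]
      apply Finset.sum_congr rfl
      intro u _
      rw [sum_rearrange (PVU u) W (hPVU u).1 (fun v z => (hW v).1 z)]
    rwa [hDL] at hD
  have hlogF : HasDerivAt (fun ρ => Real.log (F ρ)) L 0 := by
    have h := hFD.log (by rw [hF0]; norm_num)
    rw [hF0] at h
    simpa using h
  rw [hasDerivAt_iff_tendsto_slope] at hlogF
  have hmono : nhdsWithin (0:ℝ) (Set.Ioi 0) ≤ nhdsWithin 0 {(0:ℝ)}ᶜ :=
    nhdsWithin_mono 0 (fun x hx => ne_of_gt hx)
  have h2 := hlogF.mono_left hmono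
  apply h2.congr
  intro ρ
  simp only [slope_def_field]
  rw [hF0, Real.log_one]
  rw [sub_zero, sub_zero, div_eq_inv_mul, one_div]

/-- as `ρ → 0⁺`,
`(1/ρ) log(∑ u, PU u * exp(φ(ρ, W, P_{V|U=u}))) → I(V; Z | U)`,
where `exp(φ(ρ, W, P)) = ∑ z, (∑ v, P v * W v z ^ (1/(1-ρ))) ^ (1-ρ)` and
`I(V; Z|U) = ∑ u, PU u * ∑ v ∑ z, PVU u v * W v z * log(W v z / ∑ v', PVU u v' * W v' z)`. -/
theorem stmt_7 {U V Z : Type} [Fintype U] [Fintype V] [Fintype Z]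
    (PU : U → ℝ) (hPU : IsPMF PU)
    (PVU : U → V → ℝ) (hPVU : IsChannel PVU)
    (W : V → Z → ℝ) (hW : IsChannel W) :
    Filter.Tendsto
      (fun ρ : ℝ => (1 / ρ) * Real.log (∑ u, PU u *
        ∑ z, (∑ v, PVU u v * W v z ^ (1 / (1 - ρ))) ^ (1 - ρ)))
      (nhdsWithin 0 (Set.Ioi 0))
      (nhds (∑ u, PU u * ∑ v, ∑ z, PVU u v * W v z *
        Real.log (W v z / ∑ v', PVU u v' * W v' z))) := by
  exact stmt_7' PU hPU PVU hPVU W hW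
end
end

section
/- Let 𝓥 and 𝓩 be finite sets, W a channel from 𝓥 to 𝓩, and P a probability mass function on 𝓥. Then lim_{ρ → 0⁺} φ(ρ, W, P) / ρ = I(V; Z), where (V, Z) are jointly distributed with V ~ P and Z | V=v ~ W(·|v), and I(V; Z) is the mutual information in natural base. -/
open scoped BigOperators

noncomputable section

/-- `φ(ρ, W, P)/ρ → I(V; Z)` as `ρ → 0⁺`, where
`φ(ρ, W, P) = log ∑ z, (∑ v, P v * W v z ^ (1/(1-ρ))) ^ (1-ρ)` and
`I(V; Z) = ∑ v ∑ z, P v * W v z * log(W v z / ∑ v', P v' * W v' z)`. -/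
theorem stmt_8 {V Z : Type} [Fintype V] [Fintype Z]
    (W : V → Z → ℝ) (hW : IsChannel W)
    (P : V → ℝ) (hP : IsPMF P) :
    Filter.Tendsto
      (fun ρ : ℝ =>
        Real.log (∑ z, (∑ v, P v * W v z ^ (1 / (1 - ρ))) ^ (1 - ρ)) / ρ)
      (nhdsWithin 0 (Set.Ioi 0))
      (nhds (∑ v, ∑ z, P v * W v z *
        Real.log (W v z / ∑ v', P v' * W v' z))) := by
  classical
  have hPnn : ∀ v, 0 ≤ P v := hP.1
  have hWnn : ∀ v z, 0 ≤ W v z := fun v z => (hW v).1 z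
  set Q : Z → ℝ := fun z => ∑ v, P v * W v z with hQdef
  have hQnn : ∀ z, 0 ≤ Q z := fun z =>
    Finset.sum_nonneg fun v _ => mul_nonneg (hPnn v) (hWnn v z)
  -- eventual positivity of the exponents
  have hexp_pos : ∀ᶠ ρ : ℝ in nhds 0, 0 < 1 - ρ := by
    filter_upwards [Iio_mem_nhds (show (0:ℝ) < 1 by norm_num)] with ρ hρ
    simp only [Set.mem_Iio] at hρ; linarith
  -- Step A: derivative of each term of the inner sum
  have stepA : ∀ v z, HasDerivAt (fun ρ : ℝ => P v * W v z ^ (1 / (1 - ρ)))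
      (P v * (W v z * Real.log (W v z))) 0 := by
    intro v z
    rcases eq_or_lt_of_le (hWnn v z) with h0 | hpos
    · have heq : (fun ρ : ℝ => P v * W v z ^ (1 / (1 - ρ))) =ᶠ[nhds 0]
          (fun _ : ℝ => (0:ℝ)) := by
        filter_upwards [hexp_pos] with ρ hρ
        rw [← h0, Real.zero_rpow (by positivity), mul_zero]
      have hc : HasDerivAt (fun _ : ℝ => (0:ℝ)) 0 0 := hasDerivAt_const _ _
      have := hc.congr_of_eventuallyEq heq
      simpa [← h0] using this
    · have h1 : HasDerivAt (fun ρ : ℝ => 1 - ρ) (-1) 0 := by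
        simpa using (hasDerivAt_id (0:ℝ)).const_sub 1
      have h2 : HasDerivAt (fun ρ : ℝ => (1 - ρ)⁻¹) 1 0 := by
        have := h1.fun_inv (by norm_num : (1:ℝ) - 0 ≠ 0)
        norm_num at this
        simpa using this
      have h3 : HasDerivAt (fun ρ : ℝ => Real.log (W v z) * (1 - ρ)⁻¹)
          (Real.log (W v z)) 0 := by
        simpa using h2.const_mul (Real.log (W v z))
      have h4 := h3.exp
      have heq : (fun ρ : ℝ => W v z ^ (1 / (1 - ρ))) =
          fun ρ : ℝ => Real.exp (Real.log (W v z) * (1 - ρ)⁻¹) := by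
        funext ρ; rw [Real.rpow_def_of_pos hpos, one_div]
      have h5 : HasDerivAt (fun ρ : ℝ => W v z ^ (1 / (1 - ρ)))
          (W v z * Real.log (W v z)) 0 := by
        rw [heq]
        convert h4 using 1
        rw [show (1:ℝ) - 0 = 1 by norm_num, inv_one, mul_one, Real.exp_log hpos]
      simpa using h5.const_mul (P v)
  -- Step B: derivative of the inner sum
  have stepB : ∀ z, HasDerivAt (fun ρ : ℝ => ∑ v, P v * W v z ^ (1 / (1 - ρ)))
      (∑ v, P v * (W v z * Real.log (W v z))) 0 :=
    fun z => HasDerivAt.fun_sum (fun v _ => stepA v z)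
  have hS0 : ∀ z, (∑ v, P v * W v z ^ (1 / (1 - (0:ℝ)))) = Q z := by
    intro z
    simp [hQdef]
  -- Step C: derivative of each term of the outer sum
  have stepC : ∀ z, HasDerivAt
      (fun ρ : ℝ => (∑ v, P v * W v z ^ (1 / (1 - ρ))) ^ (1 - ρ))
      ((∑ v, P v * (W v z * Real.log (W v z))) - Q z * Real.log (Q z)) 0 := by
    intro z
    rcases eq_or_lt_of_le (hQnn z) with hQ0 | hQpos
    · -- Q z = 0 : everything vanishes near 0
      have hterm : ∀ v, P v * W v z = 0 := by
        intro v
        have := (Finset.sum_eq_zero_iff_of_nonneg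
          (fun v (_ : v ∈ Finset.univ) => mul_nonneg (hPnn v) (hWnn v z))).mp hQ0.symm
        exact this v (Finset.mem_univ v)
      have heq : (fun ρ : ℝ => (∑ v, P v * W v z ^ (1 / (1 - ρ))) ^ (1 - ρ))
          =ᶠ[nhds 0] (fun _ : ℝ => (0:ℝ)) := by
        filter_upwards [hexp_pos] with ρ hρ
        have hsz : (∑ v, P v * W v z ^ (1 / (1 - ρ))) = 0 := by
          apply Finset.sum_eq_zero; intro v _
          rcases mul_eq_zero.mp (hterm v) with h | h
          · simp [h]
          · rw [h, Real.zero_rpow (by positivity), mul_zero]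
        rw [hsz, Real.zero_rpow (ne_of_gt hρ)]
      have hD : (∑ v, P v * (W v z * Real.log (W v z))) = 0 := by
        apply Finset.sum_eq_zero; intro v _
        rcases mul_eq_zero.mp (hterm v) with h | h
        · simp [h]
        · simp [h]
      rw [hD, ← hQ0]
      simpa using (hasDerivAt_const (0:ℝ) (0:ℝ)).congr_of_eventuallyEq heq
    · -- Q z > 0
      have hScont := (stepB z).continuousAt
      have hS0pos : (0:ℝ) < ∑ v, P v * W v z ^ (1 / (1 - (0:ℝ))) := by
        rw [hS0 z]; exact hQpos
      have hSpos : ∀ᶠ ρ : ℝ in nhds 0, 0 < ∑ v, P v * W v z ^ (1 / (1 - ρ)) :=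
        hScont.eventually (eventually_gt_nhds hS0pos)
      have hlog : HasDerivAt
          (fun ρ : ℝ => Real.log (∑ v, P v * W v z ^ (1 / (1 - ρ))))
          ((∑ v, P v * (W v z * Real.log (W v z))) / Q z) 0 := by
        have := (stepB z).log (ne_of_gt hS0pos)
        rwa [hS0 z] at this
      have h1 : HasDerivAt (fun ρ : ℝ => 1 - ρ) (-1) 0 := by
        simpa using (hasDerivAt_id (0:ℝ)).const_sub 1
      have hmul := h1.fun_mul hlog
      have h4 := hmul.exp
      have heq : (fun ρ : ℝ => (∑ v, P v * W v z ^ (1 / (1 - ρ))) ^ (1 - ρ))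
          =ᶠ[nhds 0] (fun ρ : ℝ =>
            Real.exp ((1 - ρ) * Real.log (∑ v, P v * W v z ^ (1 / (1 - ρ))))) := by
        filter_upwards [hSpos] with ρ hρ
        rw [Real.rpow_def_of_pos hρ, mul_comm]
      have h5 := h4.congr_of_eventuallyEq heq
      refine HasDerivAt.congr_deriv h5 ?_
      have hQne : Q z ≠ 0 := ne_of_gt hQpos
      rw [hS0 z, show (1:ℝ) - 0 = 1 by norm_num, one_mul, Real.exp_log hQpos]
      field_simp
      ring
  -- Step D: derivative of the outer sum and its value at 0
  have hT : HasDerivAt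
      (fun ρ : ℝ => ∑ z, (∑ v, P v * W v z ^ (1 / (1 - ρ))) ^ (1 - ρ))
      (∑ z, ((∑ v, P v * (W v z * Real.log (W v z))) - Q z * Real.log (Q z))) 0 :=
    HasDerivAt.fun_sum (fun z _ => stepC z)
  have hT0 : (∑ z, (∑ v, P v * W v z ^ (1 / (1 - (0:ℝ)))) ^ (1 - (0:ℝ))) = 1 := by
    have : ∀ z, (∑ v, P v * W v z ^ (1 / (1 - (0:ℝ)))) ^ (1 - (0:ℝ)) = Q z := by
      intro z
      rw [show (1:ℝ) - 0 = 1 by norm_num, Real.rpow_one]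
      simp [hQdef]
    rw [Finset.sum_congr rfl fun z _ => this z, hQdef]
    rw [Finset.sum_comm]
    have : ∀ v, (∑ z, P v * W v z) = P v := by
      intro v; rw [← Finset.mul_sum, (hW v).2, mul_one]
    rw [Finset.sum_congr rfl fun v _ => this v, hP.2]
  -- Step E: identification of the derivative with mutual information
  have hE : (∑ z, ((∑ v, P v * (W v z * Real.log (W v z))) - Q z * Real.log (Q z)))
      = ∑ v, ∑ z, P v * W v z * Real.log (W v z / Q z) := by
    rw [Finset.sum_comm]
    apply Finset.sum_congr rfl
    intro z _
    have key : ∀ v, P v * W v z * Real.log (W v z / Q z)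
        = P v * (W v z * Real.log (W v z)) - (P v * W v z) * Real.log (Q z) := by
      intro v
      rcases eq_or_ne (P v * W v z) 0 with h | h
      · rcases mul_eq_zero.mp h with h' | h' <;> simp [h']
      · have hPv : P v ≠ 0 := fun h' => h (by rw [h', zero_mul])
        have hWv : W v z ≠ 0 := fun h' => h (by rw [h', mul_zero])
        have hWpos : 0 < W v z := lt_of_le_of_ne (hWnn v z) (Ne.symm hWv)
        have hPpos : 0 < P v := lt_of_le_of_ne (hPnn v) (Ne.symm hPv)
        have hQpos : 0 < Q z :=
          lt_of_lt_of_le (mul_pos hPpos hWpos)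
            (Finset.single_le_sum
              (fun v' (_ : v' ∈ Finset.univ) => mul_nonneg (hPnn v') (hWnn v' z))
              (Finset.mem_univ v))
        rw [Real.log_div hWv (ne_of_gt hQpos)]
        ring
    rw [Finset.sum_congr rfl fun v _ => key v, Finset.sum_sub_distrib,
      ← Finset.sum_mul]
  -- the function has derivative I at 0
  have hf : HasDerivAt
      (fun ρ : ℝ => Real.log (∑ z, (∑ v, P v * W v z ^ (1 / (1 - ρ))) ^ (1 - ρ)))
      (∑ v, ∑ z, P v * W v z * Real.log (W v z / Q z)) 0 := by
    have := hT.log (by rw [hT0]; norm_num)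
    rw [hT0, div_one, hE] at this
    exact this
  have hf0 : Real.log (∑ z, (∑ v, P v * W v z ^ (1 / (1 - (0:ℝ)))) ^ (1 - (0:ℝ))) = 0 := by
    rw [hT0, Real.log_one]
  -- convert to the one-sided difference-quotient limit
  have hslope := hasDerivAt_iff_tendsto_slope.mp hf
  have h2 := hslope.mono_left
    (nhdsWithin_mono (0:ℝ) (fun x hx => ne_of_gt (Set.mem_Ioi.mp hx)))
  refine Filter.Tendsto.congr' ?_ h2
  filter_upwards [self_mem_nhdsWithin] with ρ hρ
  rw [slope_def_field, hf0, sub_zero, sub_zero]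
end
end

section
/- Let 𝓥 and 𝓩 be finite sets, W a channel from 𝓥 to 𝓩, and n ≥ 1. Then for every ρ with 0 < ρ < 1: max over all probability mass functions Pₙ on 𝓥ⁿ of φ(ρ, W^{⊗n}, Pₙ) equals n times the max over all probability mass functions P on 𝓥 of φ(ρ, W, P); equivalently, max_{Pₙ} exp(φ(ρ, W^{⊗n}, Pₙ)) = ( max_{P} exp(φ(ρ, W, P)) )ⁿ, where W^{⊗n}(zⁿ|vⁿ) = ∏_{i=1}^{n} W(z_i|v_i). -/
open scoped BigOperators

noncomputable section

/-! ### Auxiliary material for Statement 10 -/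

/-- The quantity `exp φ(ρ, W, P)`. -/
def phiS {A Z : Type} [Fintype A] [Fintype Z] (ρ : ℝ) (W : A → Z → ℝ) (P : A → ℝ) : ℝ :=
  ∑ z, (∑ a, P a * W a z ^ (1 / (1 - ρ))) ^ (1 - ρ)

lemma exists_pos_of_isPMF {Z : Type} [Fintype Z] {f : Z → ℝ} (hf : IsPMF f) :
    ∃ z, 0 < f z := by
  by_contra h
  push_neg at h
  have : ∑ z, f z = 0 := Finset.sum_eq_zero fun z _ => le_antisymm (h z) (hf.1 z)
  rw [hf.2] at this; norm_num at this

lemma phiS_pos {A Z : Type} [Fintype A] [Fintype Z] {ρ : ℝ} (W : A → Z → ℝ) (P : A → ℝ)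
    (hP : IsPMF P) (hW : ∀ a z, 0 ≤ W a z) (hWex : ∀ a, ∃ z, 0 < W a z) :
    0 < phiS ρ W P := by
  obtain ⟨a0, ha0⟩ := exists_pos_of_isPMF hP
  obtain ⟨z0, hz0⟩ := hWex a0
  have hterm : 0 < (∑ a, P a * W a z0 ^ (1 / (1 - ρ))) ^ (1 - ρ) := by
    apply Real.rpow_pos_of_pos
    have h1 : 0 < P a0 * W a0 z0 ^ (1 / (1 - ρ)) :=
      mul_pos ha0 (Real.rpow_pos_of_pos hz0 _)
    exact h1.trans_le (Finset.single_le_sum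
      (fun a _ => mul_nonneg (hP.1 a) (Real.rpow_nonneg (hW a z0) _)) (Finset.mem_univ a0))
  exact hterm.trans_le (Finset.single_le_sum
    (fun z _ => Real.rpow_nonneg
      (Finset.sum_nonneg fun a _ => mul_nonneg (hP.1 a) (Real.rpow_nonneg (hW a z) _)) _)
    (Finset.mem_univ z0))

lemma phiS_key {A Z1 : Type} [Fintype A] [Fintype Z1] {ρ : ℝ} (hρ₁ : ρ < 1)
    (W1 : A → Z1 → ℝ) (hW1 : ∀ a z, 0 ≤ W1 a z)
    (C1 : ℝ)
    (h1 : ∀ Q : A → ℝ, IsPMF Q → phiS ρ W1 Q ≤ C1)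
    (g : A → ℝ) (hg : ∀ a, 0 ≤ g a) :
    ∑ z1, (∑ a, g a * W1 a z1 ^ (1 / (1 - ρ))) ^ (1 - ρ) ≤ C1 * (∑ a, g a) ^ (1 - ρ) := by
  have hβ : 0 < 1 - ρ := by linarith
  set s := ∑ a, g a with hs
  have hs0 : 0 ≤ s := Finset.sum_nonneg fun a _ => hg a
  rcases eq_or_lt_of_le hs0 with h | h
  · have hall : ∀ a ∈ Finset.univ, g a = 0 :=
      (Finset.sum_eq_zero_iff_of_nonneg fun a _ => hg a).1 h.symm
    have : ∀ z1 : Z1, (∑ a, g a * W1 a z1 ^ (1 / (1 - ρ))) ^ (1 - ρ) = 0 := by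
      intro z1
      rw [Finset.sum_eq_zero fun a ha => by rw [hall a ha, zero_mul]]
      exact Real.zero_rpow (by positivity)
    rw [Finset.sum_eq_zero fun z1 _ => this z1, ← h, Real.zero_rpow (by positivity), mul_zero]
  · have hQ : IsPMF (fun a => g a / s) := by
      constructor
      · intro a; exact div_nonneg (hg a) hs0
      · rw [← Finset.sum_div, ← hs, div_self h.ne']
    have heq : ∀ z1 : Z1, (∑ a, g a * W1 a z1 ^ (1 / (1 - ρ))) ^ (1 - ρ)
        = s ^ (1 - ρ) * (∑ a, (g a / s) * W1 a z1 ^ (1 / (1 - ρ))) ^ (1 - ρ) := by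
      intro z1
      rw [← Real.mul_rpow hs0 (Finset.sum_nonneg fun a _ =>
        mul_nonneg (div_nonneg (hg a) hs0) (Real.rpow_nonneg (hW1 a z1) _)),
        Finset.mul_sum]
      congr 1
      apply Finset.sum_congr rfl
      intro a _
      field_simp
    calc ∑ z1, (∑ a, g a * W1 a z1 ^ (1 / (1 - ρ))) ^ (1 - ρ)
        = s ^ (1 - ρ) * phiS ρ W1 (fun a => g a / s) := by
          rw [phiS, Finset.mul_sum]; exact Finset.sum_congr rfl fun z1 _ => heq z1
      _ ≤ s ^ (1 - ρ) * C1 :=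
          mul_le_mul_of_nonneg_left (h1 _ hQ) (Real.rpow_nonneg hs0 _)
      _ = C1 * s ^ (1 - ρ) := mul_comm _ _

lemma phiS_prod_le {A B Z1 Z2 : Type} [Fintype A] [Fintype B] [Fintype Z1] [Fintype Z2]
    {ρ : ℝ} (hρ₁ : ρ < 1)
    (W1 : A → Z1 → ℝ) (W2 : B → Z2 → ℝ)
    (hW1 : ∀ a z, 0 ≤ W1 a z) (hW2 : ∀ b z, 0 ≤ W2 b z)
    (C1 C2 : ℝ) (hC1 : 0 ≤ C1)
    (h1 : ∀ Q : A → ℝ, IsPMF Q → phiS ρ W1 Q ≤ C1)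
    (h2 : ∀ Q : B → ℝ, IsPMF Q → phiS ρ W2 Q ≤ C2)
    (P : A × B → ℝ) (hP : IsPMF P) :
    phiS ρ (fun (p : A × B) (q : Z1 × Z2) => W1 p.1 q.1 * W2 p.2 q.2) P ≤ C1 * C2 := by
  have hβ : 0 < 1 - ρ := by linarith
  set α := 1 / (1 - ρ) with hα
  have hmarg : IsPMF (fun b => ∑ a, P (a, b)) := by
    constructor
    · intro b; exact Finset.sum_nonneg fun a _ => hP.1 (a, b)
    · rw [Finset.sum_comm]
      calc ∑ a, ∑ b, P (a, b) = ∑ p : A × B, P p := (Fintype.sum_prod_type _).symm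
        _ = 1 := hP.2
  have key : ∀ z2 : Z2,
      ∑ z1, (∑ a, (∑ b, P (a, b) * W2 b z2 ^ α) * W1 a z1 ^ α) ^ (1 - ρ)
      ≤ C1 * (∑ b, (∑ a, P (a, b)) * W2 b z2 ^ α) ^ (1 - ρ) := by
    intro z2
    have hswap : (∑ a, ∑ b, P (a, b) * W2 b z2 ^ α)
        = ∑ b, (∑ a, P (a, b)) * W2 b z2 ^ α := by
      rw [Finset.sum_comm]
      exact Finset.sum_congr rfl fun b _ => (Finset.sum_mul _ _ _).symm
    rw [← hswap]
    exact phiS_key hρ₁ W1 hW1 C1 h1 (fun a => ∑ b, P (a, b) * W2 b z2 ^ α)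
      (fun a => Finset.sum_nonneg fun b _ =>
        mul_nonneg (hP.1 (a, b)) (Real.rpow_nonneg (hW2 b z2) _))
  calc phiS ρ (fun (p : A × B) (q : Z1 × Z2) => W1 p.1 q.1 * W2 p.2 q.2) P
      = ∑ z2, ∑ z1, (∑ a, (∑ b, P (a, b) * W2 b z2 ^ α) * W1 a z1 ^ α) ^ (1 - ρ) := by
        rw [phiS, Fintype.sum_prod_type, Finset.sum_comm]
        apply Finset.sum_congr rfl; intro z2 _
        apply Finset.sum_congr rfl; intro z1 _
        congr 1
        rw [Fintype.sum_prod_type]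
        apply Finset.sum_congr rfl; intro a _
        rw [Finset.sum_mul]
        apply Finset.sum_congr rfl; intro b _
        rw [Real.mul_rpow (hW1 a z1) (hW2 b z2)]
        ring
    _ ≤ ∑ z2, C1 * (∑ b, (∑ a, P (a, b)) * W2 b z2 ^ α) ^ (1 - ρ) :=
        Finset.sum_le_sum fun z2 _ => key z2
    _ = C1 * phiS ρ W2 (fun b => ∑ a, P (a, b)) := by rw [phiS, Finset.mul_sum]
    _ ≤ C1 * C2 := mul_le_mul_of_nonneg_left (h2 _ hmarg) hC1

lemma phiS_prod_eq {A B Z1 Z2 : Type} [Fintype A] [Fintype B] [Fintype Z1] [Fintype Z2]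
    {ρ : ℝ} (hρ₁ : ρ < 1)
    (W1 : A → Z1 → ℝ) (W2 : B → Z2 → ℝ)
    (hW1 : ∀ a z, 0 ≤ W1 a z) (hW2 : ∀ b z, 0 ≤ W2 b z)
    (P1 : A → ℝ) (P2 : B → ℝ) (hP1 : ∀ a, 0 ≤ P1 a) (hP2 : ∀ b, 0 ≤ P2 b) :
    phiS ρ (fun (p : A × B) (q : Z1 × Z2) => W1 p.1 q.1 * W2 p.2 q.2)
      (fun p => P1 p.1 * P2 p.2) = phiS ρ W1 P1 * phiS ρ W2 P2 := by
  have hβ : 0 < 1 - ρ := by linarith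
  set α := 1 / (1 - ρ) with hα
  have hterm : ∀ (z1 : Z1) (z2 : Z2),
      (∑ p : A × B, (P1 p.1 * P2 p.2) * (W1 p.1 z1 * W2 p.2 z2) ^ α) ^ (1 - ρ)
      = (∑ a, P1 a * W1 a z1 ^ α) ^ (1 - ρ) * (∑ b, P2 b * W2 b z2 ^ α) ^ (1 - ρ) := by
    intro z1 z2
    rw [← Real.mul_rpow
      (Finset.sum_nonneg fun a _ => mul_nonneg (hP1 a) (Real.rpow_nonneg (hW1 a z1) _))
      (Finset.sum_nonneg fun b _ => mul_nonneg (hP2 b) (Real.rpow_nonneg (hW2 b z2) _))]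
    congr 1
    rw [Fintype.sum_prod_type, Finset.sum_mul_sum]
    apply Finset.sum_congr rfl; intro a _
    apply Finset.sum_congr rfl; intro b _
    rw [Real.mul_rpow (hW1 a z1) (hW2 b z2)]
    ring
  calc phiS ρ (fun (p : A × B) (q : Z1 × Z2) => W1 p.1 q.1 * W2 p.2 q.2)
        (fun p => P1 p.1 * P2 p.2)
      = ∑ z1, ∑ z2,
          (∑ a, P1 a * W1 a z1 ^ α) ^ (1 - ρ) * (∑ b, P2 b * W2 b z2 ^ α) ^ (1 - ρ) := by
        rw [phiS, Fintype.sum_prod_type]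
        exact Finset.sum_congr rfl fun z1 _ => Finset.sum_congr rfl fun z2 _ => hterm z1 z2
    _ = phiS ρ W1 P1 * phiS ρ W2 P2 := by
        rw [phiS, phiS, Finset.sum_mul_sum]

lemma phiS_equiv {A A' Z Z' : Type} [Fintype A] [Fintype A'] [Fintype Z] [Fintype Z']
    (ρ : ℝ) (eA : A' ≃ A) (eZ : Z' ≃ Z) (W : A → Z → ℝ) (P : A → ℝ) :
    phiS ρ (fun a' z' => W (eA a') (eZ z')) (fun a' => P (eA a')) = phiS ρ W P := by
  rw [phiS, phiS, ← Equiv.sum_comp eZ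
    (fun z => (∑ a, P a * W a z ^ (1 / (1 - ρ))) ^ (1 - ρ))]
  apply Finset.sum_congr rfl; intro z' _
  congr 1
  exact Equiv.sum_comp eA (fun a => P a * W a (eZ z') ^ (1 / (1 - ρ)))

/-- The product channel on cons-decomposed tuples equals the pair channel. -/
lemma consChannel_eq {V Z : Type} (W : V → Z → ℝ) (n : ℕ) :
    (fun (p : V × (Fin n → V)) (q : Z × (Fin n → Z)) =>
      ∏ i, W ((Fin.consEquiv (fun _ => V)) p i) ((Fin.consEquiv (fun _ => Z)) q i))
    = fun (p : V × (Fin n → V)) (q : Z × (Fin n → Z)) =>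
        W p.1 q.1 * ∏ i, W (p.2 i) (q.2 i) := by
  funext p q
  rw [Fin.prod_univ_succ]
  simp [Fin.consEquiv]

/-- Upper bound: `phiS` of the `n`-fold product channel is at most `C ^ n`. -/
lemma phiS_pi_le {V Z : Type} [Fintype V] [Fintype Z] {ρ : ℝ} (hρ₁ : ρ < 1)
    (W : V → Z → ℝ) (hW : ∀ v z, 0 ≤ W v z) (C : ℝ) (hC : 0 ≤ C)
    (hmax : ∀ P : V → ℝ, IsPMF P → phiS ρ W P ≤ C) :
    ∀ (n : ℕ) (Pn : (Fin n → V) → ℝ), IsPMF Pn →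
      phiS ρ (fun (v : Fin n → V) (z : Fin n → Z) => ∏ i, W (v i) (z i)) Pn ≤ C ^ n := by
  intro n
  induction n with
  | zero =>
      intro Pn hPn
      have h1 : Pn default = 1 := by simpa using hPn.2
      simp [phiS, Real.one_rpow, h1]
  | succ n ih =>
      intro Pn hPn
      set eV := Fin.consEquiv (fun _ : Fin (n+1) => V)
      set eZ := Fin.consEquiv (fun _ : Fin (n+1) => Z)
      have hPn' : IsPMF (fun p => Pn (eV p)) :=
        ⟨fun p => hPn.1 _, by rw [Equiv.sum_comp eV Pn]; exact hPn.2⟩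
      have htrans := phiS_equiv ρ eV eZ
        (fun (v : Fin (n+1) → V) (z : Fin (n+1) → Z) => ∏ i, W (v i) (z i)) Pn
      rw [← htrans]
      have hle := phiS_prod_le hρ₁ W (fun (v : Fin n → V) (z : Fin n → Z) => ∏ i, W (v i) (z i))
        hW (fun v z => Finset.prod_nonneg fun i _ => hW _ _)
        C (C ^ n) hC hmax (ih) (fun p => Pn (eV p)) hPn'
      calc phiS ρ (fun p q => ∏ i, W (eV p i) (eZ q i)) (fun p => Pn (eV p))
          = phiS ρ (fun (p : V × (Fin n → V)) (q : Z × (Fin n → Z)) =>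
              W p.1 q.1 * ∏ i, W (p.2 i) (q.2 i)) (fun p => Pn (eV p)) := by
            rw [consChannel_eq W n]
        _ ≤ C * C ^ n := hle
        _ = C ^ (n + 1) := (pow_succ' C n).symm

/-- The i.i.d. product of a pmf is a pmf. -/
lemma isPMF_pi {V : Type} [Fintype V] (P : V → ℝ) (hP : IsPMF P) :
    ∀ n : ℕ, IsPMF (fun v : Fin n → V => ∏ i, P (v i)) := by
  intro n
  induction n with
  | zero =>
      constructor
      · intro v; exact Finset.prod_nonneg fun i _ => hP.1 _
      · simp
  | succ n ih =>
      constructor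
      · intro v; exact Finset.prod_nonneg fun i _ => hP.1 _
      · set eV := Fin.consEquiv (fun _ : Fin (n+1) => V)
        rw [← Equiv.sum_comp eV (fun v : Fin (n+1) → V => ∏ i, P (v i))]
        have : ∀ p : V × (Fin n → V), (∏ i, P (eV p i)) = P p.1 * ∏ i, P (p.2 i) := by
          intro p
          rw [Fin.prod_univ_succ]
          simp [eV, Fin.consEquiv]
        rw [Finset.sum_congr rfl fun p _ => this p, Fintype.sum_prod_type]
        calc ∑ a : V, ∑ b : Fin n → V, P a * ∏ i, P (b i)
            = ∑ a : V, P a * ∑ b : Fin n → V, ∏ i, P (b i) := by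
              exact Finset.sum_congr rfl fun a _ => (Finset.mul_sum _ _ _).symm
          _ = 1 := by rw [Finset.sum_congr rfl fun a _ => by rw [ih.2, mul_one], hP.2]

/-- Equality: `phiS` of the product channel at the i.i.d. product pmf. -/
lemma phiS_pi_eq {V Z : Type} [Fintype V] [Fintype Z] {ρ : ℝ} (hρ₁ : ρ < 1)
    (W : V → Z → ℝ) (hW : ∀ v z, 0 ≤ W v z) (P : V → ℝ) (hP : IsPMF P) :
    ∀ n : ℕ,
      phiS ρ (fun (v : Fin n → V) (z : Fin n → Z) => ∏ i, W (v i) (z i))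
        (fun v => ∏ i, P (v i)) = (phiS ρ W P) ^ n := by
  intro n
  induction n with
  | zero =>
      have h1 : (fun v : Fin 0 → V => ∏ i, P (v i)) default = 1 := by simp
      have := isPMF_pi P hP 0
      simp [phiS]
  | succ n ih =>
      set eV := Fin.consEquiv (fun _ : Fin (n+1) => V)
      set eZ := Fin.consEquiv (fun _ : Fin (n+1) => Z)
      have htrans := phiS_equiv ρ eV eZ
        (fun (v : Fin (n+1) → V) (z : Fin (n+1) → Z) => ∏ i, W (v i) (z i))
        (fun v => ∏ i, P (v i))
      rw [← htrans]
      have hpmf : (fun p : V × (Fin n → V) => ∏ i, P (eV p i))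
          = fun p => P p.1 * ∏ i, P (p.2 i) := by
        funext p
        rw [Fin.prod_univ_succ]
        simp [eV, Fin.consEquiv]
      calc phiS ρ (fun p q => ∏ i, W (eV p i) (eZ q i)) (fun p => ∏ i, P (eV p i))
          = phiS ρ (fun (p : V × (Fin n → V)) (q : Z × (Fin n → Z)) =>
              W p.1 q.1 * ∏ i, W (p.2 i) (q.2 i)) (fun p => P p.1 * ∏ i, P (p.2 i)) := by
            rw [consChannel_eq W n, hpmf]
        _ = phiS ρ W P * (phiS ρ W P) ^ n := by
            rw [← ih]
            exact phiS_prod_eq hρ₁ W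
              (fun (v : Fin n → V) (z : Fin n → Z) => ∏ i, W (v i) (z i)) hW
              (fun v z => Finset.prod_nonneg fun i _ => hW _ _)
              P (fun v => ∏ i, P (v i)) hP.1
              (fun v => Finset.prod_nonneg fun i _ => hP.1 _)
        _ = (phiS ρ W P) ^ (n + 1) := (pow_succ' _ n).symm

/-- Eq. (13) of the paper, due to Arimoto: for `0 < ρ < 1`,
`max_{Pₙ on Vⁿ} φ(ρ, W^{⊗n}, Pₙ) = n * max_{P on V} φ(ρ, W, P)`,
where the maxima (over the compact probability simplices, hence attained) are
expressed via `sSup` of the images, and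
`φ(ρ, W, P) = log ∑ z, (∑ v, P v * W v z ^ (1/(1-ρ))) ^ (1-ρ)`,
`W^{⊗n}(zⁿ|vⁿ) = ∏ i, W (v i) (z i)`. -/
theorem stmt_10 {V Z : Type} [Fintype V] [Fintype Z] [Nonempty V]
    (W : V → Z → ℝ) (hW : IsChannel W)
    (n : ℕ) (hn : 1 ≤ n)
    (ρ : ℝ) (hρ₀ : 0 < ρ) (hρ₁ : ρ < 1) :
    sSup ((fun Pn : (Fin n → V) → ℝ =>
        Real.log (∑ z : Fin n → Z,
          (∑ v : Fin n → V, Pn v * (∏ i, W (v i) (z i)) ^ (1 / (1 - ρ))) ^ (1 - ρ)))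
      '' {Pn | IsPMF Pn})
      = n * sSup ((fun P : V → ℝ =>
          Real.log (∑ z, (∑ v, P v * W v z ^ (1 / (1 - ρ))) ^ (1 - ρ)))
        '' {P | IsPMF P}) := by
  classical
  have hβ : 0 < 1 - ρ := by linarith
  have hWnn : ∀ v z, 0 ≤ W v z := fun v z => (hW v).1 z
  have hWex : ∀ v, ∃ z, 0 < W v z := fun v => exists_pos_of_isPMF (hW v)
  -- maximizer on the simplex
  have hrpow : Continuous fun x : ℝ => x ^ (1 - ρ) := by
    rw [continuous_iff_continuousAt]
    intro x
    exact Real.continuousAt_rpow_const x _ (Or.inr hβ.le)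
  have hcont : Continuous fun P : V → ℝ => phiS ρ W P := by
    unfold phiS
    apply continuous_finset_sum
    intro z _
    exact hrpow.comp
      (continuous_finset_sum _ fun a _ => (continuous_apply a).mul continuous_const)
  have hne : (stdSimplex ℝ V).Nonempty := by
    obtain ⟨v0⟩ := ‹Nonempty V›
    refine ⟨fun v => if v = v0 then 1 else 0, fun v => by positivity, ?_⟩
    simp
  obtain ⟨Pstar, hPstar, hmax'⟩ := (isCompact_stdSimplex ℝ V).exists_isMaxOn hne hcont.continuousOn
  have hPstarPMF : IsPMF Pstar := hPstar
  set C := phiS ρ W Pstar with hC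
  have hmax : ∀ P : V → ℝ, IsPMF P → phiS ρ W P ≤ C := fun P hP => hmax' hP
  have hCpos : 0 < C := phiS_pos W Pstar hPstarPMF hWnn hWex
  -- positivity of the n-letter channel
  have hWnex : ∀ v : Fin n → V, ∃ z : Fin n → Z, 0 < ∏ i, W (v i) (z i) := by
    intro v
    refine ⟨fun i => (hWex (v i)).choose, Finset.prod_pos fun i _ => (hWex (v i)).choose_spec⟩
  -- RHS sup
  have hRHS : sSup ((fun P : V → ℝ =>
      Real.log (∑ z, (∑ v, P v * W v z ^ (1 / (1 - ρ))) ^ (1 - ρ)))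
      '' {P | IsPMF P}) = Real.log C := by
    apply IsGreatest.csSup_eq
    constructor
    · exact ⟨Pstar, hPstarPMF, rfl⟩
    · rintro x ⟨P, hP, rfl⟩
      exact Real.log_le_log (phiS_pos W P hP hWnn hWex) (hmax P hP)
  -- LHS sup
  have hLHS : sSup ((fun Pn : (Fin n → V) → ℝ =>
      Real.log (∑ z : Fin n → Z,
        (∑ v : Fin n → V, Pn v * (∏ i, W (v i) (z i)) ^ (1 / (1 - ρ))) ^ (1 - ρ)))
      '' {Pn | IsPMF Pn}) = n * Real.log C := by
    apply IsGreatest.csSup_eq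
    constructor
    · refine ⟨fun v => ∏ i, Pstar (v i), isPMF_pi Pstar hPstarPMF n, ?_⟩
      show Real.log (phiS ρ (fun (v : Fin n → V) (z : Fin n → Z) => ∏ i, W (v i) (z i))
        (fun v => ∏ i, Pstar (v i))) = n * Real.log C
      rw [phiS_pi_eq hρ₁ W hWnn Pstar hPstarPMF n, Real.log_pow]
    · rintro x ⟨Pn, hPn, rfl⟩
      have h1 : Real.log (phiS ρ (fun (v : Fin n → V) (z : Fin n → Z) =>
          ∏ i, W (v i) (z i)) Pn) ≤ Real.log (C ^ n) := by
        apply Real.log_le_log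
        · exact phiS_pos _ Pn hPn (fun v z => Finset.prod_nonneg fun i _ => hWnn _ _) hWnex
        · exact phiS_pi_le hρ₁ W hWnn C hCpos.le hmax n Pn hPn
      rw [Real.log_pow] at h1
      exact h1
  rw [hLHS, hRHS]
end
end
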